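/- arXiv:2505.09253 — 8 statements merged into one kernel-verified Lean document; each statement's English description precedes it below -/
import Mathlib

section
/- Let (M,d) be a metric space, T : M → M an isometry, and x ∈ M. If the closure of the orbit O(x) = {Tⁿx : n ∈ ℤ} admits a T-invariant Borel probability measure μ, then μ(B(x,ε)) > 0 for every ε > 0, and any 2ε-separated subset of the orbit O(x) has cardinality at most μ(B(x,ε))⁻¹; in particular O(x) is totally bounded. -/
open MeasureTheory

theorem orbit_totally_bounded_of_invariant_measure
    {M : Type*} [MetricSpace M] [MeasurableSpace M] [BorelSpace M]
    (T : Equiv.Perm M) (hT : Isometry (⇑T)) (x : M)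
    (μ : Measure M) [IsProbabilityMeasure μ]
    (hinv : MeasurePreserving (⇑T) μ μ)
    (hsupp : μ (closure (Set.range fun n : ℤ => (T ^ n) x)) = 1) :
    (∀ ε : ℝ, 0 < ε → 0 < μ (Metric.ball x ε)) ∧
    (∀ ε : ℝ, 0 < ε → ∀ S : Finset M,
      (↑S ⊆ Set.range fun n : ℤ => (T ^ n) x) →
      (∀ a ∈ S, ∀ b ∈ S, a ≠ b → 2 * ε ≤ dist a b) →
      (S.card : ENNReal) ≤ (μ (Metric.ball x ε))⁻¹) ∧
    TotallyBounded (Set.range fun n : ℤ => (T ^ n) x) := by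
  classical
  set f : ℤ → M := fun n => (T ^ n) x with hf
  -- inverse is an isometry
  have hTinv : Isometry (⇑T.symm) := fun a b => by
    have := hT (T.symm a) (T.symm b)
    simpa using this.symm
  -- measurable equiv
  let e : M ≃ᵐ M :=
    { toEquiv := T
      measurable_toFun := hT.continuous.measurable
      measurable_invFun := hTinv.continuous.measurable }
  have hinv_e : MeasurePreserving (⇑e) μ μ := hinv
  have hinv_symm : MeasurePreserving (⇑T.symm) μ μ := hinv_e.symm e
  have key : ∀ n : ℤ, Isometry (⇑(T ^ n)) ∧ MeasurePreserving (⇑(T ^ n)) μ μ := by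
    intro n
    induction n using Int.induction_on with
    | zero => simpa using ⟨isometry_id, MeasurePreserving.id μ⟩
    | succ k ih =>
        have h1 : (T ^ ((k : ℤ) + 1)) = T ^ (k : ℤ) * T := zpow_add_one T k
        have h2 : ⇑(T ^ ((k : ℤ) + 1)) = ⇑(T ^ (k : ℤ)) ∘ ⇑T := by
          rw [h1]; rfl
        rw [h2]
        exact ⟨ih.1.comp hT, ih.2.comp hinv⟩
    | pred k ih =>
        have h1 : (T ^ (-(k : ℤ) - 1)) = T ^ (-(k : ℤ)) * T⁻¹ := zpow_sub_one T _
        have h2 : ⇑(T ^ (-(k : ℤ) - 1)) = ⇑(T ^ (-(k : ℤ))) ∘ ⇑T.symm := by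
          rw [h1]; rfl
        rw [h2]
        exact ⟨ih.1.comp hTinv, ih.2.comp hinv_symm⟩
  -- balls around orbit points have the same measure
  have hball : ∀ (n : ℤ) (ε : ℝ), μ (Metric.ball (f n) ε) = μ (Metric.ball x ε) := by
    intro n ε
    have hpre : (⇑(T ^ n)) ⁻¹' Metric.ball (f n) ε = Metric.ball x ε := by
      ext y
      simp only [Set.mem_preimage, Metric.mem_ball, hf]
      rw [(key n).1.dist_eq]
    rw [← hpre, (key n).2.measure_preimage measurableSet_ball.nullMeasurableSet]
  -- Part 1
  have part1 : ∀ ε : ℝ, 0 < ε → 0 < μ (Metric.ball x ε) := by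
    intro ε hε
    by_contra h
    push_neg at h
    have h0 : μ (Metric.ball x ε) = 0 := le_antisymm h zero_le
    have hsub : closure (Set.range f) ⊆ ⋃ n : ℤ, Metric.ball (f n) ε := by
      intro z hz
      rcases Metric.mem_closure_iff.1 hz ε hε with ⟨b, ⟨n, rfl⟩, hd⟩
      exact Set.mem_iUnion.2 ⟨n, by simpa [Metric.mem_ball, dist_comm] using hd⟩
    have : μ (closure (Set.range f)) ≤ 0 := by
      calc μ (closure (Set.range f)) ≤ μ (⋃ n : ℤ, Metric.ball (f n) ε) := measure_mono hsub
        _ ≤ ∑' n : ℤ, μ (Metric.ball (f n) ε) := measure_iUnion_le _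
        _ = 0 := by simp [hball, h0]
    rw [hsupp] at this
    exact one_ne_zero (le_antisymm this zero_le).symm.symm
  -- Part 2
  have part2 : ∀ ε : ℝ, 0 < ε → ∀ S : Finset M,
      (↑S ⊆ Set.range f) →
      (∀ a ∈ S, ∀ b ∈ S, a ≠ b → 2 * ε ≤ dist a b) →
      (S.card : ENNReal) ≤ (μ (Metric.ball x ε))⁻¹ := by
    intro ε hε S hSsub hSsep
    have hdisj : (↑S : Set M).PairwiseDisjoint (fun a => Metric.ball a ε) := by
      intro a ha b hb hab
      apply Metric.ball_disjoint_ball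
      have := hSsep a ha b hb hab
      linarith
    have hmeas : μ (⋃ a ∈ S, Metric.ball a ε) = ∑ a ∈ S, μ (Metric.ball a ε) :=
      measure_biUnion_finset hdisj (fun a _ => measurableSet_ball)
    have hconst : ∀ a ∈ S, μ (Metric.ball a ε) = μ (Metric.ball x ε) := by
      intro a ha
      rcases hSsub ha with ⟨n, rfl⟩
      exact hball n ε
    have hsum : (S.card : ENNReal) * μ (Metric.ball x ε) ≤ 1 := by
      calc (S.card : ENNReal) * μ (Metric.ball x ε)
          = ∑ a ∈ S, μ (Metric.ball a ε) := by
            rw [Finset.sum_congr rfl hconst, Finset.sum_const, nsmul_eq_mul]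
        _ = μ (⋃ a ∈ S, Metric.ball a ε) := hmeas.symm
        _ ≤ μ Set.univ := measure_mono (Set.subset_univ _)
        _ = 1 := measure_univ
    exact ENNReal.le_inv_iff_mul_le.2 hsum
  refine ⟨part1, part2, ?_⟩
  -- Part 3
  rw [Metric.totallyBounded_iff]
  intro ε hε
  have hε2 : 0 < ε / 2 := by linarith
  set m := μ (Metric.ball x (ε / 2)) with hm
  have hm0 : 0 < m := part1 _ hε2
  have hmtop : m⁻¹ ≠ ⊤ := by
    simp [ENNReal.inv_ne_top, hm0.ne']
  set N : ℕ := ⌊m⁻¹.toReal⌋₊ with hN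
  set P : ℕ → Prop := fun n => ∃ S : Finset M, (↑S ⊆ Set.range f) ∧
      (∀ a ∈ S, ∀ b ∈ S, a ≠ b → ε ≤ dist a b) ∧ S.card = n with hP
  have hbound : ∀ n, P n → n ≤ N := by
    rintro n ⟨S, hsub, hsep, rfl⟩
    have h2 := part2 (ε / 2) hε2 S hsub (by intro a ha b hb hab; rw [mul_div_cancel₀]; exact hsep a ha b hb hab; norm_num)
    have := ENNReal.toReal_mono hmtop h2
    rw [ENNReal.toReal_natCast] at this
    exact Nat.le_floor this
  have hP0 : P 0 := ⟨∅, by simp, by simp, rfl⟩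
  set k : ℕ := Nat.findGreatest P N with hk
  have hPk : P k := Nat.findGreatest_spec (Nat.zero_le N) hP0
  rcases hPk with ⟨S, hsub, hsep, hcard⟩
  refine ⟨↑S, S.finite_toSet, ?_⟩
  intro y hy
  by_contra hnot
  simp only [Set.mem_iUnion, Metric.mem_ball, not_exists, not_lt] at hnot
  -- y is ε-far from every point of S
  have hyfar : ∀ a ∈ S, ε ≤ dist y a := by
    intro a ha
    have := hnot a ha
    linarith [dist_comm y a, this]
  have hyS : y ∉ S := by
    intro hyS
    have := hyfar y hyS
    simp at this
    linarith
  have hP' : P (k + 1) := by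
    refine ⟨insert y S, ?_, ?_, ?_⟩
    · intro z hz
      simp only [Finset.coe_insert, Set.mem_insert_iff] at hz
      rcases hz with rfl | hz
      · exact hy
      · exact hsub hz
    · intro a ha b hb hab
      simp only [Finset.mem_insert] at ha hb
      rcases ha with rfl | ha
      · rcases hb with rfl | hb
        · exact absurd rfl hab
        · exact hyfar b hb
      · rcases hb with rfl | hb
        · rw [dist_comm]; exact hyfar a ha
        · exact hsep a ha b hb hab
    · rw [Finset.card_insert_of_notMem hyS, hcard]
  exact absurd hP' (Nat.findGreatest_is_greatest (by omega) (hbound _ hP'))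
end

section
/- Let B be a finite set of pairwise coprime integers ≥ 2, r ∈ ℤ, and B_{|r} := {b ∈ B : b | r}. Then the density of M_B ∪ (r + M_B), where M_B = ⋃_{b ∈ B} bℤ, equals 1 − (∏_{b ∈ B}(1 − 1/b)) · ∏_{b ∈ B∖B_{|r}} (1 − 1/(b−1)). -/
open Filter

/-- `M_B = ⋃_{b ∈ B} bℤ` as a subset of `ℤ`. -/
def MB (B : Finset ℕ) : Set ℤ := {n : ℤ | ∃ b ∈ B, (b : ℤ) ∣ n}

open scoped Classical in
/-- Counting function for the two-sided density of a subset of `ℤ`. -/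
noncomputable def cnt (E : Set ℤ) (n : ℕ) : ℝ :=
  (((Finset.Icc (-(n : ℤ)) n).filter (fun i => i ∈ E)).card : ℝ) / (2 * n + 1)

open scoped Classical

lemma window_card (N : ℕ) (hN : 0 < N) (S : Finset (ZMod N)) (c : ℤ) :
    ((Finset.Ico c (c + N)).filter (fun i : ℤ => ((i : ℤ) : ZMod N) ∈ S)).card = S.card := by
  haveI : NeZero N := ⟨hN.ne'⟩
  refine Finset.card_bij (fun (i : ℤ) _ => ((i : ℤ) : ZMod N)) ?_ ?_ ?_
  · intro a ha; exact (Finset.mem_filter.mp ha).2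
  · intro a ha b hb h
    simp only [Finset.mem_filter, Finset.mem_Ico] at ha hb
    have hm : a ≡ b [ZMOD (N:ℤ)] := by
      rwa [ZMod.intCast_eq_intCast_iff] at h
    have hd : ((N:ℤ)) ∣ b - a := Int.ModEq.dvd hm
    have := Int.eq_zero_of_abs_lt_dvd hd (abs_lt.mpr ⟨by omega, by omega⟩)
    omega
  · intro s hs
    refine ⟨c + ((s - (c : ZMod N)).val : ℤ), Finset.mem_filter.mpr ⟨Finset.mem_Ico.mpr ⟨by omega, ?_⟩, ?_⟩, ?_⟩
    · have := ZMod.val_lt (s - (c : ZMod N)); omega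
    · push_cast
      simp only [ZMod.natCast_val, ZMod.cast_id]
      simpa using hs
    · push_cast
      simp [ZMod.natCast_val, ZMod.cast_id]

lemma run_card (N : ℕ) (hN : 0 < N) (S : Finset (ZMod N)) (c : ℤ) (q : ℕ) :
    ((Finset.Ico c (c + N * q)).filter (fun i : ℤ => ((i : ℤ) : ZMod N) ∈ S)).card
      = q * S.card := by
  induction q with
  | zero => simp
  | succ q ih =>
    have h1 : c ≤ c + (N:ℤ) * q := le_add_of_nonneg_right (by positivity)
    have h2 : c + (N:ℤ) * q ≤ c + N * (q + 1) := by push_cast; nlinarith [hN]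
    have hsplit : Finset.Ico c (c + (N:ℤ) * (q+1))
        = Finset.Ico c (c + N * q) ∪ Finset.Ico (c + N * q) (c + N * (q+1)) :=
      (Finset.Ico_union_Ico_eq_Ico h1 h2).symm
    push_cast at hsplit ⊢
    rw [hsplit, Finset.filter_union, Finset.card_union_of_disjoint]
    · have hw : (c : ℤ) + N * (q+1) = (c + N*q) + N := by ring
      rw [hw, window_card N hN S (c + N*q), ih]
      ring
    · exact Finset.disjoint_filter_filter (Finset.Ico_disjoint_Ico_consecutive _ _ _)

lemma filter_card_congr {D : Finset ℤ} {p q : ℤ → Prop} {ip : DecidablePred p}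
    {iq : DecidablePred q} (h : ∀ x, p x ↔ q x) :
    (@Finset.filter ℤ p ip D).card = (@Finset.filter ℤ q iq D).card := by
  exact congrArg Finset.card (Finset.filter_congr (fun x _ => h x))

lemma cnt_periodic_tendsto (N : ℕ) (hN : 0 < N) (S : Finset (ZMod N)) :
    Filter.Tendsto (cnt {n : ℤ | ((n : ℤ) : ZMod N) ∈ S}) Filter.atTop
      (nhds ((S.card : ℝ) / N)) := by
  haveI : NeZero N := ⟨hN.ne'⟩
  set k := S.card with hk
  have hkN : k ≤ N := by
    calc k ≤ Fintype.card (ZMod N) := Finset.card_le_univ S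
    _ = N := ZMod.card N
  have key : ∀ n : ℕ, |cnt {n : ℤ | ((n : ℤ) : ZMod N) ∈ S} n - (k : ℝ)/N| ≤ (N:ℝ)/(2*n+1) := by
    intro n
    set q : ℕ := (2*n+1)/N with hq
    have hdm : N*q + (2*n+1) % N = 2*n+1 := by rw [hq]; exact Nat.div_add_mod _ _
    have hmod := Nat.mod_lt (2*n+1) hN
    have hql : N*q ≤ 2*n+1 := Nat.le.intro hdm
    have hqu : 2*n+1 ≤ N*q + N := by
      rw [← hdm]; exact Nat.add_le_add_left hmod.le _
    -- counting bounds
    have hIcc : Finset.Icc (-(n:ℤ)) n = Finset.Ico (-(n:ℤ)) ((n:ℤ)+1) := by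
      ext x; simp only [Finset.mem_Icc, Finset.mem_Ico]; omega
    set C := ((Finset.Icc (-(n:ℤ)) n).filter (fun i : ℤ => ((i : ℤ) : ZMod N) ∈ S)).card with hC
    have hlow : q * k ≤ C := by
      rw [← run_card N hN S (-(n:ℤ)) q]
      apply Finset.card_le_card
      apply Finset.filter_subset_filter
      rw [hIcc]
      apply Finset.Ico_subset_Ico_right
      have : (N:ℤ)*q ≤ 2*n+1 := by exact_mod_cast hql
      linarith
    have hhigh : C ≤ (q+1) * k := by
      rw [← run_card N hN S (-(n:ℤ)) (q+1)]
      apply Finset.card_le_card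
      apply Finset.filter_subset_filter
      rw [hIcc]
      apply Finset.Ico_subset_Ico_right
      have : 2*(n:ℤ)+1 ≤ N*q + N := by exact_mod_cast hqu
      push_cast
      linarith
    -- real estimate
    have ha : (0:ℝ) < 2*n+1 := by positivity
    have hN0 : (0:ℝ) < N := by exact_mod_cast hN
    have hcntval : cnt {n : ℤ | ((n : ℤ) : ZMod N) ∈ S} n = (C:ℝ)/(2*n+1) := by
      simp only [cnt]
      exact congrArg (fun z : ℕ => (z : ℝ) / (2 * (n:ℝ) + 1)) (filter_card_congr (fun x => Iff.rfl))
    rw [hcntval]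
    have hxl : (q:ℝ) * k ≤ (C:ℝ) := by exact_mod_cast hlow
    have hxu : (C:ℝ) ≤ (q+1) * k := by exact_mod_cast hhigh
    have hal : (q:ℝ)*N ≤ 2*n+1 := by
      have : ((N*q : ℕ):ℝ) ≤ ((2*n+1 : ℕ):ℝ) := by exact_mod_cast hql
      push_cast at this; linarith
    have hau : (2*(n:ℝ)+1) ≤ (q:ℝ)*N + N := by
      have : ((2*n+1 : ℕ):ℝ) ≤ ((N*q+N : ℕ):ℝ) := by exact_mod_cast hqu
      push_cast at this; linarith
    have hk0 : (0:ℝ) ≤ k := by positivity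
    have hkN' : (k:ℝ) ≤ N := by exact_mod_cast hkN
    have habs : |(C:ℝ)*N - (2*n+1)*k| ≤ N*N := by
      rw [abs_le]
      constructor
      · nlinarith [mul_le_mul_of_nonneg_right hxl hN0.le,
          mul_le_mul_of_nonneg_right hau hk0,
          mul_le_mul_of_nonneg_right hkN' hN0.le]
      · nlinarith [mul_le_mul_of_nonneg_right hxu hN0.le,
          mul_le_mul_of_nonneg_right hal hk0,
          mul_le_mul_of_nonneg_right hkN' hN0.le]
    rw [div_sub_div _ _ (ne_of_gt ha) (ne_of_gt hN0), abs_div,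
        abs_of_pos (mul_pos ha hN0), div_le_div_iff₀ (by positivity) ha]
    nlinarith [mul_le_mul_of_nonneg_right habs ha.le]
  have h0 : Filter.Tendsto (fun n : ℕ => (N:ℝ)/(2*n+1)) Filter.atTop (nhds 0) := by
    apply Filter.Tendsto.div_atTop tendsto_const_nhds
    apply tendsto_atTop_add_const_right
    exact (tendsto_natCast_atTop_atTop).const_mul_atTop (by norm_num : (0:ℝ) < 2)
  have key' : ∀ n : ℕ, ‖cnt {n : ℤ | ((n : ℤ) : ZMod N) ∈ S} n - (k : ℝ)/N‖ ≤ (N:ℝ)/(2*n+1) := by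
    intro n; rw [Real.norm_eq_abs]; exact key n
  have hz := squeeze_zero_norm key' h0
  have := hz.add_const ((k:ℝ)/N)
  simpa using this


lemma cnt_compl (U E : Set ℤ) (h : ∀ x, x ∈ E ↔ x ∉ U) (n : ℕ) :
    cnt U n = 1 - cnt E n := by
  simp only [cnt]
  have ha : (2*(n:ℝ)+1) ≠ 0 := by positivity
  have hIcc_card : (Finset.Icc (-(n:ℤ)) n).card = 2*n+1 := by
    rw [Int.card_Icc]; omega
  have h1 : ((Finset.Icc (-(n:ℤ)) n).filter (fun i => i ∈ E)).card
      = ((Finset.Icc (-(n:ℤ)) n).filter (fun i => ¬ i ∈ U)).card :=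
    filter_card_congr h
  have h2 : ((Finset.Icc (-(n:ℤ)) n).filter (fun i => i ∈ U)).card
      + ((Finset.Icc (-(n:ℤ)) n).filter (fun i => ¬ i ∈ U)).card
      = (Finset.Icc (-(n:ℤ)) n).card :=
    Finset.card_filter_add_card_filter_not _
  rw [eq_sub_iff_add_eq, ← add_div, div_eq_one_iff_eq ha, h1]
  exact_mod_cast h2.trans hIcc_card

theorem density_MB_union_shift_coprime (B : Finset ℕ) (hB : ∀ b ∈ B, 2 ≤ b)
    (hcop : ∀ b ∈ B, ∀ c ∈ B, b ≠ c → Nat.Coprime b c) (r : ℤ) :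
    Filter.Tendsto (cnt (MB B ∪ {n : ℤ | n - r ∈ MB B})) Filter.atTop
      (nhds (1 - (∏ b ∈ B, (1 - 1 / (b : ℝ))) *
        ∏ b ∈ B.filter (fun b : ℕ => ¬ ((b : ℤ) ∣ r)), (1 - 1 / ((b : ℝ) - 1)))) := by
  set N := ∏ b ∈ B, b with hNdef
  have hN : 0 < N := Finset.prod_pos (fun b hb => by have := hB b hb; omega)
  haveI : NeZero N := ⟨hN.ne'⟩
  have hdvd : ∀ b ∈ B, b ∣ N := fun b hb => Finset.dvd_prod_of_mem _ hb
  set S : Finset (ZMod N) := Finset.univ.filter (fun a : ZMod N =>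
    ∀ b ∈ B, ∀ h : b ∣ N, ZMod.castHom h (ZMod b) a ≠ 0
      ∧ ZMod.castHom h (ZMod b) a ≠ (r : ZMod b)) with hSdef
  set U : Set ℤ := MB B ∪ {n : ℤ | n - r ∈ MB B} with hUdef
  -- membership characterization
  have hmem : ∀ m : ℤ, m ∈ {n : ℤ | ((n : ℤ) : ZMod N) ∈ S} ↔ m ∉ U := by
    intro m
    rw [Set.mem_setOf_eq, hSdef, Finset.mem_filter]
    simp only [Finset.mem_univ, true_and]
    constructor
    · intro H hmem'
      rcases hmem' with h | h
      · obtain ⟨b, hb, hdb⟩ := h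
        exact (H b hb (hdvd b hb)).1 (by
          rw [map_intCast]
          exact (ZMod.intCast_zmod_eq_zero_iff_dvd m b).mpr hdb)
      · obtain ⟨b, hb, hdb⟩ := h
        exact (H b hb (hdvd b hb)).2 (by
          rw [map_intCast, ZMod.intCast_eq_intCast_iff]
          have : (b:ℤ) ∣ r - m := by
            obtain ⟨t, ht⟩ := hdb; exact ⟨-t, by linarith⟩
          exact (Int.modEq_iff_dvd.mpr this))
    · intro H b hb h
      constructor
      · intro h0
        rw [map_intCast] at h0
        exact H (Or.inl ⟨b, hb, (ZMod.intCast_zmod_eq_zero_iff_dvd m b).mp h0⟩)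
      · intro h0
        rw [map_intCast, ZMod.intCast_eq_intCast_iff] at h0
        have hd : (b:ℤ) ∣ r - m := Int.ModEq.dvd h0
        refine H (Or.inr ?_)
        rw [Set.mem_setOf_eq]
        exact ⟨b, hb, by obtain ⟨t, ht⟩ := hd; exact ⟨-t, by linarith⟩⟩
  -- the limit via the periodic lemma
  have hTT : Filter.Tendsto (cnt U) Filter.atTop (nhds (1 - (S.card : ℝ)/N)) := by
    have := (cnt_periodic_tendsto N hN S).const_sub (1:ℝ)
    refine Filter.Tendsto.congr (fun n => ?_) this
    exact (cnt_compl U {n : ℤ | ((n : ℤ) : ZMod N) ∈ S} hmem n).symm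
  -- count the residues via CRT
  haveI hNZ : ∀ i : {x // x ∈ B}, NeZero ((i : ℕ)) :=
    fun i => ⟨by have := hB i.1 i.2; omega⟩
  have hcard : S.card = ∏ b ∈ B, (b - if (b:ℤ) ∣ r then 1 else 2) := by
    have hpair : Pairwise (Function.onFun Nat.Coprime (fun i : {x // x ∈ B} => (i : ℕ))) :=
      fun i j hij => hcop i.1 i.2 j.1 j.2 (fun h => hij (Subtype.ext h))
    have hNe : (∏ i : {x // x ∈ B}, (i : ℕ)) = N := by
      rw [hNdef]; exact Finset.prod_coe_sort B (fun b => b)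
    let e : ZMod N ≃+* Π i : {x // x ∈ B}, ZMod (i : ℕ) :=
      (ZMod.ringEquivCongr hNe.symm).trans (ZMod.prodEquivPi _ hpair)
    have hcomp : ∀ (i : {x // x ∈ B}) (x : ZMod N),
        (e x) i = ZMod.castHom (hdvd i.1 i.2) (ZMod (i:ℕ)) x := by
      intro i x
      have := RingHom.ext_zmod
        ((Pi.evalRingHom (fun i : {x // x ∈ B} => ZMod (i:ℕ)) i).comp (e : ZMod N →+* _))
        (ZMod.castHom (hdvd i.1 i.2) (ZMod (i:ℕ)))
      exact RingHom.congr_fun this x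
    have hST : S.card = (Finset.univ.filter (fun v : Π i : {x // x ∈ B}, ZMod (i:ℕ) =>
        ∀ i, v i ≠ 0 ∧ v i ≠ (r : ZMod (i:ℕ)))).card := by
      apply Finset.card_equiv e.toEquiv
      intro a
      rw [hSdef]
      simp only [Finset.mem_filter, Finset.mem_univ, true_and]
      constructor
      · intro H i
        rw [show (e.toEquiv a) = e a from rfl, hcomp i a]
        exact H i.1 i.2 (hdvd i.1 i.2)
      · intro H b hb h
        have := H ⟨b, hb⟩
        rw [show (e.toEquiv a) = e a from rfl, hcomp ⟨b, hb⟩ a] at this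
        exact this
    rw [hST]
    have hT : (Finset.univ.filter (fun v : Π i : {x // x ∈ B}, ZMod (i:ℕ) =>
          ∀ i, v i ≠ 0 ∧ v i ≠ (r : ZMod (i:ℕ))))
        = Fintype.piFinset (fun i : {x // x ∈ B} =>
            ({0, (r : ZMod (i:ℕ))}ᶜ : Finset (ZMod (i:ℕ)))) := by
      ext v
      simp only [Finset.mem_filter, Finset.mem_univ, true_and, Fintype.mem_piFinset,
        Finset.mem_compl, Finset.mem_insert, Finset.mem_singleton]
      constructor
      · intro H i hx; exact hx.elim (H i).1 (H i).2
      · intro H i; exact ⟨fun h => H i (Or.inl h), fun h => H i (Or.inr h)⟩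
    rw [hT, Fintype.card_piFinset]
    rw [← Finset.prod_coe_sort B (fun b => b - if (b:ℤ) ∣ r then 1 else 2)]
    apply Finset.prod_congr rfl
    intro i _
    have hb2 := hB i.1 i.2
    rw [Finset.card_compl, ZMod.card]
    congr 1
    by_cases hbr : ((i:ℕ):ℤ) ∣ r
    · have h0 : (r : ZMod (i:ℕ)) = 0 := (ZMod.intCast_zmod_eq_zero_iff_dvd r (i:ℕ)).mpr hbr
      rw [if_pos hbr, h0]
      simp
    · have h0 : (r : ZMod (i:ℕ)) ≠ 0 :=
        fun h => hbr ((ZMod.intCast_zmod_eq_zero_iff_dvd r (i:ℕ)).mp h)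
      rw [if_neg hbr, Finset.card_insert_of_notMem (by simpa using (Ne.symm h0)),
        Finset.card_singleton]
  -- the real identity
  have hcast : ∀ b ∈ B, (((b - if (b:ℤ) ∣ r then 1 else 2 : ℕ)) : ℝ)
      = (b:ℝ) - (if (b:ℤ) ∣ r then 1 else 2) := by
    intro b hb
    have := hB b hb
    split <;> (rw [Nat.cast_sub (by omega)] <;> norm_num)
  have hval : ((S.card : ℝ))/N = (∏ b ∈ B, (1 - 1 / (b : ℝ))) *
      ∏ b ∈ B.filter (fun b : ℕ => ¬ ((b : ℤ) ∣ r)), (1 - 1 / ((b : ℝ) - 1)) := by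
    rw [hcard, hNdef]
    rw [Nat.cast_prod, Nat.cast_prod, ← Finset.prod_div_distrib]
    have step1 : ∏ b ∈ B, (((b - if (b:ℤ) ∣ r then 1 else 2 : ℕ)) : ℝ) / ((b:ℕ):ℝ)
        = ∏ b ∈ B, (((b:ℝ) - (if (b:ℤ) ∣ r then 1 else 2)) / b) :=
      Finset.prod_congr rfl (fun b hb => by rw [hcast b hb])
    rw [step1]
    rw [← Finset.prod_filter_mul_prod_filter_not B (fun b => (b:ℤ) ∣ r)
        (fun b => (((b:ℝ) - (if (b:ℤ) ∣ r then 1 else 2)) / b)),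
      ← Finset.prod_filter_mul_prod_filter_not B (fun b => (b:ℤ) ∣ r)
        (fun b => (1 - 1 / (b : ℝ)))]
    rw [mul_assoc, ← Finset.prod_mul_distrib]
    congr 1
    · apply Finset.prod_congr rfl
      intro b hb
      obtain ⟨hbB, hbr⟩ := Finset.mem_filter.mp hb
      have h2 := hB b hbB
      have hb0 : (b:ℝ) ≠ 0 := by positivity
      rw [if_pos hbr]
      field_simp
    · apply Finset.prod_congr rfl
      intro b hb
      obtain ⟨hbB, hbr⟩ := Finset.mem_filter.mp hb
      have h2 := hB b hbB
      have hb0 : (b:ℝ) ≠ 0 := by positivity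
      have hb1 : (b:ℝ) - 1 ≠ 0 := by
        have : (2:ℝ) ≤ b := by exact_mod_cast h2
        intro h; nlinarith
      rw [if_neg hbr]
      field_simp
      ring
  rw [← hval]
  exact hTT
end

section
/- Let B be a finite set of pairwise coprime integers ≥ 2, let r ∈ ℤ, r ≠ 0, and set r' := lcm{b ∈ B : b | r}. Then d(M_B ∪ (M_B + r)) = d(M_B ∪ (M_B + r')), where M_B = ⋃_{b∈B} bℤ and d denotes natural density. -/
open Filter

open scoped Classical

section helpers

variable {P Q : ℤ → Prop} {N : ℤ}

lemma per_mul (h : ∀ n, P n ↔ P (n + N)) : ∀ (t n : ℤ), P n ↔ P (n + N * t) := by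
  intro t
  induction t using Int.induction_on with
  | zero => simp
  | succ k ih =>
      intro n
      have e : n + N * ((k : ℤ) + 1) = (n + N * k) + N := by ring
      rw [ih n, e]; exact h _
  | pred k ih =>
      intro n
      have e : n + N * (-(k : ℤ) - 1) + N = n + N * (-(k : ℤ)) := by ring
      rw [ih n, ← e]
      exact (h _).symm

lemma per_mod (h : ∀ n, P n ↔ P (n + N)) {a b : ℤ} (hab : a % N = b % N) :
    P a ↔ P b := by
  have hd : N ∣ b - a := Int.ModEq.dvd hab
  obtain ⟨t, ht⟩ := hd
  have hb : b = a + N * t := by linarith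
  rw [hb]; exact per_mul h t a

lemma per_of_dvd {b : ℤ} (hbN : b ∣ N) (h : ∀ n, P n ↔ P (n + b)) :
    ∀ n, P n ↔ P (n + N) := by
  obtain ⟨t, rfl⟩ := hbN
  exact fun n => per_mul h t n

lemma card_filter_irrel {α : Type*} {p q : α → Prop} {hp : DecidablePred p}
    {hq : DecidablePred q} {s t : Finset α} (hst : s = t) (h : ∀ x, p x ↔ q x) :
    (@Finset.filter α p hp s).card = (@Finset.filter α q hq t).card := by
  subst hst
  have e : @Finset.filter α p hp s = @Finset.filter α q hq s := by
    ext x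
    simp only [Finset.mem_filter, h x]
  rw [e]

/-- The count of a periodic set over any window of length `N` is the same. -/
lemma card_window (hN : 0 < N) (h : ∀ n, P n ↔ P (n + N)) (a : ℤ) :
    ((Finset.Ico a (a + N)).filter P).card = ((Finset.Ico (0:ℤ) N).filter P).card := by
  have hN0 : N ≠ 0 := hN.ne'
  have hmodkey : ∀ x : ℤ, (a + (x - a) % N) % N = x % N := by
    intro x
    have e : a + (x - a) % N = (x - a) % N + a := by ring
    rw [e]
    have h1 : ((x - a) % N + a) % N = ((x - a) + a) % N :=
      Int.ModEq.add_right a (Int.emod_emod_of_dvd _ dvd_rfl)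
    rw [h1]
    ring_nf
  apply Finset.card_nbij' (fun m => m % N) (fun x => a + (x - a) % N)
  · intro m hm
    simp only [Finset.mem_coe, Finset.mem_filter, Finset.mem_Ico] at hm ⊢
    refine ⟨⟨Int.emod_nonneg m hN0, Int.emod_lt_of_pos m hN⟩, ?_⟩
    exact (per_mod h (Int.emod_emod_of_dvd m dvd_rfl).symm).mp hm.2
  · intro x hx
    simp only [Finset.mem_coe, Finset.mem_filter, Finset.mem_Ico] at hx ⊢
    have h1 : 0 ≤ (x - a) % N := Int.emod_nonneg _ hN0
    have h2 : (x - a) % N < N := Int.emod_lt_of_pos _ hN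
    refine ⟨⟨by linarith, by linarith⟩, ?_⟩
    exact (per_mod h (hmodkey x)).mpr hx.2
  · intro m hm
    simp only [Finset.mem_coe, Finset.mem_filter, Finset.mem_Ico] at hm
    have h1 : (m % N - a) % N = (m - a) % N :=
      Int.ModEq.sub_right a (Int.emod_emod_of_dvd m dvd_rfl)
    have h2 : (m - a) % N = m - a :=
      Int.emod_eq_of_lt (by linarith [hm.1.1]) (by linarith [hm.1.2])
    beta_reduce
    rw [h1, h2]; ring
  · intro x hx
    simp only [Finset.mem_coe, Finset.mem_filter, Finset.mem_Ico] at hx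
    beta_reduce
    rw [hmodkey x]
    exact Int.emod_eq_of_lt hx.1.1 hx.1.2

lemma card_blocks (hN : 0 < N) (h : ∀ n, P n ↔ P (n + N)) :
    ∀ (q : ℕ) (a : ℤ),
      ((Finset.Ico a (a + N * q)).filter P).card
        = q * ((Finset.Ico (0:ℤ) N).filter P).card := by
  intro q
  induction q with
  | zero => intro a; simp
  | succ q ih =>
      intro a
      have hq0 : (0:ℤ) ≤ N * q := by positivity
      have h1 : a ≤ a + N * q := by linarith
      have e3 : a + N * ((q + 1 : ℕ) : ℤ) = (a + N * q) + N := by push_cast; ring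
      rw [e3, ← Finset.Ico_union_Ico_eq_Ico h1 (by linarith : a + N * q ≤ a + N * q + N),
        Finset.filter_union,
        Finset.card_union_of_disjoint
          (Finset.disjoint_filter_filter (Finset.Ico_disjoint_Ico_consecutive _ _ _)),
        ih a, card_window hN h (a + N * q)]
      ring

/-- The basic convergence lemma: a periodic set has a density. -/
lemma tendsto_cnt {E : Set ℤ} (hN : 0 < N) (h : ∀ n, (n ∈ E) ↔ ((n + N) ∈ E)) :
    Tendsto (cnt E) atTop
      (nhds ((((Finset.Ico (0:ℤ) N).filter (fun i => i ∈ E)).card : ℝ) / (N : ℝ))) := by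
  set k : ℕ := ((Finset.Ico (0:ℤ) N).filter (fun i => i ∈ E)).card with hk
  have hN0 : N ≠ 0 := hN.ne'
  have key : ∀ n : ℕ, |cnt E n - (k : ℝ) / (N : ℝ)| ≤ (N : ℝ) / (2 * n + 1) := by
    intro n
    set D : ℤ := 2 * (n : ℤ) + 1 with hD
    have hDpos : 0 < D := by positivity
    set q : ℤ := D / N with hq
    set s : ℤ := D % N with hs
    have hq0 : 0 ≤ q := Int.ediv_nonneg hDpos.le hN.le
    have hs0 : 0 ≤ s := Int.emod_nonneg _ hN0
    have hsN : s < N := Int.emod_lt_of_pos _ hN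
    have hDeq : N * q + s = D := Int.mul_ediv_add_emod D N
    -- split the interval
    have hIcc : Finset.Icc (-(n:ℤ)) (n:ℤ) = Finset.Ico (-(n:ℤ)) ((n:ℤ) + 1) := rfl
    have hqn : N * (q.toNat : ℤ) = N * q := by rw [Int.toNat_of_nonneg hq0]
    have h1 : -(n:ℤ) ≤ -(n:ℤ) + N * q := by nlinarith
    have h2 : -(n:ℤ) + N * q ≤ (n:ℤ) + 1 := by
      have : (n:ℤ) + 1 = -(n:ℤ) + D := by rw [hD]; ring
      rw [this]
      linarith
    have hsplit :
        ((Finset.Ico (-(n:ℤ)) ((n:ℤ)+1)).filter (fun i => i ∈ E)).card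
          = q.toNat * k
            + ((Finset.Ico (-(n:ℤ) + N * q) ((n:ℤ)+1)).filter (fun i => i ∈ E)).card := by
      rw [← Finset.Ico_union_Ico_eq_Ico h1 h2, Finset.filter_union,
        Finset.card_union_of_disjoint
          (Finset.disjoint_filter_filter (Finset.Ico_disjoint_Ico_consecutive _ _ _))]
      congr 1
      rw [← hqn]
      exact card_blocks hN h q.toNat (-(n:ℤ))
    set t : ℕ := ((Finset.Ico (-(n:ℤ) + N * q) ((n:ℤ)+1)).filter (fun i => i ∈ E)).card with ht
    have htle : (t : ℤ) ≤ s := by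
      have : t ≤ (Finset.Ico (-(n:ℤ) + N * q) ((n:ℤ)+1)).card := Finset.card_filter_le _ _
      have hcard : (Finset.Ico (-(n:ℤ) + N * q) ((n:ℤ)+1)).card = s.toNat := by
        rw [Int.card_Ico]
        congr 1
        have hDval : D = 2 * (n:ℤ) + 1 := hD
        linarith [hDeq]
      rw [hcard] at this
      calc (t : ℤ) ≤ (s.toNat : ℤ) := by exact_mod_cast this
        _ = s := Int.toNat_of_nonneg hs0
    have hkN : (k : ℤ) ≤ N := by
      have : k ≤ (Finset.Ico (0:ℤ) N).card := Finset.card_filter_le _ _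
      have hcard : (Finset.Ico (0:ℤ) N).card = N.toNat := by rw [Int.card_Ico]; congr 1; omega
      rw [hcard] at this
      calc (k : ℤ) ≤ (N.toNat : ℤ) := by exact_mod_cast this
        _ = N := Int.toNat_of_nonneg hN.le
    -- now the real computation
    have hcnt : cnt E n = ((q.toNat * k + t : ℕ) : ℝ) / (2 * n + 1) := by
      rw [cnt, hIcc, hsplit]
    set Kr : ℝ := (k : ℝ) with hKr
    set Nr : ℝ := (N : ℝ) with hNr
    set qr : ℝ := ((q.toNat : ℕ) : ℝ) with hqr
    set sr : ℝ := (s : ℝ) with hsr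
    set tr : ℝ := (t : ℝ) with htr
    set Dr : ℝ := 2 * (n : ℝ) + 1 with hDr
    have hDrD : Dr = (D : ℝ) := by rw [hDr, hD]; push_cast; ring
    have hDrpos : 0 < Dr := by rw [hDr]; positivity
    have hNrpos : 0 < Nr := by rw [hNr]; exact_mod_cast hN
    have hqcast : ((q.toNat : ℕ) : ℝ) = ((q : ℤ) : ℝ) := by
      exact_mod_cast congrArg (fun z : ℤ => (z : ℝ)) (Int.toNat_of_nonneg hq0)
    have hDreq : Dr = Nr * qr + sr := by
      rw [hDrD, ← hDeq, hNr, hqr, hsr, hqcast]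
      push_cast
      ring
    have hcnt2 : cnt E n = (qr * Kr + tr) / Dr := by
      rw [hcnt, hqr, hKr, htr]; push_cast; ring
    have htr0 : 0 ≤ tr := Nat.cast_nonneg _
    have htrs : tr ≤ sr := by rw [htr, hsr]; exact_mod_cast htle
    have hsrN : sr < Nr := by rw [hsr, hNr]; exact_mod_cast hsN
    have hKr0 : 0 ≤ Kr := Nat.cast_nonneg _
    have hKrN : Kr ≤ Nr := by rw [hKr, hNr]; exact_mod_cast hkN
    have hdiff : cnt E n - Kr / Nr = (Nr * tr - Kr * sr) / (Dr * Nr) := by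
      rw [hcnt2]
      field_simp
      rw [hDreq]
      ring
    rw [hdiff, abs_div, abs_of_pos (mul_pos hDrpos hNrpos)]
    rw [div_le_div_iff₀ (mul_pos hDrpos hNrpos) hDrpos]
    have habs : |Nr * tr - Kr * sr| ≤ Nr * Nr := by
      rw [abs_le]
      constructor
      · nlinarith
      · nlinarith
    calc |Nr * tr - Kr * sr| * Dr ≤ (Nr * Nr) * Dr :=
          mul_le_mul_of_nonneg_right habs hDrpos.le
      _ = Nr * (Dr * Nr) := by ring
  -- squeeze
  have hb : Tendsto (fun n : ℕ => (N : ℝ) / (2 * n + 1)) atTop (nhds 0) := by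
    apply Tendsto.div_atTop tendsto_const_nhds
    apply Filter.tendsto_atTop_add_const_right
    exact (tendsto_natCast_atTop_atTop).const_mul_atTop (by norm_num)
  have hsq : Tendsto (fun n : ℕ => cnt E n - (k : ℝ) / (N : ℝ)) atTop (nhds 0) := by
    apply squeeze_zero_norm _ hb
    intro n
    rw [Real.norm_eq_abs]
    exact key n
  have := hsq.add_const ((k : ℝ) / (N : ℝ))
  simpa using this

end helpers

section crt

/-- CRT counting lemma for two coprime moduli. -/
lemma crt_count {M b : ℤ} (hM : 0 < M) (hb : 0 < b) (hco : IsCoprime M b)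
    {P Q : ℤ → Prop} (hP : ∀ n, P n ↔ P (n + M)) (hQ : ∀ n, Q n ↔ Q (n + b)) :
    ((Finset.Ico (0:ℤ) (M * b)).filter (fun i => P i ∧ Q i)).card
      = ((Finset.Ico (0:ℤ) M).filter P).card * ((Finset.Ico (0:ℤ) b).filter Q).card := by
  obtain ⟨u, v, huv⟩ := hco
  have hco' : IsCoprime M b := ⟨u, v, huv⟩
  have hM0 : M ≠ 0 := hM.ne'
  have hb0 : b ≠ 0 := hb.ne'
  have hMb : 0 < M * b := mul_pos hM hb
  have hMb0 : M * b ≠ 0 := hMb.ne'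
  set g : ℤ × ℤ → ℤ := fun p => (v * b * p.1 + u * M * p.2) % (M * b) with hg
  -- key congruences
  have hgM : ∀ x y : ℤ, (v * b * x + u * M * y) % (M * b) % M = x % M := by
    intro x y
    rw [Int.emod_emod_of_dvd _ (dvd_mul_right M b)]
    have e : v * b * x + u * M * y = x + M * (u * y - u * x) := by linear_combination x * huv
    rw [e, Int.add_mul_emod_self_left]
  have hgb : ∀ x y : ℤ, (v * b * x + u * M * y) % (M * b) % b = y % b := by
    intro x y
    rw [Int.emod_emod_of_dvd _ (dvd_mul_left b M)]
    have e : v * b * x + u * M * y = y + b * (v * x - v * y) := by linear_combination y * huv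
    rw [e, Int.add_mul_emod_self_left]
  rw [← Finset.card_product]
  apply Finset.card_nbij' (fun m => (m % M, m % b)) g
  · intro m hm
    simp only [Finset.mem_coe, Finset.mem_filter, Finset.mem_Ico, Finset.mem_product] at hm ⊢
    refine ⟨⟨⟨Int.emod_nonneg m hM0, Int.emod_lt_of_pos m hM⟩,
      (per_mod hP (Int.emod_emod_of_dvd m dvd_rfl).symm).mp hm.2.1⟩,
      ⟨Int.emod_nonneg m hb0, Int.emod_lt_of_pos m hb⟩,
      (per_mod hQ (Int.emod_emod_of_dvd m dvd_rfl).symm).mp hm.2.2⟩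
  · intro p hp
    simp only [Finset.mem_coe, Finset.mem_filter, Finset.mem_Ico, Finset.mem_product] at hp ⊢
    obtain ⟨⟨⟨hx0, hxM⟩, hPx⟩, ⟨hy0, hyb⟩, hQy⟩ := hp
    refine ⟨⟨Int.emod_nonneg _ hMb0, Int.emod_lt_of_pos _ hMb⟩, ?_, ?_⟩
    · exact (per_mod hP (hgM p.1 p.2)).mpr hPx
    · exact (per_mod hQ (hgb p.1 p.2)).mpr hQy
  · intro m hm
    simp only [Finset.mem_coe, Finset.mem_filter, Finset.mem_Ico] at hm
    obtain ⟨⟨hm0, hmMb⟩, _⟩ := hm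
    set w : ℤ := (v * b * (m % M) + u * M * (m % b)) % (M * b) with hw
    have hwM : w % M = m % M := by
      rw [hw, hgM]
      exact Int.emod_emod_of_dvd m dvd_rfl
    have hwb : w % b = m % b := by
      rw [hw, hgb]
      exact Int.emod_emod_of_dvd m dvd_rfl
    have hdM : M ∣ m - w := Int.ModEq.dvd hwM
    have hdb : b ∣ m - w := Int.ModEq.dvd hwb
    have hdMb : M * b ∣ m - w := hco'.mul_dvd hdM hdb
    have hmod : w % (M * b) = m % (M * b) := (Int.modEq_iff_dvd.mpr hdMb)
    have hww : w % (M * b) = w := Int.emod_eq_of_lt (Int.emod_nonneg _ hMb0) (Int.emod_lt_of_pos _ hMb)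
    have hmm : m % (M * b) = m := Int.emod_eq_of_lt hm0 hmMb
    show w = m
    rw [← hww, hmod, hmm]
  · intro p hp
    simp only [Finset.mem_coe, Finset.mem_filter, Finset.mem_Ico, Finset.mem_product] at hp
    obtain ⟨⟨⟨hx0, hxM⟩, _⟩, ⟨hy0, hyb⟩, _⟩ := hp
    show ((g p) % M, (g p) % b) = p
    have h1 : (g p) % M = p.1 := by rw [hg, hgM, Int.emod_eq_of_lt hx0 hxM]
    have h2 : (g p) % b = p.2 := by rw [hg, hgb, Int.emod_eq_of_lt hy0 hyb]
    rw [h1, h2]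

/-- counting a simultaneous condition over a product of pairwise coprime moduli. -/
lemma prod_count (R : ℕ → ℤ → Prop) :
    ∀ (B : Finset ℕ), (∀ b ∈ B, 0 < b) →
      (∀ b ∈ B, ∀ c ∈ B, b ≠ c → Nat.Coprime b c) →
      (∀ b ∈ B, ∀ n, R b n ↔ R b (n + (b:ℤ))) →
      ((Finset.Ico (0:ℤ) (∏ b ∈ B, (b:ℤ))).filter (fun i => ∀ b ∈ B, R b i)).card
        = ∏ b ∈ B, ((Finset.Ico (0:ℤ) (b:ℤ)).filter (R b)).card := by
  intro B
  induction B using Finset.induction_on with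
  | empty => intro _ _ _; simp
  | @insert a B ha ih =>
      intro hpos hcop hper
      have hapos : 0 < a := hpos a (Finset.mem_insert_self a B)
      have hBpos : ∀ b ∈ B, 0 < b := fun b hb => hpos b (Finset.mem_insert_of_mem hb)
      have hMpos : 0 < ∏ b ∈ B, (b:ℤ) :=
        Finset.prod_pos (fun b hb => by exact_mod_cast hBpos b hb)
      have hconat : Nat.Coprime (∏ b ∈ B, b) a := by
        apply Nat.Coprime.prod_left
        intro b hb
        exact hcop b (Finset.mem_insert_of_mem hb) a (Finset.mem_insert_self a B)
          (fun h => ha (h ▸ hb))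
      have hcoZ : IsCoprime (∏ b ∈ B, (b:ℤ)) (a:ℤ) := by
        rw [show (∏ b ∈ B, (b:ℤ)) = ((∏ b ∈ B, b : ℕ) : ℤ) by push_cast; rfl]
        exact Nat.isCoprime_iff_coprime.mpr hconat
      have hPper : ∀ n, (∀ b ∈ B, R b n) ↔ (∀ b ∈ B, R b (n + ∏ b ∈ B, (b:ℤ))) := by
        intro n
        apply forall₂_congr
        intro b hb
        have hdvd : ((b:ℤ)) ∣ ∏ b ∈ B, (b:ℤ) := Finset.dvd_prod_of_mem _ hb
        exact per_of_dvd hdvd (hper b (Finset.mem_insert_of_mem hb)) n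
      have hQper : ∀ n, R a n ↔ R a (n + (a:ℤ)) :=
        hper a (Finset.mem_insert_self a B)
      have key := crt_count hMpos (by exact_mod_cast hapos) hcoZ
        (P := fun i => ∀ b ∈ B, R b i) (Q := R a) hPper hQper
      beta_reduce at key
      rw [Finset.prod_insert ha, Finset.prod_insert ha]
      have e1 : (∏ b ∈ B, (b:ℤ)) * (a:ℤ) = (a:ℤ) * ∏ b ∈ B, (b:ℤ) := mul_comm _ _
      have e2 : (Finset.Ico (0:ℤ) ((a:ℤ) * ∏ b ∈ B, (b:ℤ))).filter
            (fun i => ∀ b ∈ insert a B, R b i)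
          = (Finset.Ico (0:ℤ) ((∏ b ∈ B, (b:ℤ)) * (a:ℤ))).filter
            (fun i => (∀ b ∈ B, R b i) ∧ R a i) := by
        rw [e1]
        apply Finset.filter_congr
        intro x _
        simp [Finset.forall_mem_insert, and_comm]
      rw [e2, ← ih hBpos
        (fun b hb c hc hbc => hcop b (Finset.mem_insert_of_mem hb) c (Finset.mem_insert_of_mem hc) hbc)
        (fun b hb => hper b (Finset.mem_insert_of_mem hb))]
      refine (card_filter_irrel rfl fun _ => Iff.rfl).trans
        ((key.trans (mul_comm _ _)).trans ?_)
      exact congrArg₂ (· * ·) (card_filter_irrel rfl fun _ => Iff.rfl)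
        (card_filter_irrel rfl fun _ => Iff.rfl)

/-- single-modulus count of the union of two residue classes. -/
lemma count_single {b : ℕ} (hb : 2 ≤ b) (s : ℤ) :
    ((Finset.Ico (0:ℤ) (b:ℤ)).filter (fun i => (b:ℤ) ∣ i ∨ (b:ℤ) ∣ i - s)).card
      = if (b:ℤ) ∣ s then 1 else 2 := by
  have hbpos : (0:ℤ) < b := by exact_mod_cast Nat.lt_of_lt_of_le Nat.zero_lt_two hb
  have hb0 : (b:ℤ) ≠ 0 := hbpos.ne'
  have hset : (Finset.Ico (0:ℤ) (b:ℤ)).filter (fun i => (b:ℤ) ∣ i ∨ (b:ℤ) ∣ i - s)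
      = ({0, s % b} : Finset ℤ) := by
    ext i
    simp only [Finset.mem_filter, Finset.mem_Ico, Finset.mem_insert, Finset.mem_singleton]
    constructor
    · rintro ⟨⟨h0, hlt⟩, h | h⟩
      · left
        have := Int.emod_eq_zero_of_dvd h
        rwa [Int.emod_eq_of_lt h0 hlt] at this
      · right
        have hmod : s % (b:ℤ) = i % (b:ℤ) := Int.modEq_iff_dvd.mpr h
        rw [hmod, Int.emod_eq_of_lt h0 hlt]
    · rintro (rfl | rfl)
      · exact ⟨⟨le_refl _, hbpos⟩, Or.inl (dvd_zero _)⟩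
      · refine ⟨⟨Int.emod_nonneg _ hb0, Int.emod_lt_of_pos _ hbpos⟩, Or.inr ?_⟩
        have hme : (s % (b:ℤ)) ≡ s [ZMOD (b:ℤ)] := Int.emod_emod_of_dvd s dvd_rfl
        exact Int.modEq_iff_dvd.mp hme.symm
  rw [hset]
  by_cases hdvd : (b:ℤ) ∣ s
  · rw [if_pos hdvd, Int.emod_eq_zero_of_dvd hdvd]
    simp
  · rw [if_neg hdvd]
    have hne : (0:ℤ) ≠ s % b := by
      intro h
      exact hdvd (Int.dvd_of_emod_eq_zero h.symm)
    exact Finset.card_pair hne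

end crt

set_option maxHeartbeats 1000000 in
open scoped Classical in
theorem density_union_shift_eq_lcm_shift (B : Finset ℕ) (hB : ∀ b ∈ B, 2 ≤ b)
    (hcop : ∀ b ∈ B, ∀ c ∈ B, b ≠ c → Nat.Coprime b c) (r : ℤ) (hr : r ≠ 0) :
    ∃ L : ℝ,
      Filter.Tendsto (cnt (MB B ∪ {n : ℤ | n - r ∈ MB B})) Filter.atTop (nhds L) ∧
      Filter.Tendsto
        (cnt (MB B ∪ {n : ℤ | n - (((B.filter (fun b : ℕ => (b : ℤ) ∣ r)).lcm id : ℕ) : ℤ) ∈ MB B}))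
        Filter.atTop (nhds L) := by
  set r' : ℤ := (((B.filter (fun b : ℕ => (b : ℤ) ∣ r)).lcm id : ℕ) : ℤ) with hr'
  set N : ℤ := ∏ b ∈ B, (b:ℤ) with hNdef
  have hN : 0 < N := Finset.prod_pos (fun b hb => by
    have := hB b hb; exact_mod_cast Nat.lt_of_lt_of_le Nat.zero_lt_two this)
  -- membership characterization
  have hmem : ∀ (s n : ℤ), (n ∈ MB B ∪ {m : ℤ | m - s ∈ MB B})
      ↔ ∃ b ∈ B, ((b:ℤ) ∣ n ∨ (b:ℤ) ∣ n - s) := by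
    intro s n
    simp only [Set.mem_union, Set.mem_setOf_eq, MB]
    constructor
    · rintro (⟨b, hb, h⟩ | ⟨b, hb, h⟩)
      · exact ⟨b, hb, Or.inl h⟩
      · exact ⟨b, hb, Or.inr h⟩
    · rintro ⟨b, hb, h | h⟩
      · exact Or.inl ⟨b, hb, h⟩
      · exact Or.inr ⟨b, hb, h⟩
  -- periodicity
  have hper : ∀ (s : ℤ) (n : ℤ), (n ∈ MB B ∪ {m : ℤ | m - s ∈ MB B})
      ↔ ((n + N) ∈ MB B ∪ {m : ℤ | m - s ∈ MB B}) := by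
    intro s n
    rw [hmem, hmem]
    apply exists_congr
    intro b
    apply and_congr_right
    intro hb
    have hdvd : (b:ℤ) ∣ N := Finset.dvd_prod_of_mem _ hb
    constructor
    · rintro (h | h)
      · exact Or.inl (dvd_add h hdvd)
      · refine Or.inr ?_
        have e : n + N - s = (n - s) + N := by ring
        rw [e]
        exact dvd_add h hdvd
    · rintro (h | h)
      · exact Or.inl (by simpa using dvd_sub h hdvd)
      · refine Or.inr ?_
        have e : n - s = (n + N - s) - N := by ring
        rw [e]
        exact dvd_sub h hdvd
  -- the two shifted residue counts agree
  have hdvd_iff : ∀ b ∈ B, ((b:ℤ) ∣ r ↔ (b:ℤ) ∣ r') := by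
    intro b hb
    constructor
    · intro h
      have hbmem : b ∈ B.filter (fun b : ℕ => (b : ℤ) ∣ r) := Finset.mem_filter.mpr ⟨hb, h⟩
      have : b ∣ (B.filter (fun b : ℕ => (b : ℤ) ∣ r)).lcm id := Finset.dvd_lcm hbmem
      rw [hr']
      exact_mod_cast this
    · intro h
      by_contra hnd
      have hbdvd : b ∣ (B.filter (fun b : ℕ => (b : ℤ) ∣ r)).lcm id := by
        rw [hr'] at h; exact_mod_cast h
      have hcob : Nat.Coprime b ((B.filter (fun b : ℕ => (b : ℤ) ∣ r)).lcm id) := by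
        have h1 : (B.filter (fun b : ℕ => (b : ℤ) ∣ r)).lcm id
            ∣ ∏ c ∈ B.filter (fun b : ℕ => (b : ℤ) ∣ r), c := by
          apply Finset.lcm_dvd
          intro c hc
          exact Finset.dvd_prod_of_mem _ hc
        apply Nat.Coprime.coprime_dvd_right h1
        apply Nat.Coprime.prod_right
        intro c hc
        obtain ⟨hcB, hcr⟩ := Finset.mem_filter.mp hc
        have hbc : b ≠ c := by rintro rfl; exact hnd hcr
        exact hcop b hb c hcB hbc
      have hb1 : b = 1 := by
        have h1 : b ∣ 1 := by
          have := Nat.dvd_gcd dvd_rfl hbdvd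
          rwa [Nat.Coprime.gcd_eq_one hcob] at this
        exact Nat.dvd_one.mp h1
      have hb2 := hB b hb
      omega
  -- per-modulus counts agree
  have hsingle : ∀ b ∈ B,
      ((Finset.Ico (0:ℤ) (b:ℤ)).filter (fun i => ¬((b:ℤ) ∣ i ∨ (b:ℤ) ∣ i - r))).card
        = ((Finset.Ico (0:ℤ) (b:ℤ)).filter (fun i => ¬((b:ℤ) ∣ i ∨ (b:ℤ) ∣ i - r'))).card := by
    intro b hb
    have h1 := Finset.card_filter_add_card_filter_not
      (s := Finset.Ico (0:ℤ) (b:ℤ)) (fun i => (b:ℤ) ∣ i ∨ (b:ℤ) ∣ i - r)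
    have h2 := Finset.card_filter_add_card_filter_not
      (s := Finset.Ico (0:ℤ) (b:ℤ)) (fun i => (b:ℤ) ∣ i ∨ (b:ℤ) ∣ i - r')
    have e1 := count_single (hB b hb) r
    have e2 := count_single (hB b hb) r'
    have e3 : (if (b:ℤ) ∣ r then 1 else 2) = (if (b:ℤ) ∣ r' then 1 else 2) := by
      by_cases h : (b:ℤ) ∣ r
      · rw [if_pos h, if_pos ((hdvd_iff b hb).mp h)]
      · rw [if_neg h, if_neg (fun h' => h ((hdvd_iff b hb).mpr h'))]
    omega
  -- full residue counts
  have hcount : ∀ s : ℤ,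
      ((Finset.Ico (0:ℤ) N).filter (fun i => i ∈ MB B ∪ {m : ℤ | m - s ∈ MB B})).card
        + ((Finset.Ico (0:ℤ) N).filter
            (fun i => ∀ b ∈ B, ¬((b:ℤ) ∣ i ∨ (b:ℤ) ∣ i - s))).card
        = (Finset.Ico (0:ℤ) N).card := by
    intro s
    have h1 := Finset.card_filter_add_card_filter_not
      (s := Finset.Ico (0:ℤ) N) (fun i => i ∈ MB B ∪ {m : ℤ | m - s ∈ MB B})
    have h2 : (Finset.Ico (0:ℤ) N).filter
          (fun i => ¬(i ∈ MB B ∪ {m : ℤ | m - s ∈ MB B}))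
        = (Finset.Ico (0:ℤ) N).filter
          (fun i => ∀ b ∈ B, ¬((b:ℤ) ∣ i ∨ (b:ℤ) ∣ i - s)) := by
      apply Finset.filter_congr
      intro i _
      rw [hmem s i]
      push_neg
      first
      | rfl
      | exact forall₂_congr fun b hb => Iff.rfl
      | exact forall₂_congr fun b hb => not_or.symm
      | tauto
    rw [← h2]
    exact h1
  have hcomp : ∀ s : ℤ,
      ((Finset.Ico (0:ℤ) N).filter (fun i => ∀ b ∈ B, ¬((b:ℤ) ∣ i ∨ (b:ℤ) ∣ i - s))).card
        = ∏ b ∈ B, ((Finset.Ico (0:ℤ) (b:ℤ)).filter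
            (fun i => ¬((b:ℤ) ∣ i ∨ (b:ℤ) ∣ i - s))).card := by
    intro s
    have hperb : ∀ b ∈ B, ∀ n : ℤ, (¬((b:ℤ) ∣ n ∨ (b:ℤ) ∣ n - s))
        ↔ (¬((b:ℤ) ∣ n + b ∨ (b:ℤ) ∣ n + b - s)) := by
      intro b hb n
      have hdvd1 : (b:ℤ) ∣ n ↔ (b:ℤ) ∣ n + b :=
        ⟨fun h => dvd_add h dvd_rfl, fun h => by simpa using h.sub (dvd_refl (b:ℤ))⟩
      have hdvd2 : (b:ℤ) ∣ n - s ↔ (b:ℤ) ∣ n + b - s := by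
        have e : n + (b:ℤ) - s = (n - s) + b := by ring
        rw [e]
        exact ⟨fun h => dvd_add h dvd_rfl, fun h => by simpa using h.sub (dvd_refl (b:ℤ))⟩
      rw [hdvd1, hdvd2]
    have hmain := prod_count (fun b i => ¬((b:ℤ) ∣ i ∨ (b:ℤ) ∣ i - s)) B
      (fun b hb => lt_of_lt_of_le Nat.zero_lt_two (hB b hb)) hcop hperb
    refine (card_filter_irrel (by rw [hNdef]) fun _ => Iff.rfl).trans (hmain.trans ?_)
    exact Finset.prod_congr rfl fun b _ => card_filter_irrel rfl fun _ => Iff.rfl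
  have hkey : ((Finset.Ico (0:ℤ) N).filter
        (fun i => i ∈ MB B ∪ {m : ℤ | m - r ∈ MB B})).card
      = ((Finset.Ico (0:ℤ) N).filter
        (fun i => i ∈ MB B ∪ {m : ℤ | m - r' ∈ MB B})).card := by
    have h1 := hcount r
    have h2 := hcount r'
    have h3 : ((Finset.Ico (0:ℤ) N).filter
          (fun i => ∀ b ∈ B, ¬((b:ℤ) ∣ i ∨ (b:ℤ) ∣ i - r))).card
        = ((Finset.Ico (0:ℤ) N).filter
          (fun i => ∀ b ∈ B, ¬((b:ℤ) ∣ i ∨ (b:ℤ) ∣ i - r'))).card := by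
      exact (hcomp r).trans ((Finset.prod_congr rfl hsingle).trans (hcomp r').symm)
    omega
  have T1 := tendsto_cnt hN (hper r)
  have T2 := tendsto_cnt hN (hper r')
  refine ⟨_, T1, ?_⟩
  convert T2 using 3
  exact_mod_cast (card_filter_irrel rfl fun _ => Iff.rfl).trans
    (hkey.trans (card_filter_irrel rfl fun _ => Iff.rfl))
end

section
/- Let B be a finite set of integers ≥ 2 and r, r' ∈ ℤ with r' = r·m where m is coprime to every element of B. Then d(M_B ∪ (M_B + r)) = d(M_B ∪ (M_B + r')), where M_B = ⋃_{b∈B} bℤ. -/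
open Filter

open Finset

/-- Periodicity propagates to congruence mod `N`. -/
lemma mem_congr_of_period (E : Set ℤ) (N : ℕ)
    (hper : ∀ n : ℤ, n + N ∈ E ↔ n ∈ E) :
    ∀ n n' : ℤ, n % N = n' % N → (n ∈ E ↔ n' ∈ E) := by
  have key : ∀ k : ℤ, ∀ n : ℤ, n + N * k ∈ E ↔ n ∈ E := by
    intro k
    induction k using Int.induction_on with
    | zero => simp
    | succ k ih =>
      intro n
      have h1 : n + (N : ℤ) * (k + 1) = (n + N * k) + N := by ring
      rw [h1, hper, ih]
    | pred k ih =>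
      intro n
      have h1 : (n + (N : ℤ) * (-k - 1)) + N = n + N * (-(k : ℤ)) := by ring
      have := hper (n + (N : ℤ) * (-k - 1))
      rw [h1] at this
      rw [← this, ih]
  intro n n' h
  have hd : (N : ℤ) ∣ n' - n := Int.ModEq.dvd (show n ≡ n' [ZMOD (N:ℤ)] from h)
  obtain ⟨k, hk⟩ := hd
  have : n' = n + N * k := by linarith
  rw [this, key]

open scoped Classical in
/-- Count over one period equals count over the fundamental period. -/
lemma count_one_block (E : Set ℤ) (N : ℕ) (hN : 0 < N)
    (hper : ∀ n : ℤ, n + N ∈ E ↔ n ∈ E) (a : ℤ) :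
    ((Finset.Ico a (a + N)).filter (· ∈ E)).card
      = ((Finset.Ico (0:ℤ) N).filter (· ∈ E)).card := by
  have hNZ : (0:ℤ) < N := by exact_mod_cast hN
  have hc := mem_congr_of_period E N hper
  refine Finset.card_nbij' (fun x => x % N) (fun y => a + (y - a) % N) ?_ ?_ ?_ ?_
  · intro x hx
    simp only [mem_coe, mem_filter, mem_Ico] at hx ⊢
    refine ⟨⟨Int.emod_nonneg _ (by positivity), Int.emod_lt_of_pos _ hNZ⟩, ?_⟩
    exact (hc _ _ (Int.emod_emod_of_dvd _ dvd_rfl)).mpr hx.2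
  · intro y hy
    simp only [mem_coe, mem_filter, mem_Ico] at hy ⊢
    have h1 : 0 ≤ (y - a) % N := Int.emod_nonneg _ (by positivity)
    have h2 : (y - a) % N < N := Int.emod_lt_of_pos _ hNZ
    refine ⟨⟨by linarith, by linarith⟩, ?_⟩
    have : (a + (y - a) % N) % N = y % N := by
      have : (a + (y - a) % N) ≡ a + (y - a) [ZMOD (N:ℤ)] :=
        Int.ModEq.add_left a (Int.emod_emod_of_dvd _ dvd_rfl)
      simpa using this.trans (by ring_nf)
    exact (hc _ _ this).mpr hy.2
  · intro x hx
    simp only [mem_coe, mem_filter, mem_Ico] at hx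
    have hm1 : (x % N - a) % N = (x - a) % N :=
      Int.ModEq.sub_right a (Int.emod_emod_of_dvd _ dvd_rfl)
    have hm2 : (x - a) % N = x - a :=
      Int.emod_eq_of_lt (by linarith [hx.1.1]) (by linarith [hx.1.2])
    show a + (x % (N:ℤ) - a) % (N:ℤ) = x
    rw [hm1, hm2]; ring
  · intro y hy
    simp only [mem_coe, mem_filter, mem_Ico] at hy
    have h1 : (a + (y - a) % N) % N = y % N := by
      have : (a + (y - a) % N) ≡ a + (y - a) [ZMOD (N:ℤ)] :=
        Int.ModEq.add_left a (Int.emod_emod_of_dvd _ dvd_rfl)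
      simpa using this.trans (by ring_nf)
    show (a + (y - a) % (N:ℤ)) % (N:ℤ) = y
    rw [h1, Int.emod_eq_of_lt hy.1.1 hy.1.2]

open scoped Classical in
lemma count_blocks (E : Set ℤ) (N : ℕ) (hN : 0 < N)
    (hper : ∀ n : ℤ, n + N ∈ E ↔ n ∈ E) (a : ℤ) (k : ℕ) :
    ((Finset.Ico a (a + N * k)).filter (· ∈ E)).card
      = k * ((Finset.Ico (0:ℤ) N).filter (· ∈ E)).card := by
  induction k with
  | zero => simp
  | succ k ih =>
    have hNZ : (0:ℤ) < N := by exact_mod_cast hN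
    have h1 : a ≤ a + (N : ℤ) * k := by nlinarith [Int.natCast_nonneg k]
    have h2 : a + (N : ℤ) * k ≤ a + (N : ℤ) * (k + 1) := by nlinarith
    have hsplit : Finset.Ico a (a + (N:ℤ) * ((k:ℤ) + 1))
        = Finset.Ico a (a + N * k) ∪ Finset.Ico (a + N * k) (a + N * ((k:ℤ)+1)) :=
      (Finset.Ico_union_Ico_eq_Ico h1 h2).symm
    have hcast : ((k:ℤ) + 1) = ((k + 1 : ℕ) : ℤ) := by push_cast; ring
    have hdisj : Disjoint (Finset.Ico a (a + (N:ℤ) * k))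
        (Finset.Ico (a + (N:ℤ) * k) (a + N * ((k:ℤ)+1))) :=
      Finset.Ico_disjoint_Ico_consecutive _ _ _
    have hlast : ((Finset.Ico (a + (N:ℤ) * k) (a + N * ((k:ℤ)+1))).filter (· ∈ E)).card
        = ((Finset.Ico (0:ℤ) N).filter (· ∈ E)).card := by
      have heq : a + (N:ℤ) * ((k:ℤ)+1) = (a + N * k) + N := by ring
      rw [heq]
      exact count_one_block E N hN hper _
    calc ((Finset.Ico a (a + (N:ℤ) * (k+1:ℕ))).filter (· ∈ E)).card
        = ((Finset.Ico a (a + (N:ℤ) * ((k:ℤ)+1))).filter (· ∈ E)).card := by rw [hcast]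
      _ = ((Finset.Ico a (a + (N:ℤ) * k)).filter (· ∈ E)).card
          + ((Finset.Ico (a + (N:ℤ) * k) (a + N * ((k:ℤ)+1))).filter (· ∈ E)).card := by
          rw [hsplit, Finset.filter_union,
            Finset.card_union_of_disjoint (Finset.disjoint_filter_filter hdisj)]
      _ = k * ((Finset.Ico (0:ℤ) N).filter (· ∈ E)).card
          + ((Finset.Ico (0:ℤ) N).filter (· ∈ E)).card := by rw [ih, hlast]
      _ = (k + 1) * ((Finset.Ico (0:ℤ) N).filter (· ∈ E)).card := by ring

set_option maxHeartbeats 1000000 in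
open scoped Classical in
lemma tendsto_cnt_periodic (E : Set ℤ) (N : ℕ) (hN : 0 < N)
    (hper : ∀ n : ℤ, n + N ∈ E ↔ n ∈ E) :
    Tendsto (cnt E) atTop
      (nhds ((((Finset.Ico (0:ℤ) N).filter (· ∈ E)).card : ℝ) / N)) := by
  set c : ℕ := ((Finset.Ico (0:ℤ) N).filter (· ∈ E)).card with hcdef
  have hcN : c ≤ N := by
    have := Finset.card_filter_le (Finset.Ico (0:ℤ) N) (· ∈ E)
    simpa using this
  have hN0 : (0:ℝ) < N := by exact_mod_cast hN
  have hbound : ∀ n : ℕ, |cnt E n - (c:ℝ)/N| ≤ (N:ℝ)/(2*n+1) := by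
    intro n
    set L : ℕ := 2*n+1 with hL
    set q : ℕ := L / N with hq
    set s : ℕ := L % N with hs
    set a : ℤ := -(n:ℤ) with ha
    have hNq : N * q ≤ L := Nat.mul_div_le L N
    have hsN : s < N := Nat.mod_lt _ hN
    have hIcc : Finset.Icc (-(n:ℤ)) n = Finset.Ico a (a + L) := by
      ext x
      simp only [Finset.mem_Icc, Finset.mem_Ico, ha]
      push_cast [hL]
      omega
    have h1 : a ≤ a + (N:ℤ) * q := by
      have : (0:ℤ) ≤ (N:ℤ) * q := by positivity
      linarith
    have h2 : a + (N:ℤ) * q ≤ a + (L:ℤ) := by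
      have : ((N*q : ℕ) : ℤ) ≤ (L:ℤ) := by exact_mod_cast hNq
      push_cast at this ⊢; linarith
    have hsplit : Finset.Ico a (a + (L:ℤ))
        = Finset.Ico a (a + (N:ℤ)*q) ∪ Finset.Ico (a + (N:ℤ)*q) (a + L) :=
      (Finset.Ico_union_Ico_eq_Ico h1 h2).symm
    set e : ℕ := ((Finset.Ico (a + (N:ℤ)*q) (a + L)).filter (· ∈ E)).card with he
    have hes : e ≤ s := by
      calc e ≤ (Finset.Ico (a + (N:ℤ)*q) (a + L)).card := Finset.card_filter_le _ _
        _ = s := by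
          rw [Int.card_Ico]
          have h2 : N * q + s = L := by rw [hq, hs]; exact Nat.div_add_mod L N
          have h3 : (a + (L:ℤ)) - (a + (N:ℤ)*q) = (s:ℤ) := by
            push_cast [← h2]; ring
          rw [h3, Int.toNat_natCast]
    have hcount : ((Finset.Icc (-(n:ℤ)) n).filter (fun i => i ∈ E)).card = q * c + e := by
      rw [hIcc, hsplit, Finset.filter_union,
        Finset.card_union_of_disjoint
          (Finset.disjoint_filter_filter (Finset.Ico_disjoint_Ico_consecutive _ _ _)),
        count_blocks E N hN hper a q]
    have hD0 : (0:ℝ) < 2*(n:ℝ)+1 := by positivity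
    have hD : (2*(n:ℝ)+1) = (N:ℝ)*q + s := by
      have h2 : N * q + s = L := by rw [hq, hs]; exact Nat.div_add_mod L N
      have h3 : ((N:ℝ))*q + s = L := by exact_mod_cast h2
      rw [h3]; push_cast [hL]; ring
    have hDne : (2*(n:ℝ)+1) ≠ 0 := ne_of_gt hD0
    have hNne : (N:ℝ) ≠ 0 := ne_of_gt hN0
    have hcnt : cnt E n = ((q*c+e : ℕ) : ℝ) / (2*(n:ℝ)+1) := by
      rw [cnt, hcount]
    rw [hcnt]
    have hid : ((q*c+e : ℕ) : ℝ)/(2*(n:ℝ)+1) - (c:ℝ)/N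
        = ((e:ℝ) - (c:ℝ)*s/N)/(2*(n:ℝ)+1) := by
      have h4 : ((q*c+e : ℕ) : ℝ) = ((e:ℝ) - (c:ℝ)*s/N) + (c:ℝ)/N * (2*(n:ℝ)+1) := by
        push_cast
        rw [hD]
        field_simp
        ring
      rw [h4, add_div, mul_div_cancel_right₀ _ hDne]
      ring
    rw [hid, abs_div, abs_of_pos hD0]
    have hesR : (e:ℝ) ≤ s := by exact_mod_cast hes
    have hsNR : (s:ℝ) ≤ N := by exact_mod_cast hsN.le
    have hcNR : (c:ℝ) ≤ N := by exact_mod_cast hcN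
    have hu1 : (0:ℝ) ≤ (c:ℝ)*s/N := by positivity
    have hu2 : (c:ℝ)*s/N ≤ s := by
      rw [div_le_iff₀ hN0]
      have hs0 : (0:ℝ) ≤ (s:ℝ) := by positivity
      nlinarith
    have habs : |(e:ℝ) - (c:ℝ)*s/N| ≤ N := by
      rw [abs_le]
      have he0 : (0:ℝ) ≤ (e:ℝ) := by positivity
      constructor <;> linarith
    gcongr
  have h0 : Tendsto (fun n : ℕ => (N:ℝ)/(2*n+1)) atTop (nhds 0) := by
    apply Tendsto.div_atTop tendsto_const_nhds
    apply Filter.tendsto_atTop_add_const_right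
    exact (tendsto_natCast_atTop_atTop).const_mul_atTop two_pos
  have hsq : Tendsto (fun n : ℕ => cnt E n - (c:ℝ)/N) atTop (nhds 0) :=
    squeeze_zero_norm (fun n => by rw [Real.norm_eq_abs]; exact hbound n) h0
  have := hsq.add_const ((c:ℝ)/N)
  simpa using this

set_option maxHeartbeats 1000000 in
open scoped Classical in
theorem density_union_shift_coprime_multiple (B : Finset ℕ) (hB : ∀ b ∈ B, 2 ≤ b)
    (r m : ℤ) (hm : ∀ b ∈ B, IsCoprime m (b : ℤ)) :
    ∃ L : ℝ,
      Filter.Tendsto (cnt (MB B ∪ {n : ℤ | n - r ∈ MB B})) Filter.atTop (nhds L) ∧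
      Filter.Tendsto (cnt (MB B ∪ {n : ℤ | n - r * m ∈ MB B})) Filter.atTop (nhds L) := by
  set N : ℕ := B.lcm id with hNdef
  have hN : 0 < N := by
    rw [Nat.pos_iff_ne_zero]
    intro h0
    rw [hNdef, Finset.lcm_eq_zero_iff] at h0
    obtain ⟨b, hb, hb0⟩ := h0
    have := hB b hb
    simp only [id] at hb0
    omega
  have hNZ : (0:ℤ) < N := by exact_mod_cast hN
  have hdvd : ∀ b ∈ B, (b:ℤ) ∣ (N:ℤ) := fun b hb =>
    Int.natCast_dvd_natCast.mpr (Finset.dvd_lcm hb)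
  have hMper : ∀ n : ℤ, n + N ∈ MB B ↔ n ∈ MB B := by
    intro n
    constructor <;> rintro ⟨b, hb, hd⟩ <;> refine ⟨b, hb, ?_⟩
    · simpa using dvd_sub hd (hdvd b hb)
    · exact dvd_add hd (hdvd b hb)
  have hper : ∀ t : ℤ, ∀ n : ℤ,
      n + N ∈ MB B ∪ {x | x - t ∈ MB B} ↔ n ∈ MB B ∪ {x | x - t ∈ MB B} := by
    intro t n
    simp only [Set.mem_union, Set.mem_setOf_eq]
    rw [hMper n]
    have h5 : n + (N:ℤ) - t = (n - t) + N := by ring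
    rw [h5, hMper (n - t)]
  have hmN : IsCoprime m (N:ℤ) := by
    have hprod : IsCoprime m (∏ b ∈ B, (b:ℤ)) := IsCoprime.prod_right (fun b hb => hm b hb)
    have hdvdprod : (N:ℤ) ∣ ∏ b ∈ B, (b:ℤ) := by
      have h6 : B.lcm id ∣ B.prod id :=
        Finset.lcm_dvd (fun b hb => Finset.dvd_prod_of_mem id hb)
      have h7 := Int.natCast_dvd_natCast.mpr h6
      push_cast at h7
      simpa using h7
    exact hprod.of_isCoprime_of_dvd_right hdvdprod
  obtain ⟨u, v, huv⟩ := hmN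
  have hmulM : ∀ n : ℤ, m * n ∈ MB B ↔ n ∈ MB B := by
    intro n
    constructor <;> rintro ⟨b, hb, hd⟩ <;> refine ⟨b, hb, ?_⟩
    · exact ((hm b hb).symm).dvd_of_dvd_mul_left hd
    · exact hd.mul_left m
  have hEr : ∀ n : ℤ, m * n ∈ MB B ∪ {x | x - r*m ∈ MB B}
      ↔ n ∈ MB B ∪ {x | x - r ∈ MB B} := by
    intro n
    simp only [Set.mem_union, Set.mem_setOf_eq]
    rw [hmulM n]
    have h5 : m * n - r * m = m * (n - r) := by ring
    rw [h5, hmulM (n - r)]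
  have hc_r := mem_congr_of_period (MB B ∪ {x | x - r ∈ MB B}) N (hper r)
  have hc_rm := mem_congr_of_period (MB B ∪ {x | x - r*m ∈ MB B}) N (hper (r*m))
  -- congruence facts
  have hum : ∀ y : ℤ, (m * (u * y)) % N = y % N := by
    intro y
    have hd6 : (N:ℤ) ∣ m * (u * y) - y := ⟨-(v * y), by linear_combination y * huv⟩
    exact (Int.modEq_iff_dvd.mpr hd6).symm
  have hmu : ∀ x : ℤ, (u * (m * x)) % N = x % N := by
    intro x
    have hd6 : (N:ℤ) ∣ u * (m * x) - x := ⟨-(v * x), by linear_combination x * huv⟩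
    exact (Int.modEq_iff_dvd.mpr hd6).symm
  have hemod : ∀ z : ℤ, z % (N:ℤ) % N = z % N := fun z => Int.emod_emod_of_dvd z dvd_rfl
  have hcard : ((Finset.Ico (0:ℤ) N).filter (· ∈ MB B ∪ {x | x - r ∈ MB B})).card
      = ((Finset.Ico (0:ℤ) N).filter (· ∈ MB B ∪ {x | x - r*m ∈ MB B})).card := by
    refine Finset.card_nbij' (fun x => (m*x) % N) (fun y => (u*y) % N) ?_ ?_ ?_ ?_
    · intro x hx
      simp only [Finset.mem_coe, Finset.mem_filter, Finset.mem_Ico] at hx ⊢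
      refine ⟨⟨Int.emod_nonneg _ (ne_of_gt hNZ), Int.emod_lt_of_pos _ hNZ⟩, ?_⟩
      exact (hc_rm _ _ (hemod _)).mpr ((hEr x).mpr hx.2)
    · intro y hy
      simp only [Finset.mem_coe, Finset.mem_filter, Finset.mem_Ico] at hy ⊢
      refine ⟨⟨Int.emod_nonneg _ (ne_of_gt hNZ), Int.emod_lt_of_pos _ hNZ⟩, ?_⟩
      refine (hc_r _ _ (hemod _)).mpr ?_
      exact (hEr (u*y)).mp ((hc_rm _ _ (hum y)).mpr hy.2)
    · intro x hx
      simp only [Finset.mem_coe, Finset.mem_filter, Finset.mem_Ico] at hx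
      show (u * ((m*x) % N)) % N = x
      have h8 : (u * ((m*x) % N)) % N = (u * (m*x)) % N :=
        Int.ModEq.mul_left u (hemod (m*x))
      rw [h8, hmu x, Int.emod_eq_of_lt hx.1.1 hx.1.2]
    · intro y hy
      simp only [Finset.mem_coe, Finset.mem_filter, Finset.mem_Ico] at hy
      show (m * ((u*y) % N)) % N = y
      have h8 : (m * ((u*y) % N)) % N = (m * (u*y)) % N :=
        Int.ModEq.mul_left m (hemod (u*y))
      rw [h8, hum y, Int.emod_eq_of_lt hy.1.1 hy.1.2]
  have T1 := tendsto_cnt_periodic (MB B ∪ {n : ℤ | n - r ∈ MB B}) N hN (hper r)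
  have T2 := tendsto_cnt_periodic (MB B ∪ {n : ℤ | n - r * m ∈ MB B}) N hN (hper (r*m))
  rw [Finset.filter_congr_decidable] at T1 T2
  rw [← hcard] at T2
  exact ⟨_, T1, T2⟩
end

section
/- Rogers-type monotonicity for prime-power moduli: let I be a finite index set, p a prime, b_i = p^{e_i} powers of p, g_i ∈ ℤ, and m ∈ ℤ. Then the density of ⋃_{i∈I}(g_i + b_iℤ) is at least the density of ⋃_{i∈I}(m·g_i + b_iℤ). -/
open Filter

open Finset
open scoped Classical

section Density

variable (P : ℤ → Prop) (q : ℕ)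

lemma periodic_int (hper : ∀ x : ℤ, P (x + q) ↔ P x) :
    ∀ (k : ℤ) (x : ℤ), P (x + q * k) ↔ P x := by
  intro k
  induction k using Int.induction_on with
  | zero => simp
  | succ k ih => intro x; rw [show x + q * (k+1) = (x + q*k) + q by ring, hper, ih]
  | pred k ih => intro x
                 have := ih (x - q)
                 rw [show x + q * (-(k:ℤ)-1) = (x - q) + q * (-k) by ring]
                 rw [this, ← hper, show x - q + q = x by ring]

lemma emod_iff (hq : 0 < q) (hper : ∀ x : ℤ, P (x + q) ↔ P x) (x : ℤ) :
    P (x % q) ↔ P x := by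
  have h := periodic_int P q hper (x / q) (x % q)
  rw [Int.emod_add_mul_ediv x q] at h
  exact h.symm

lemma block_count (hq : 0 < q) (hper : ∀ x : ℤ, P (x + q) ↔ P x) (a : ℤ) :
    ((Finset.Ico a (a + q)).filter P).card = ((Finset.Ico (0:ℤ) q).filter P).card := by
  have hq' : (0:ℤ) < q := by exact_mod_cast hq
  apply Finset.card_bij' (fun x _ => x % (q:ℤ)) (fun y _ => a + (y - a) % q)
  · intro x hx
    rw [Finset.mem_filter, Finset.mem_Ico] at hx ⊢
    exact ⟨⟨Int.emod_nonneg x hq'.ne', Int.emod_lt_of_pos x hq'⟩,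
      (emod_iff P q hq hper x).2 hx.2⟩
  · intro y hy
    rw [Finset.mem_filter, Finset.mem_Ico] at hy ⊢
    have h0 : 0 ≤ (y - a) % q := Int.emod_nonneg _ hq'.ne'
    have h1 : (y - a) % q < q := Int.emod_lt_of_pos _ hq'
    refine ⟨⟨by linarith, by linarith⟩, ?_⟩
    have : a + (y - a) % q = y + (q:ℤ) * (-((y-a)/q)) := by
      rw [Int.emod_def]; ring
    rw [this, periodic_int P q hper]
    exact hy.2
  · intro x hx
    rw [Finset.mem_filter, Finset.mem_Ico] at hx
    have : (x % q - a) % q = ((x - a) + (q:ℤ) * (-(x/q))) % q := by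
      rw [show x % (q:ℤ) = x - q*(x/q) from Int.emod_def x q]; congr 1; ring
    rw [this, Int.add_mul_emod_self_left, Int.emod_eq_of_lt (by linarith [hx.1.1]) (by linarith [hx.1.2])]
    omega
  · intro y hy
    rw [Finset.mem_filter, Finset.mem_Ico] at hy
    have : (a + (y - a) % q) % q = (y + (q:ℤ) * (-((y-a)/q))) % q := by
      rw [show (y - a) % (q:ℤ) = (y-a) - q*((y-a)/q) from Int.emod_def _ q]; congr 1; ring
    rw [this, Int.add_mul_emod_self_left, Int.emod_eq_of_lt hy.1.1 hy.1.2]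

lemma block_count_mul (hq : 0 < q) (hper : ∀ x : ℤ, P (x + q) ↔ P x) (a : ℤ) (k : ℕ) :
    ((Finset.Ico a (a + q * k)).filter P).card = k * ((Finset.Ico (0:ℤ) q).filter P).card := by
  induction k with
  | zero => simp
  | succ k ih =>
    have hq' : (0:ℤ) < q := by exact_mod_cast hq
    have h1 : a ≤ a + (q:ℤ) * k := le_add_of_nonneg_right (by positivity)
    have h2 : a + (q:ℤ) * k ≤ a + q * (k+1) := by push_cast; nlinarith
    rw [show a + (q:ℤ) * ((k:ℕ)+1 : ℕ) = (a + q*k) + q by push_cast; ring]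
    rw [← Finset.Ico_union_Ico_eq_Ico h1 (by push_cast at h2 ⊢; linarith), Finset.filter_union,
      Finset.card_union_of_disjoint (Finset.disjoint_filter_filter (Finset.Ico_disjoint_Ico_consecutive a _ _)),
      ih, block_count P q hq hper]
    ring

end Density

section Density2

variable (P : ℤ → Prop) (q : ℕ)

lemma count_bounds (hq : 0 < q) (hper : ∀ x : ℤ, P (x + q) ↔ P x) (n : ℕ) :
    ((2*n+1)/q) * ((Finset.Ico (0:ℤ) q).filter P).card
      ≤ ((Finset.Icc (-(n:ℤ)) n).filter P).card ∧
    ((Finset.Icc (-(n:ℤ)) n).filter P).card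
      ≤ ((2*n+1)/q + 1) * ((Finset.Ico (0:ℤ) q).filter P).card := by
  set c := ((Finset.Ico (0:ℤ) q).filter P).card with hc
  set k := (2*n+1)/q with hk
  have hdm := Nat.div_add_mod (2*n+1) q
  have hml := Nat.mod_lt (2*n+1) hq
  have hIcc : Finset.Icc (-(n:ℤ)) n = Finset.Ico (-(n:ℤ)) (n+1) := by
    ext x; simp only [Finset.mem_Icc, Finset.mem_Ico]; omega
  constructor
  · rw [← block_count_mul P q hq hper (-(n:ℤ)) k, hIcc]
    apply Finset.card_le_card
    apply Finset.filter_subset_filter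
    apply Finset.Ico_subset_Ico le_rfl
    have : (q:ℤ) * k ≤ 2*n+1 := by exact_mod_cast Nat.le.intro hdm
    linarith
  · rw [← block_count_mul P q hq hper (-(n:ℤ)) (k+1), hIcc]
    apply Finset.card_le_card
    apply Finset.filter_subset_filter
    apply Finset.Ico_subset_Ico le_rfl
    have h2 : 2*n+1 < q * (k+1) := by
      rw [← hdm, Nat.mul_succ]
      exact Nat.add_lt_add_left hml _
    have h2' : (2*(n:ℤ)+1) < (q:ℤ) * ((k:ℤ)+1) := by exact_mod_cast h2
    push_cast
    linarith

lemma density_tendsto (hq : 0 < q) (hper : ∀ x : ℤ, P (x + q) ↔ P x) :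
    Tendsto (cnt {x : ℤ | P x}) atTop
      (nhds ((((Finset.Ico (0:ℤ) q).filter P).card : ℝ) / q)) := by
  set c := ((Finset.Ico (0:ℤ) q).filter P).card with hc
  have hcnt : ∀ n : ℕ, cnt {x : ℤ | P x} n
      = (((Finset.Icc (-(n:ℤ)) n).filter P).card : ℝ) / (2*n+1) := by
    intro n
    rfl
  have hq' : (0:ℝ) < q := by exact_mod_cast hq
  have hd : ∀ n : ℕ, (0:ℝ) < 2*n+1 := fun n => by positivity
  have hzero : Tendsto (fun n : ℕ => (c:ℝ) / (2*n+1)) atTop (nhds 0) := by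
    have h1 : Tendsto (fun n : ℕ => (2*(n:ℝ)+1)) atTop atTop := by
      apply tendsto_atTop_mono (fun n : ℕ => by linarith [Nat.cast_nonneg (α := ℝ) n] :
        ∀ n : ℕ, (n:ℝ) ≤ 2*n+1)
      exact tendsto_natCast_atTop_atTop
    have := h1.inv_tendsto_atTop.const_mul (c:ℝ)
    simpa [div_eq_mul_inv] using this
  have hlo : Tendsto (fun n : ℕ => (c:ℝ)/q - (c:ℝ)/(2*n+1)) atTop (nhds ((c:ℝ)/q)) := by
    simpa using (tendsto_const_nhds (x := (c:ℝ)/q) (f := atTop)).sub hzero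
  have hhi : Tendsto (fun n : ℕ => (c:ℝ)/q + (c:ℝ)/(2*n+1)) atTop (nhds ((c:ℝ)/q)) := by
    simpa using (tendsto_const_nhds (x := (c:ℝ)/q) (f := atTop)).add hzero
  apply tendsto_of_tendsto_of_tendsto_of_le_of_le hlo hhi
  · intro n
    dsimp only
    rw [hcnt n]
    obtain ⟨h1, _⟩ := count_bounds P q hq hper n
    set k := (2*n+1)/q with hk
    have hkq : (q:ℝ) * k ≤ 2*n+1 := by exact_mod_cast Nat.le.intro (Nat.div_add_mod (2*n+1) q)
    have hkq2 : (2*(n:ℝ)+1) ≤ q * k + q := by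
      have hdm := Nat.div_add_mod (2*n+1) q
      have hml := Nat.mod_lt (2*n+1) hq
      have h2 : 2*n+1 < q * (k+1) := by
        rw [← hdm, Nat.mul_succ]; exact Nat.add_lt_add_left hml _
      have : (2*n+1 : ℝ) < q*(k+1) := by exact_mod_cast h2
      push_cast at this
      nlinarith
    have h1' : (k:ℝ) * c ≤ ((Finset.Icc (-(n:ℤ)) n).filter P).card := by exact_mod_cast h1
    have hc1 : (c:ℝ) * (2*n+1) ≤ c * ((q:ℝ)*k + q) := by
      apply mul_le_mul_of_nonneg_left hkq2 (Nat.cast_nonneg c)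
    have e1 : (c:ℝ)/q - c/(2*n+1) ≤ (k:ℝ)*c/(2*n+1) := by
      rw [sub_le_iff_le_add, ← add_div, div_le_div_iff₀ hq' (hd n)]
      nlinarith [hc1]
    have e2 : (k:ℝ)*c/(2*n+1) ≤ (((Finset.Icc (-(n:ℤ)) n).filter P).card : ℝ)/(2*n+1) := by
      gcongr
    linarith [e1, e2]
  · intro n
    dsimp only
    rw [hcnt n]
    obtain ⟨_, h2⟩ := count_bounds P q hq hper n
    set k := (2*n+1)/q with hk
    have hkq : (q:ℝ) * k ≤ 2*n+1 := by
      have : q * k ≤ 2*n+1 := Nat.le.intro (Nat.div_add_mod (2*n+1) q)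
      exact_mod_cast this
    have h2' : (((Finset.Icc (-(n:ℤ)) n).filter P).card : ℝ) ≤ ((k:ℝ)+1) * c := by exact_mod_cast h2
    have hc2 : (c:ℝ) * ((q:ℝ)*k) ≤ c * (2*n+1) := by
      apply mul_le_mul_of_nonneg_left hkq (Nat.cast_nonneg c)
    have e1 : (((Finset.Icc (-(n:ℤ)) n).filter P).card : ℝ)/(2*n+1) ≤ ((k:ℝ)+1)*c/(2*n+1) := by
      gcongr
    have e2 : ((k:ℝ)+1)*c/(2*n+1) ≤ (c:ℝ)/q + c/(2*n+1) := by
      rw [div_add_div _ _ hq'.ne' (hd n).ne', div_le_div_iff₀ (hd n) (by positivity)]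
      nlinarith [mul_le_mul_of_nonneg_right hc2 (le_of_lt (hd n))]
    linarith [e1, e2]

end Density2

section Counting

lemma one_per_block (d : ℤ) (hd : 0 < d) (a b : ℤ) :
    ((Finset.Ico b (b+d)).filter (fun x => d ∣ x - a)).card = 1 := by
  rw [Finset.card_eq_one]
  refine ⟨b + (a - b) % d, ?_⟩
  have h0 : 0 ≤ (a - b) % d := Int.emod_nonneg _ hd.ne'
  have h1 : (a - b) % d < d := Int.emod_lt_of_pos _ hd
  have hdvd : d ∣ (b + (a - b) % d) - a := by
    have : (b + (a - b) % d) - a = -(d * ((a-b)/d)) := by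
      rw [Int.emod_def]; ring
    rw [this]
    exact dvd_neg.2 (Dvd.intro _ rfl)
  ext x
  simp only [Finset.mem_filter, Finset.mem_Ico, Finset.mem_singleton]
  constructor
  · rintro ⟨⟨hx1, hx2⟩, hx3⟩
    have hxy : d ∣ x - (b + (a - b) % d) := by
      have : x - (b + (a - b) % d) = (x - a) - ((b + (a - b) % d) - a) := by ring
      rw [this]
      exact dvd_sub hx3 hdvd
    have : x - (b + (a - b) % d) = 0 := by
      apply Int.eq_zero_of_abs_lt_dvd hxy
      rw [abs_lt]
      constructor <;> linarith
    linarith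
  · rintro rfl
    exact ⟨⟨by linarith, by linarith⟩, hdvd⟩

lemma fiber_count (d : ℕ) (hd : 0 < d) (a : ℤ) (k : ℕ) :
    ((Finset.Ico (0:ℤ) (d*k)).filter (fun x => (d:ℤ) ∣ x - a)).card = k := by
  have hd' : (0:ℤ) < d := by exact_mod_cast hd
  have hper : ∀ x : ℤ, (fun x => (d:ℤ) ∣ x - a) (x + d) ↔ (fun x => (d:ℤ) ∣ x - a) x := by
    intro x
    simp only
    constructor
    · intro h; have : x - a = (x + d - a) - d := by ring
      rw [this]; exact dvd_sub h dvd_rfl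
    · intro h; have : x + d - a = (x - a) + d := by ring
      rw [this]; exact dvd_add h dvd_rfl
  have hbcm := block_count_mul (fun x => (d:ℤ) ∣ x - a) d hd hper 0 k
  rw [zero_add] at hbcm
  have h1 : ((Finset.Ico (0:ℤ) d).filter (fun x => (d:ℤ) ∣ x - a)).card = 1 := by
    have := one_per_block (d:ℤ) hd' a 0
    rwa [zero_add] at this
  have hbase : k * ((Finset.Ico (0:ℤ) d).filter (fun x : ℤ => (d:ℤ) ∣ x - a)).card = k := by
    rw [h1, mul_one]
  conv_rhs => rw [← hbase]
  convert hbcm using 3 <;> exact (Finset.filter_congr_decidable _ _ _).symm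

end Counting

section Key

lemma key_card_le {ι : Type*} (p : ℕ) (hp : 1 < p) (E : ℕ) (e : ι → ℕ) (g : ι → ℤ) (m : ℤ) :
    ∀ (N : ℕ) (I : Finset ι), I.card ≤ N → (∀ i ∈ I, e i ≤ E) →
    ((Finset.Ico (0:ℤ) ((p^E : ℕ) : ℤ)).filter
        (fun x => ∃ i ∈ I, ((p^(e i) : ℕ) : ℤ) ∣ x - m * g i)).card
    ≤ ((Finset.Ico (0:ℤ) ((p^E : ℕ) : ℤ)).filter
        (fun x => ∃ i ∈ I, ((p^(e i) : ℕ) : ℤ) ∣ x - g i)).card := by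
  intro N
  induction N with
  | zero =>
    intro I hI _
    have hIe : I = ∅ := Finset.card_eq_zero.mp (Nat.le_zero.mp hI)
    subst hIe
    simp
  | succ N ih =>
    intro I hI hE
    rcases I.eq_empty_or_nonempty with rfl | hne
    · simp
    obtain ⟨i0, hi0, hmin⟩ := Finset.exists_min_image I e hne
    set J := I.filter (fun j => ((p^(e i0):ℕ):ℤ) ∣ g j - g i0) with hJ
    have hi0J : i0 ∈ J := Finset.mem_filter.2 ⟨hi0, by simp⟩
    have hJI : J ⊆ I := Finset.filter_subset _ _
    have hcard : (I \ J).card ≤ N := by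
      have h1 : 0 < J.card := Finset.card_pos.2 ⟨i0, hi0J⟩
      have h2 : (I \ J).card = I.card - J.card := Finset.card_sdiff_of_subset hJI
      have h3 : J.card ≤ I.card := Finset.card_le_card hJI
      omega
    have hEsub : ∀ i ∈ I \ J, e i ≤ E := fun i hi => hE i (Finset.mem_sdiff.mp hi).1
    have hdd : ∀ j ∈ I, ((p^(e i0):ℕ):ℤ) ∣ ((p^(e j):ℕ):ℤ) := by
      intro j hj
      exact_mod_cast Int.natCast_dvd_natCast.2 (pow_dvd_pow p (hmin j hj))
    have claim_a : ∀ j ∈ J, ∀ x : ℤ, ((p^(e j):ℕ):ℤ) ∣ x - g j →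
        ((p^(e i0):ℕ):ℤ) ∣ x - g i0 := by
      intro j hj x hx
      have h1 : ((p^(e i0):ℕ):ℤ) ∣ x - g j := (hdd j (hJI hj)).trans hx
      have h2 : ((p^(e i0):ℕ):ℤ) ∣ g j - g i0 := (Finset.mem_filter.mp hj).2
      have : x - g i0 = (x - g j) + (g j - g i0) := by ring
      rw [this]; exact dvd_add h1 h2
    have claim_a' : ∀ j ∈ J, ∀ x : ℤ, ((p^(e j):ℕ):ℤ) ∣ x - m * g j →
        ((p^(e i0):ℕ):ℤ) ∣ x - m * g i0 := by
      intro j hj x hx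
      have h1 : ((p^(e i0):ℕ):ℤ) ∣ x - m * g j := (hdd j (hJI hj)).trans hx
      have h2 : ((p^(e i0):ℕ):ℤ) ∣ m * (g j - g i0) :=
        Dvd.dvd.mul_left (Finset.mem_filter.mp hj).2 m
      have : x - m * g i0 = (x - m * g j) + m * (g j - g i0) := by ring
      rw [this]; exact dvd_add h1 h2
    have claim_b : ∀ j ∈ I \ J, ∀ x : ℤ, ((p^(e j):ℕ):ℤ) ∣ x - g j →
        ¬ ((p^(e i0):ℕ):ℤ) ∣ x - g i0 := by
      intro j hj x hxj hx0
      rcases Finset.mem_sdiff.mp hj with ⟨hjI, hjJ⟩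
      apply hjJ
      rw [hJ, Finset.mem_filter]
      refine ⟨hjI, ?_⟩
      have h1 : ((p^(e i0):ℕ):ℤ) ∣ x - g j := (hdd j hjI).trans hxj
      have : g j - g i0 = (x - g i0) - (x - g j) := by ring
      rw [this]; exact dvd_sub hx0 h1
    -- splitting
    set S := Finset.Ico (0:ℤ) ((p^E : ℕ) : ℤ) with hS
    have hsplit : S.filter (fun x => ∃ i ∈ I, ((p^(e i):ℕ):ℤ) ∣ x - g i)
        = S.filter (fun x => ((p^(e i0):ℕ):ℤ) ∣ x - g i0)
          ∪ S.filter (fun x => ∃ i ∈ I \ J, ((p^(e i):ℕ):ℤ) ∣ x - g i) := by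
      ext x
      simp only [Finset.mem_filter, Finset.mem_union]
      constructor
      · rintro ⟨hxS, i, hiI, hdvd⟩
        by_cases hiJ : i ∈ J
        · exact Or.inl ⟨hxS, claim_a i hiJ x hdvd⟩
        · exact Or.inr ⟨hxS, i, Finset.mem_sdiff.2 ⟨hiI, hiJ⟩, hdvd⟩
      · rintro (⟨hxS, hdvd⟩ | ⟨hxS, i, hiIJ, hdvd⟩)
        · exact ⟨hxS, i0, hi0, hdvd⟩
        · exact ⟨hxS, i, (Finset.mem_sdiff.mp hiIJ).1, hdvd⟩
    have hdisj : Disjoint (S.filter (fun x => ((p^(e i0):ℕ):ℤ) ∣ x - g i0))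
        (S.filter (fun x => ∃ i ∈ I \ J, ((p^(e i):ℕ):ℤ) ∣ x - g i)) := by
      rw [Finset.disjoint_left]
      rintro x hx1 hx2
      rcases Finset.mem_filter.mp hx1 with ⟨_, hd0⟩
      rcases Finset.mem_filter.mp hx2 with ⟨_, j, hj, hdj⟩
      exact claim_b j hj x hdj hd0
    have hsub' : S.filter (fun x => ∃ i ∈ I, ((p^(e i):ℕ):ℤ) ∣ x - m * g i)
        ⊆ S.filter (fun x => ((p^(e i0):ℕ):ℤ) ∣ x - m * g i0)
          ∪ S.filter (fun x => ∃ i ∈ I \ J, ((p^(e i):ℕ):ℤ) ∣ x - m * g i) := by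
      intro x hx
      rcases Finset.mem_filter.mp hx with ⟨hxS, i, hiI, hdvd⟩
      rw [Finset.mem_union]
      by_cases hiJ : i ∈ J
      · exact Or.inl (Finset.mem_filter.2 ⟨hxS, claim_a' i hiJ x hdvd⟩)
      · exact Or.inr (Finset.mem_filter.2 ⟨hxS, i, Finset.mem_sdiff.2 ⟨hiI, hiJ⟩, hdvd⟩)
    -- fiber counts
    have hfib : ∀ a : ℤ, (S.filter (fun x => ((p^(e i0):ℕ):ℤ) ∣ x - a)).card
        = p^(E - e i0) := by
      intro a
      have hcast : ((p^E : ℕ) : ℤ) = ((p^(e i0) : ℕ) : ℤ) * ((p^(E - e i0) : ℕ) : ℤ) := by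
        push_cast
        rw [← pow_add]
        congr 1
        have := hE i0 hi0
        omega
      rw [hS, hcast]
      exact fiber_count (p^(e i0)) (pow_pos (by omega) _) a (p^(E - e i0))
    calc (S.filter (fun x => ∃ i ∈ I, ((p^(e i):ℕ):ℤ) ∣ x - m * g i)).card
        ≤ (S.filter (fun x => ((p^(e i0):ℕ):ℤ) ∣ x - m * g i0)
          ∪ S.filter (fun x => ∃ i ∈ I \ J, ((p^(e i):ℕ):ℤ) ∣ x - m * g i)).card :=
          Finset.card_le_card hsub'
      _ ≤ (S.filter (fun x => ((p^(e i0):ℕ):ℤ) ∣ x - m * g i0)).card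
          + (S.filter (fun x => ∃ i ∈ I \ J, ((p^(e i):ℕ):ℤ) ∣ x - m * g i)).card :=
          Finset.card_union_le _ _
      _ ≤ (S.filter (fun x => ((p^(e i0):ℕ):ℤ) ∣ x - g i0)).card
          + (S.filter (fun x => ∃ i ∈ I \ J, ((p^(e i):ℕ):ℤ) ∣ x - g i)).card := by
          rw [hfib (m * g i0), hfib (g i0)]
          exact Nat.add_le_add_left (ih (I \ J) hcard hEsub) _
      _ = (S.filter (fun x => ∃ i ∈ I, ((p^(e i):ℕ):ℤ) ∣ x - g i)).card := by
          rw [hsplit, Finset.card_union_of_disjoint hdisj]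

end Key

theorem rogers_prime_power {ι : Type*} (I : Finset ι) (p : ℕ) (hp : p.Prime)
    (e : ι → ℕ) (g : ι → ℤ) (m : ℤ) :
    ∃ L L' : ℝ,
      Filter.Tendsto (cnt {n : ℤ | ∃ i ∈ I, ((p ^ (e i) : ℕ) : ℤ) ∣ (n - g i)})
        Filter.atTop (nhds L) ∧
      Filter.Tendsto (cnt {n : ℤ | ∃ i ∈ I, ((p ^ (e i) : ℕ) : ℤ) ∣ (n - m * g i)})
        Filter.atTop (nhds L') ∧
      L' ≤ L := by
  set E := I.sup e with hEdef
  set q := p ^ E with hqdef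
  have hq : 0 < q := pow_pos hp.pos _
  have hdvdq : ∀ i ∈ I, ((p^(e i):ℕ):ℤ) ∣ (q:ℤ) :=
    fun i hi => Int.natCast_dvd_natCast.2 (pow_dvd_pow p (Finset.le_sup hi))
  have hper1 : ∀ x : ℤ, (∃ i ∈ I, ((p^(e i):ℕ):ℤ) ∣ (x + q) - g i)
      ↔ (∃ i ∈ I, ((p^(e i):ℕ):ℤ) ∣ x - g i) := by
    intro x
    constructor
    · rintro ⟨i, hi, hd⟩
      refine ⟨i, hi, ?_⟩
      have : x - g i = (x + q - g i) - q := by ring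
      rw [this]; exact dvd_sub hd (hdvdq i hi)
    · rintro ⟨i, hi, hd⟩
      refine ⟨i, hi, ?_⟩
      have : x + q - g i = (x - g i) + q := by ring
      rw [this]; exact dvd_add hd (hdvdq i hi)
  have hper2 : ∀ x : ℤ, (∃ i ∈ I, ((p^(e i):ℕ):ℤ) ∣ (x + q) - m * g i)
      ↔ (∃ i ∈ I, ((p^(e i):ℕ):ℤ) ∣ x - m * g i) := by
    intro x
    constructor
    · rintro ⟨i, hi, hd⟩
      refine ⟨i, hi, ?_⟩
      have : x - m * g i = (x + q - m * g i) - q := by ring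
      rw [this]; exact dvd_sub hd (hdvdq i hi)
    · rintro ⟨i, hi, hd⟩
      refine ⟨i, hi, ?_⟩
      have : x + q - m * g i = (x - m * g i) + q := by ring
      rw [this]; exact dvd_add hd (hdvdq i hi)
  have hT1 := density_tendsto (fun x => ∃ i ∈ I, ((p^(e i):ℕ):ℤ) ∣ x - g i) q hq hper1
  have hT2 := density_tendsto (fun x => ∃ i ∈ I, ((p^(e i):ℕ):ℤ) ∣ x - m * g i) q hq hper2
  refine ⟨_, _, hT1, hT2, ?_⟩
  have hkey := key_card_le p hp.one_lt E e g m I.card I le_rfl (fun i hi => Finset.le_sup hi)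
  have hq' : (0:ℝ) < q := by exact_mod_cast hq
  rw [div_le_div_iff_of_pos_right hq', Nat.cast_le]
  convert hkey using 2 <;> exact Finset.filter_congr_decidable _ _ _
end

section
/- Let I be a finite index set, (b_i)_{i∈I} natural numbers, (g_i)_{i∈I} integers, and m ∈ ℤ. Then d(⋃_{i∈I}(g_i + b_iℤ)) ≥ d(⋃_{i∈I}(m·g_i + b_iℤ)), where d denotes natural density. -/
open Filter

open scoped Classical in
lemma interval_count_const (E : Set ℤ) (ℓ : ℕ) (hℓ : 0 < ℓ)
    (hper : ∀ x : ℤ, (x + ℓ) ∈ E ↔ x ∈ E) (a : ℤ) :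
    ((Finset.Ico a (a + ℓ)).filter (fun x => x ∈ E)).card
      = ((Finset.Ico (0:ℤ) (ℓ:ℤ)).filter (fun x => x ∈ E)).card := by
  have hℓz : (0:ℤ) < (ℓ:ℤ) := by exact_mod_cast hℓ
  have hper' : ∀ (x : ℤ) (t : ℤ), (x + ℓ * t) ∈ E ↔ x ∈ E := by
    intro x t
    induction t using Int.induction_on with
    | zero => simp
    | succ n ihn =>
      have e : x + (ℓ:ℤ) * ((n:ℤ) + 1) = (x + ℓ * n) + ℓ := by ring
      rw [e, hper]
      exact ihn
    | pred n ihn =>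
      have e : x + (ℓ:ℤ) * (-(n:ℤ)) = (x + ℓ * (-(n:ℤ) - 1)) + ℓ := by ring
      rw [e, hper] at ihn
      exact ihn
  have hcong : ∀ x y : ℤ, (ℓ:ℤ) ∣ x - y → (x ∈ E ↔ y ∈ E) := by
    intro x y ⟨t, ht⟩
    have : x = y + ℓ * t := by omega
    rw [this]
    exact hper' y t
  apply Finset.card_bij (i := fun x _ => x % (ℓ:ℤ))
  · intro x hx
    rw [Finset.mem_filter] at hx ⊢
    refine ⟨Finset.mem_Ico.mpr ⟨Int.emod_nonneg x hℓz.ne', Int.emod_lt_of_pos x hℓz⟩, ?_⟩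
    have hd : (ℓ:ℤ) ∣ x % ℓ - x := by
      rw [Int.emod_def]
      exact ⟨-(x / ℓ), by ring⟩
    exact (hcong _ x hd).mpr hx.2
  · intro x₁ h₁ x₂ h₂ he
    rw [Finset.mem_filter, Finset.mem_Ico] at h₁ h₂
    have hd : (ℓ:ℤ) ∣ x₂ - x₁ := Int.ModEq.dvd (show Int.ModEq (ℓ:ℤ) x₁ x₂ from he)
    have : x₂ - x₁ = 0 := Int.eq_zero_of_abs_lt_dvd hd (by
      rw [abs_lt]
      constructor <;> omega)
    omega
  · intro y hy
    rw [Finset.mem_filter, Finset.mem_Ico] at hy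
    obtain ⟨⟨hy0, hyℓ⟩, hyE⟩ := hy
    refine ⟨a + ((y - a) % ℓ), ?_, ?_⟩
    · have h0 := Int.emod_nonneg (y - a) hℓz.ne'
      have h1 := Int.emod_lt_of_pos (y - a) hℓz
      rw [Finset.mem_filter, Finset.mem_Ico]
      have hd : (ℓ:ℤ) ∣ (a + (y - a) % ℓ) - y := by
        rw [Int.emod_def]
        exact ⟨-((y - a) / ℓ), by ring⟩
      exact ⟨⟨by omega, by omega⟩, (hcong _ y hd).mpr hyE⟩
    · have hd : (ℓ:ℤ) ∣ (a + (y - a) % ℓ) - y := by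
        rw [Int.emod_def]
        exact ⟨-((y - a) / ℓ), by ring⟩
      have : (a + (y - a) % ℓ) % ℓ = y % ℓ := by
        obtain ⟨t, ht⟩ := hd
        have e : a + (y - a) % ℓ = y + ℓ * t := by omega
        rw [e, Int.add_mul_emod_self_left]
      rw [this, Int.emod_eq_of_lt hy0 hyℓ]

open scoped Classical in
lemma interval_count_mul (E : Set ℤ) (ℓ : ℕ) (hℓ : 0 < ℓ)
    (hper : ∀ x : ℤ, (x + ℓ) ∈ E ↔ x ∈ E) (a : ℤ) (k : ℕ) :
    ((Finset.Ico a (a + ℓ * k)).filter (fun x => x ∈ E)).card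
      = k * ((Finset.Ico (0:ℤ) (ℓ:ℤ)).filter (fun x => x ∈ E)).card := by
  induction k generalizing a with
  | zero => simp
  | succ k ihk =>
    have h1 : a ≤ a + (ℓ:ℤ) * k := by
      have : (0:ℤ) ≤ (ℓ:ℤ) * k := by positivity
      omega
    have h2 : a + (ℓ:ℤ) * k ≤ a + ℓ * (k+1 : ℕ) := by push_cast; nlinarith [hℓ]
    rw [← Finset.Ico_union_Ico_eq_Ico h1 h2, Finset.filter_union,
      Finset.card_union_of_disjoint (Finset.disjoint_filter_filter
        (Finset.Ico_disjoint_Ico_consecutive _ _ _)), ihk a]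
    have e : a + (ℓ:ℤ) * ((k:ℕ)+1 : ℕ) = (a + ℓ * k) + ℓ := by push_cast; ring
    rw [e, interval_count_const E ℓ hℓ hper (a + ℓ * k)]
    ring

open scoped Classical in
lemma cnt_bound (E : Set ℤ) (ℓ : ℕ) (hℓ : 0 < ℓ)
    (hper : ∀ x : ℤ, (x + ℓ) ∈ E ↔ x ∈ E) (n : ℕ) :
    ((2*n+1)/ℓ) * ((Finset.Ico (0:ℤ) (ℓ:ℤ)).filter (fun x => x ∈ E)).card
        ≤ ((Finset.Icc (-(n:ℤ)) n).filter (fun i => i ∈ E)).card ∧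
      ((Finset.Icc (-(n:ℤ)) n).filter (fun i => i ∈ E)).card
        ≤ ((2*n+1)/ℓ) * ((Finset.Ico (0:ℤ) (ℓ:ℤ)).filter (fun x => x ∈ E)).card + ℓ := by
  set c := ((Finset.Ico (0:ℤ) (ℓ:ℤ)).filter (fun x => x ∈ E)).card with hc
  set q := (2*n+1)/ℓ with hq
  set r := (2*n+1) % ℓ with hr
  have hdm : ℓ * q + r = 2*n+1 := Nat.div_add_mod (2*n+1) ℓ
  have hrℓ : r < ℓ := Nat.mod_lt _ hℓ
  have hdmZ : (ℓ:ℤ) * q + r = 2*(n:ℤ)+1 := by exact_mod_cast congrArg (Nat.cast : ℕ → ℤ) hdm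
  have hIcc : Finset.Icc (-(n:ℤ)) (n:ℤ) = Finset.Ico (-(n:ℤ)) ((n:ℤ)+1) := by
    ext x
    simp only [Finset.mem_Icc, Finset.mem_Ico]
    omega
  have h1 : -(n:ℤ) ≤ -(n:ℤ) + (ℓ:ℤ) * q := by
    have : (0:ℤ) ≤ (ℓ:ℤ) * q := by positivity
    omega
  have h2 : -(n:ℤ) + (ℓ:ℤ) * q ≤ (n:ℤ) + 1 := by omega
  rw [hIcc, ← Finset.Ico_union_Ico_eq_Ico h1 h2, Finset.filter_union,
    Finset.card_union_of_disjoint (Finset.disjoint_filter_filter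
      (Finset.Ico_disjoint_Ico_consecutive _ _ _))]
  have hcard1 : ((Finset.Ico (-(n:ℤ)) (-(n:ℤ) + (ℓ:ℤ) * q)).filter (fun i => i ∈ E)).card
      = q * c := interval_count_mul E ℓ hℓ hper (-(n:ℤ)) q
  have hcard2 : ((Finset.Ico (-(n:ℤ) + (ℓ:ℤ) * q) ((n:ℤ)+1)).filter (fun i => i ∈ E)).card ≤ r := by
    calc ((Finset.Ico (-(n:ℤ) + (ℓ:ℤ) * q) ((n:ℤ)+1)).filter (fun i => i ∈ E)).card
        ≤ (Finset.Ico (-(n:ℤ) + (ℓ:ℤ) * q) ((n:ℤ)+1)).card := Finset.card_filter_le _ _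
      _ = (((n:ℤ)+1) - (-(n:ℤ) + (ℓ:ℤ) * q)).toNat := Int.card_Ico _ _
      _ = r := by
          have e : ((n:ℤ)+1) - (-(n:ℤ) + (ℓ:ℤ) * q) = (r:ℤ) := by omega
          rw [e, Int.toNat_natCast]
  constructor
  · rw [hcard1]
    omega
  · rw [hcard1]
    omega

open scoped Classical in
lemma cnt_tendsto (E : Set ℤ) (ℓ : ℕ) (hℓ : 0 < ℓ)
    (hper : ∀ x : ℤ, (x + ℓ) ∈ E ↔ x ∈ E) :
    Filter.Tendsto (cnt E) Filter.atTop
      (nhds ((((Finset.Ico (0:ℤ) (ℓ:ℤ)).filter (fun x => x ∈ E)).card : ℝ) / ℓ)) := by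
  set c := ((Finset.Ico (0:ℤ) (ℓ:ℤ)).filter (fun x => x ∈ E)).card with hc
  have hlr : (0:ℝ) < (ℓ:ℝ) := by exact_mod_cast hℓ
  have habs : ∀ n : ℕ, |cnt E n - (c:ℝ)/ℓ| ≤ ((ℓ:ℝ) + c) / (2*n+1) := by
    intro n
    obtain ⟨hlo, hhi⟩ := cnt_bound E ℓ hℓ hper n
    set q := (2*n+1)/ℓ with hq
    set r := (2*n+1) % ℓ with hr
    have hdm : ℓ * q + r = 2*n+1 := Nat.div_add_mod (2*n+1) ℓ
    have hrℓ : r < ℓ := Nat.mod_lt _ hℓ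
    set A := (((Finset.Icc (-(n:ℤ)) n).filter (fun i => i ∈ E)).card : ℝ) with hA
    set Lr : ℝ := 2*(n:ℝ)+1 with hLr
    have hLr0 : (0:ℝ) < Lr := by positivity
    have hcnt : cnt E n = A / Lr := by
      rw [cnt]
    have hLreq : Lr = (ℓ:ℝ) * q + r := by
      rw [hLr]
      exact_mod_cast (congrArg (Nat.cast : ℕ → ℝ) hdm).symm
    have hloR : (q:ℝ) * c ≤ A := by rw [hA, hc]; exact_mod_cast hlo
    have hhiR : A ≤ (q:ℝ) * c + ℓ := by rw [hA, hc]; exact_mod_cast hhi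
    have hC0 : (0:ℝ) ≤ (c:ℝ) := Nat.cast_nonneg c
    have hQ0 : (0:ℝ) ≤ (q:ℝ) := Nat.cast_nonneg q
    have hR0 : (0:ℝ) ≤ (r:ℝ) := Nat.cast_nonneg r
    have hRl : (r:ℝ) ≤ (ℓ:ℝ) := by exact_mod_cast hrℓ.le
    rw [hcnt]
    have h1 : A/Lr - (c:ℝ)/ℓ = (A*ℓ - c*Lr)/(Lr*ℓ) := by
      field_simp
    rw [h1, abs_div, abs_of_pos (mul_pos hLr0 hlr)]
    have h2 : |A*(ℓ:ℝ) - c*Lr| ≤ ((ℓ:ℝ)+c)*ℓ := by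
      rw [abs_le]
      constructor
      · nlinarith [mul_le_mul_of_nonneg_right hloR hlr.le, mul_nonneg hC0 hR0,
          mul_nonneg hC0 hR0, mul_le_mul_of_nonneg_left hRl hC0]
      · nlinarith [mul_le_mul_of_nonneg_right hhiR hlr.le, mul_nonneg hC0 hR0,
          mul_nonneg (mul_nonneg hC0 hQ0) hlr.le]
    calc |A*(ℓ:ℝ) - c*Lr| / (Lr*ℓ) ≤ (((ℓ:ℝ)+c)*ℓ) / (Lr*ℓ) :=
          (div_le_div_iff_of_pos_right (by positivity)).mpr h2
      _ = ((ℓ:ℝ)+c)/Lr := mul_div_mul_right _ _ hlr.ne'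
  have hg : Filter.Tendsto (fun n : ℕ => ((ℓ:ℝ) + c) / (2*n+1)) Filter.atTop (nhds 0) := by
    apply Filter.Tendsto.div_atTop tendsto_const_nhds
    apply Filter.tendsto_atTop_add_const_right
    exact (tendsto_natCast_atTop_atTop).const_mul_atTop two_pos
  have hsq : Filter.Tendsto (fun n : ℕ => cnt E n - (c:ℝ)/ℓ) Filter.atTop (nhds 0) :=
    squeeze_zero_norm (fun n => habs n) hg
  have := hsq.add_const ((c:ℝ)/ℓ)
  simpa using this

-- ===== arithmetic core =====

lemma laminar_card_le {α ι : Type*} [DecidableEq α] (I : Finset ι) (C C' : ι → Finset α)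
    (htri : ∀ i ∈ I, ∀ j ∈ I,
      (C i ⊆ C j ∧ C' i ⊆ C' j) ∨ (C j ⊆ C i ∧ C' j ⊆ C' i) ∨ Disjoint (C i) (C j))
    (hcard : ∀ i ∈ I, (C' i).card ≤ (C i).card) :
    (I.biUnion C').card ≤ (I.biUnion C).card := by
  classical
  induction I using Finset.strongInduction with
  | _ I ih =>
    rcases I.eq_empty_or_nonempty with rfl | hne
    · simp
    · set N : ℕ := (I.sum fun i => (C' i).card) + 1 with hN
      obtain ⟨i₀, hi₀, hmax⟩ := I.exists_max_image (fun i => (C i).card * N + (C' i).card) hne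
      have hltN : ∀ j ∈ I, (C' j).card < N := by
        intro j hj
        have h : (C' j).card ≤ I.sum fun i => (C' i).card :=
          Finset.single_le_sum (f := fun i => (C' i).card) (fun i _ => Nat.zero_le _) hj
        omega
      -- key: any j in I either has (C j ⊆ C i₀ ∧ C' j ⊆ C' i₀), or is disjoint from C i₀
      have hkey : ∀ j ∈ I, (C j ⊆ C i₀ ∧ C' j ⊆ C' i₀) ∨ Disjoint (C i₀) (C j) := by
        intro j hj
        rcases htri i₀ hi₀ j hj with ⟨h1, h1'⟩ | ⟨h2, h2'⟩ | h3
        · -- C i₀ ⊆ C j : maximality forces equality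
          have hcle : (C j).card ≤ (C i₀).card := by
            have hfj := hmax j hj
            have h1c := Finset.card_le_card h1
            have := hltN i₀ hi₀
            by_contra hc
            push_neg at hc
            have : ((C i₀).card + 1) * N ≤ (C j).card * N := by
              apply Nat.mul_le_mul_right; omega
            nlinarith
          have hCeq : C i₀ = C j := Finset.eq_of_subset_of_card_le h1 hcle
          have hc'le : (C' j).card ≤ (C' i₀).card := by
            have hfj := hmax j hj
            rw [hCeq] at hfj; omega
          have hC'eq : C' i₀ = C' j := Finset.eq_of_subset_of_card_le h1' hc'le
          exact Or.inl ⟨hCeq.ge, hC'eq.ge⟩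
        · exact Or.inl ⟨h2, h2'⟩
        · exact Or.inr h3
      set K : Finset ι := I.filter (fun j => ¬ (C j ⊆ C i₀ ∧ C' j ⊆ C' i₀)) with hK
      have hKss : K ⊂ I := by
        rw [Finset.ssubset_iff_of_subset (Finset.filter_subset _ _)]
        exact ⟨i₀, hi₀, by simp [hK]⟩
      have hKdisj : Disjoint (C i₀) (K.biUnion C) := by
        rw [Finset.disjoint_biUnion_right]
        intro j hj
        rw [hK, Finset.mem_filter] at hj
        rcases hkey j hj.1 with h | h
        · exact absurd h hj.2
        · exact h
      have hsub' : I.biUnion C' ⊆ C' i₀ ∪ K.biUnion C' := by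
        intro x hx
        rw [Finset.mem_biUnion] at hx
        obtain ⟨j, hj, hxj⟩ := hx
        by_cases hjc : C j ⊆ C i₀ ∧ C' j ⊆ C' i₀
        · exact Finset.mem_union_left _ (hjc.2 hxj)
        · exact Finset.mem_union_right _ (Finset.mem_biUnion.2 ⟨j, by rw [hK, Finset.mem_filter]; exact ⟨hj, hjc⟩, hxj⟩)
      have hsub : C i₀ ∪ K.biUnion C ⊆ I.biUnion C := by
        apply Finset.union_subset
        · exact Finset.subset_biUnion_of_mem C hi₀
        · exact Finset.biUnion_subset_biUnion_of_subset_left C hKss.subset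
      have hIH : (K.biUnion C').card ≤ (K.biUnion C).card :=
        ih K hKss (fun i hi j hj => htri i (hKss.subset hi) j (hKss.subset hj))
          (fun i hi => hcard i (hKss.subset hi))
      calc (I.biUnion C').card ≤ (C' i₀ ∪ K.biUnion C').card := Finset.card_le_card hsub'
        _ ≤ (C' i₀).card + (K.biUnion C').card := Finset.card_union_le _ _
        _ ≤ (C i₀).card + (K.biUnion C).card := Nat.add_le_add (hcard i₀ hi₀) hIH
        _ = (C i₀ ∪ K.biUnion C).card := (Finset.card_union_of_disjoint hKdisj).symm
        _ ≤ (I.biUnion C).card := Finset.card_le_card hsub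

lemma dvd_iff_mod_eq (d : ℕ) (hd : 0 < d) (c : ℤ) (y : ℕ) :
    (d:ℤ) ∣ (y:ℤ) - c ↔ y % d = (c % d).toNat := by
  have hdz : (d:ℤ) ≠ 0 := by exact_mod_cast hd.ne'
  rw [← Int.modEq_iff_dvd, Int.ModEq, ← Int.natCast_mod]
  constructor
  · intro h
    rw [h, Int.toNat_natCast]
  · intro h
    rw [h, Int.toNat_of_nonneg (Int.emod_nonneg c hdz)]

lemma count_coset (u d : ℕ) (hd : 0 < d) (hdu : d ∣ u) (c : ℤ) :
    (((Finset.range u).filter fun y : ℕ => (d:ℤ) ∣ (y:ℤ) - c).card) = u / d := by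
  classical
  set c₀ : ℕ := (c % d).toNat with hc₀
  have hc₀d : c₀ < d := by
    have := Int.emod_lt_of_pos c (b := d) (by exact_mod_cast hd)
    have h0 := Int.emod_nonneg c (b := d) (by exact_mod_cast hd.ne')
    omega
  have hfe : ((Finset.range u).filter fun y : ℕ => (d:ℤ) ∣ (y:ℤ) - c)
      = (Finset.range u).filter fun y => y % d = c₀ := by
    apply Finset.filter_congr
    intro y _
    exact propext_iff.mp (propext (dvd_iff_mod_eq d hd c y))
  rw [hfe]
  rw [← Finset.card_range (u/d)]
  apply Finset.card_nbij' (i := fun y => (y - c₀)/d) (j := fun k => c₀ + d * k)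
  · intro y hy
    simp only [Finset.mem_coe, Finset.mem_filter, Finset.mem_range] at hy ⊢
    obtain ⟨hyu, hym⟩ := hy
    have h1 : d * (y / d) + y % d = y := Nat.div_add_mod y d
    have h2 : y - c₀ = d * (y / d) := by omega
    rw [h2, Nat.mul_div_cancel_left _ hd]
    exact Nat.div_lt_div_of_lt_of_dvd hdu hyu
  · intro k hk
    simp only [Finset.mem_coe, Finset.mem_range] at hk
    simp only [Finset.mem_coe, Finset.mem_filter, Finset.mem_range]
    constructor
    · have h1 : d * (k + 1) ≤ d * (u / d) := Nat.mul_le_mul_left d hk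
      have h2 : d * (u / d) = u := Nat.mul_div_cancel' hdu
      have h3 : d * (k + 1) = d * k + d := by ring
      omega
    · rw [Nat.add_mul_mod_self_left, Nat.mod_eq_of_lt hc₀d]
  · intro y hy
    simp only [Finset.mem_coe, Finset.mem_filter, Finset.mem_range] at hy
    obtain ⟨hyu, hym⟩ := hy
    have h1 : d * (y / d) + y % d = y := Nat.div_add_mod y d
    have h2 : y - c₀ = d * (y / d) := by omega
    dsimp only
    rw [h2, Nat.mul_div_cancel_left _ hd]
    omega
  · intro k hk
    simp only [Nat.add_sub_cancel_left, Nat.mul_div_cancel_left _ hd]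

-- d ∣ u: divisibility by d only depends on x mod u
lemma dvd_sub_mod_iff (d u : ℕ) (hdu : d ∣ u) (x : ℕ) (c : ℤ) :
    (d:ℤ) ∣ (x:ℤ) - c ↔ (d:ℤ) ∣ ((x % u : ℕ):ℤ) - c := by
  have hN : (x:ℕ) = x % u + u * (x / u) := (Nat.mod_add_div x u).symm
  have hmidu : (u:ℤ) ∣ (x:ℤ) - ((x % u : ℕ):ℤ) := by
    refine ⟨((x / u : ℕ) : ℤ), ?_⟩
    conv_lhs => rw [show (x:ℤ) = ((x % u + u * (x / u) : ℕ) : ℤ) by rw [← hN]]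
    push_cast; ring
  have hmid : (d:ℤ) ∣ (x:ℤ) - ((x % u : ℕ):ℤ) :=
    dvd_trans (Int.natCast_dvd_natCast.mpr hdu) hmidu
  constructor
  · intro h
    have h2 := dvd_sub h hmid
    have e : ((x:ℤ) - c) - ((x:ℤ) - ((x % u : ℕ):ℤ)) = ((x % u : ℕ):ℤ) - c := by ring
    rwa [e] at h2
  · intro h
    have h2 := dvd_add hmid h
    have e : ((x:ℤ) - ((x % u : ℕ):ℤ)) + (((x % u : ℕ):ℤ) - c) = (x:ℤ) - c := by ring
    rwa [e] at h2

lemma crt_split {ι : Type*} (I : Finset ι) (b : ι → ℕ) (g : ι → ℤ)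
    (u v : ℕ) (hu : 0 < u) (hv : 0 < v) (huv : Nat.Coprime u v)
    (hb : ∀ i ∈ I, 0 < b i) (hbd : ∀ i ∈ I, b i ∣ u * v) :
    (((Finset.range (u*v)).filter fun x : ℕ => ∃ i ∈ I, (b i:ℤ) ∣ (x:ℤ) - g i).card)
      = ∑ z ∈ Finset.range v, (((Finset.range u).filter fun y : ℕ => ∃ i ∈ I,
          ((Nat.gcd (b i) u : ℤ) ∣ (y:ℤ) - g i) ∧ ((Nat.gcd (b i) v : ℤ) ∣ (z:ℤ) - g i)).card) := by
  classical
  have hsplit : ∀ i ∈ I, ∀ t : ℤ,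
      ((b i:ℤ) ∣ t ↔ (Nat.gcd (b i) u : ℤ) ∣ t ∧ (Nat.gcd (b i) v : ℤ) ∣ t) := by
    intro i hi t
    have hgm : Nat.gcd (b i) u * Nat.gcd (b i) v = b i := by
      rw [← Nat.Coprime.gcd_mul (b i) huv]
      exact Nat.gcd_eq_left (hbd i hi)
    have hcop : Nat.Coprime (Nat.gcd (b i) u) (Nat.gcd (b i) v) :=
      Nat.Coprime.coprime_dvd_left (Nat.gcd_dvd_right _ u)
        (huv.coprime_dvd_right (Nat.gcd_dvd_right _ v))
    have hcopZ : IsCoprime ((Nat.gcd (b i) u : ℕ):ℤ) ((Nat.gcd (b i) v : ℕ):ℤ) :=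
      Nat.isCoprime_iff_coprime.mpr hcop
    constructor
    · intro h
      constructor
      · exact dvd_trans (Int.natCast_dvd_natCast.mpr (Nat.gcd_dvd_left _ _)) h
      · exact dvd_trans (Int.natCast_dvd_natCast.mpr (Nat.gcd_dvd_left _ _)) h
    · rintro ⟨h1, h2⟩
      have := hcopZ.mul_dvd h1 h2
      rwa [show ((Nat.gcd (b i) u : ℕ):ℤ) * ((Nat.gcd (b i) v : ℕ):ℤ) = ((b i : ℕ):ℤ) by
        exact_mod_cast congrArg (Nat.cast : ℕ → ℤ) hgm] at this
  rw [← Finset.card_sigma]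
  apply Finset.card_bij' (i := fun x _ => (⟨x % v, x % u⟩ : Σ _ : ℕ, ℕ))
      (j := fun p _ => (Nat.chineseRemainder huv p.2 p.1 : ℕ))
  · intro x hx
    rw [Finset.mem_filter, Finset.mem_range] at hx
    obtain ⟨hxlt, i, hi, hdvd⟩ := hx
    rw [Finset.mem_sigma]
    refine ⟨Finset.mem_range.mpr (Nat.mod_lt _ hv), ?_⟩
    rw [Finset.mem_filter, Finset.mem_range]
    obtain ⟨h1, h2⟩ := (hsplit i hi _).mp hdvd
    exact ⟨Nat.mod_lt _ hu, i, hi,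
      (dvd_sub_mod_iff _ u (Nat.gcd_dvd_right _ _) x (g i)).mp h1,
      (dvd_sub_mod_iff _ v (Nat.gcd_dvd_right _ _) x (g i)).mp h2⟩
  · intro p hp
    rw [Finset.mem_sigma, Finset.mem_range, Finset.mem_filter, Finset.mem_range] at hp
    obtain ⟨hz, hy, i, hi, h1, h2⟩ := hp
    have hwu : (Nat.chineseRemainder huv p.2 p.1 : ℕ) ≡ p.2 [MOD u] :=
      (Nat.chineseRemainder huv p.2 p.1).2.1
    have hwv : (Nat.chineseRemainder huv p.2 p.1 : ℕ) ≡ p.1 [MOD v] :=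
      (Nat.chineseRemainder huv p.2 p.1).2.2
    rw [Finset.mem_filter, Finset.mem_range]
    refine ⟨Nat.chineseRemainder_lt_mul huv p.2 p.1 hu.ne' hv.ne', i, hi, ?_⟩
    refine (hsplit i hi _).mpr ⟨?_, ?_⟩
    · have hd : ((Nat.gcd (b i) u : ℕ):ℤ) ∣ ((p.2:ℕ):ℤ) - ((Nat.chineseRemainder huv p.2 p.1 : ℕ):ℤ) :=
        dvd_trans (Int.natCast_dvd_natCast.mpr (Nat.gcd_dvd_right _ _)) hwu.dvd
      have h3 := dvd_sub h1 hd
      have e : (((p.2:ℕ):ℤ) - g i) - (((p.2:ℕ):ℤ) - ((Nat.chineseRemainder huv p.2 p.1 : ℕ):ℤ))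
          = ((Nat.chineseRemainder huv p.2 p.1 : ℕ):ℤ) - g i := by ring
      rwa [e] at h3
    · have hd : ((Nat.gcd (b i) v : ℕ):ℤ) ∣ ((p.1:ℕ):ℤ) - ((Nat.chineseRemainder huv p.2 p.1 : ℕ):ℤ) :=
        dvd_trans (Int.natCast_dvd_natCast.mpr (Nat.gcd_dvd_right _ _)) hwv.dvd
      have h3 := dvd_sub h2 hd
      have e : (((p.1:ℕ):ℤ) - g i) - (((p.1:ℕ):ℤ) - ((Nat.chineseRemainder huv p.2 p.1 : ℕ):ℤ))
          = ((Nat.chineseRemainder huv p.2 p.1 : ℕ):ℤ) - g i := by ring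
      rwa [e] at h3
  · intro x hx
    rw [Finset.mem_filter, Finset.mem_range] at hx
    have hwu : (Nat.chineseRemainder huv (x % u) (x % v) : ℕ) ≡ x [MOD u] :=
      (Nat.chineseRemainder huv (x % u) (x % v)).2.1.trans (Nat.mod_modEq x u)
    have hwv : (Nat.chineseRemainder huv (x % u) (x % v) : ℕ) ≡ x [MOD v] :=
      (Nat.chineseRemainder huv (x % u) (x % v)).2.2.trans (Nat.mod_modEq x v)
    exact Nat.ModEq.eq_of_lt_of_lt
      ((Nat.modEq_and_modEq_iff_modEq_mul huv).mp ⟨hwu, hwv⟩)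
      (Nat.chineseRemainder_lt_mul huv _ _ hu.ne' hv.ne') hx.1
  · intro p hp
    rw [Finset.mem_sigma, Finset.mem_range, Finset.mem_filter, Finset.mem_range] at hp
    obtain ⟨hz, hy, -⟩ := hp
    have hwu : (Nat.chineseRemainder huv p.2 p.1 : ℕ) % u = p.2 := by
      have := (Nat.chineseRemainder huv p.2 p.1).2.1
      rwa [Nat.ModEq, Nat.mod_eq_of_lt hy] at this
    have hwv : (Nat.chineseRemainder huv p.2 p.1 : ℕ) % v = p.1 := by
      have := (Nat.chineseRemainder huv p.2 p.1).2.2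
      rwa [Nat.ModEq, Nat.mod_eq_of_lt hz] at this
    obtain ⟨z, y⟩ := p
    simp only at hwu hwv ⊢
    rw [hwu, hwv]

lemma filter_exists_biUnion {ι : Type*} [DecidableEq ι] (J : Finset ι) (u : ℕ)
    (P : ι → ℕ → Prop) [∀ i y, Decidable (P i y)] :
    (Finset.range u).filter (fun y => ∃ i ∈ J, P i y)
      = J.biUnion (fun i => (Finset.range u).filter (fun y => P i y)) := by
  ext y
  simp only [Finset.mem_filter, Finset.mem_biUnion, Finset.mem_range]
  tauto

lemma prime_step {ι : Type*} (I : Finset ι) (b : ι → ℕ) (g : ι → ℤ) (ℓ : ℕ) (hℓ : 0 < ℓ)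
    (hb : ∀ i ∈ I, 0 < b i) (hbd : ∀ i ∈ I, b i ∣ ℓ) (p : ℕ) (hp : p.Prime) :
    (((Finset.range ℓ).filter fun x : ℕ => ∃ i ∈ I, (b i:ℤ) ∣ (x:ℤ) - (p:ℤ) * g i).card)
      ≤ ((Finset.range ℓ).filter fun x : ℕ => ∃ i ∈ I, (b i:ℤ) ∣ (x:ℤ) - g i).card := by
  classical
  set k := ℓ.factorization p with hk
  set u := p ^ k with hudef
  set v := ℓ / u with hvdef
  have huv : u * v = ℓ := Nat.ordProj_mul_ordCompl_eq_self ℓ p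
  have hu : 0 < u := pow_pos hp.pos k
  have hv : 0 < v := Nat.ordCompl_pos p hℓ.ne'
  have hpv : ¬ p ∣ v := Nat.not_dvd_ordCompl hp hℓ.ne'
  have hcpv : Nat.Coprime p v := (Nat.Prime.coprime_iff_not_dvd hp).mpr hpv
  have hcuv : Nat.Coprime u v := Nat.Coprime.pow_left k hcpv
  have hbd' : ∀ i ∈ I, b i ∣ u * v := by rw [huv]; exact hbd
  rw [← huv]
  rw [crt_split I b (fun i => (p:ℤ) * g i) u v hu hv hcuv hb hbd',
      crt_split I b g u v hu hv hcuv hb hbd']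
  -- reindex the left sum by z' ↦ (p * z') % v
  set q := p ^ (v.totient - 1) with hqdef
  have hpq : p * q ≡ 1 [MOD v] := by
    have ht : 0 < v.totient := Nat.totient_pos.mpr hv
    have he : p * q = p ^ v.totient := by
      rw [hqdef, ← pow_succ']
      congr 1
      omega
    rw [he]
    exact Nat.ModEq.pow_totient hcpv
  have hinv1 : ∀ z < v, (p * ((q * z) % v)) % v = z := by
    intro z hz
    have h4 : p * ((q * z) % v) ≡ z [MOD v] := by
      calc p * ((q * z) % v) ≡ p * (q * z) [MOD v] := (Nat.mod_modEq (q * z) v).mul_left p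
        _ = p * q * z := by ring
        _ ≡ 1 * z [MOD v] := hpq.mul_right z
        _ = z := one_mul z
    rw [Nat.ModEq, Nat.mod_eq_of_lt hz] at h4
    exact h4
  have hinv2 : ∀ z < v, (q * ((p * z) % v)) % v = z := by
    intro z hz
    have h4 : q * ((p * z) % v) ≡ z [MOD v] := by
      calc q * ((p * z) % v) ≡ q * (p * z) [MOD v] := (Nat.mod_modEq (p * z) v).mul_left q
        _ = p * q * z := by ring
        _ ≡ 1 * z [MOD v] := hpq.mul_right z
        _ = z := one_mul z
    rw [Nat.ModEq, Nat.mod_eq_of_lt hz] at h4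
    exact h4
  have hreindex :
      (∑ z ∈ Finset.range v, (((Finset.range u).filter fun y : ℕ => ∃ i ∈ I,
          ((Nat.gcd (b i) u : ℤ) ∣ (y:ℤ) - (p:ℤ) * g i) ∧
          ((Nat.gcd (b i) v : ℤ) ∣ (z:ℤ) - (p:ℤ) * g i)).card))
      = ∑ z' ∈ Finset.range v, (((Finset.range u).filter fun y : ℕ => ∃ i ∈ I,
          ((Nat.gcd (b i) u : ℤ) ∣ (y:ℤ) - (p:ℤ) * g i) ∧
          ((Nat.gcd (b i) v : ℤ) ∣ (((p * z') % v : ℕ):ℤ) - (p:ℤ) * g i)).card) := by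
    apply Finset.sum_nbij' (i := fun z => (q * z) % v) (j := fun z' => (p * z') % v)
    · intro z _; exact Finset.mem_range.mpr (Nat.mod_lt _ hv)
    · intro z' _; exact Finset.mem_range.mpr (Nat.mod_lt _ hv)
    · intro z hz
      exact hinv1 z (Finset.mem_range.mp hz)
    · intro z' hz'
      exact hinv2 z' (Finset.mem_range.mp hz')
    · intro z hz
      rw [hinv1 z (Finset.mem_range.mp hz)]
  rw [hreindex]
  apply Finset.sum_le_sum
  intro z' hz'
  -- per-fiber inequality
  set J : Finset ι := I.filter (fun i => (Nat.gcd (b i) v : ℤ) ∣ (z':ℤ) - g i) with hJ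
  have hvcong : ∀ i ∈ I,
      ((Nat.gcd (b i) v : ℤ) ∣ (((p * z') % v : ℕ):ℤ) - (p:ℤ) * g i ↔
        (Nat.gcd (b i) v : ℤ) ∣ (z':ℤ) - g i) := by
    intro i hi
    have hgvv : Nat.gcd (b i) v ∣ v := Nat.gcd_dvd_right _ _
    have hcop : IsCoprime ((Nat.gcd (b i) v : ℕ):ℤ) ((p:ℕ):ℤ) :=
      Nat.isCoprime_iff_coprime.mpr (Nat.Coprime.coprime_dvd_left hgvv hcpv.symm)
    rw [← dvd_sub_mod_iff (Nat.gcd (b i) v) v hgvv (p * z') ((p:ℤ) * g i)]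
    have e : ((p * z' : ℕ):ℤ) - (p:ℤ) * g i = (p:ℤ) * ((z':ℤ) - g i) := by push_cast; ring
    rw [e]
    constructor
    · exact fun h => hcop.dvd_of_dvd_mul_left h
    · exact fun h => h.mul_left _
  have hfibL : ((Finset.range u).filter fun y : ℕ => ∃ i ∈ I,
          ((Nat.gcd (b i) u : ℤ) ∣ (y:ℤ) - (p:ℤ) * g i) ∧
          ((Nat.gcd (b i) v : ℤ) ∣ (((p * z') % v : ℕ):ℤ) - (p:ℤ) * g i))
      = (Finset.range u).filter fun y : ℕ => ∃ i ∈ J,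
          ((Nat.gcd (b i) u : ℤ) ∣ (y:ℤ) - (p:ℤ) * g i) := by
    apply Finset.filter_congr
    intro y _
    constructor
    · rintro ⟨i, hi, h1, h2⟩
      exact ⟨i, by rw [hJ, Finset.mem_filter]; exact ⟨hi, (hvcong i hi).mp h2⟩, h1⟩
    · rintro ⟨i, hi, h1⟩
      rw [hJ, Finset.mem_filter] at hi
      exact ⟨i, hi.1, h1, (hvcong i hi.1).mpr hi.2⟩
  have hfibR : ((Finset.range u).filter fun y : ℕ => ∃ i ∈ I,
          ((Nat.gcd (b i) u : ℤ) ∣ (y:ℤ) - g i) ∧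
          ((Nat.gcd (b i) v : ℤ) ∣ (z':ℤ) - g i))
      = (Finset.range u).filter fun y : ℕ => ∃ i ∈ J,
          ((Nat.gcd (b i) u : ℤ) ∣ (y:ℤ) - g i) := by
    apply Finset.filter_congr
    intro y _
    constructor
    · rintro ⟨i, hi, h1, h2⟩
      exact ⟨i, by rw [hJ, Finset.mem_filter]; exact ⟨hi, h2⟩, h1⟩
    · rintro ⟨i, hi, h1⟩
      rw [hJ, Finset.mem_filter] at hi
      exact ⟨i, hi.1, h1, hi.2⟩
  rw [hfibL, hfibR,
      filter_exists_biUnion J u (fun i y => ((Nat.gcd (b i) u : ℤ) ∣ (y:ℤ) - (p:ℤ) * g i)),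
      filter_exists_biUnion J u (fun i y => ((Nat.gcd (b i) u : ℤ) ∣ (y:ℤ) - g i))]
  set C : ι → Finset ℕ := fun i => (Finset.range u).filter
    (fun y => ((Nat.gcd (b i) u : ℤ) ∣ (y:ℤ) - g i)) with hC
  set C' : ι → Finset ℕ := fun i => (Finset.range u).filter
    (fun y => ((Nat.gcd (b i) u : ℤ) ∣ (y:ℤ) - (p:ℤ) * g i)) with hC'
  have hJI : ∀ i ∈ J, i ∈ I := fun i hi => Finset.mem_filter.mp (hJ ▸ hi) |>.1
  have hgupos : ∀ i ∈ J, 0 < Nat.gcd (b i) u := fun i hi =>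
    Nat.gcd_pos_of_pos_left u (hb i (hJI i hi))
  have hguu : ∀ i, Nat.gcd (b i) u ∣ u := fun i => Nat.gcd_dvd_right _ _
  have key : ∀ i ∈ J, ∀ j ∈ J, (Nat.gcd (b i) u : ℤ) ∣ (Nat.gcd (b j) u : ℤ) →
      (C j ⊆ C i ∧ C' j ⊆ C' i) ∨ Disjoint (C i) (C j) := by
    intro i _ j _ hdd
    by_cases hdg : (Nat.gcd (b i) u : ℤ) ∣ g i - g j
    · left
      constructor
      · intro y hy
        rw [hC, Finset.mem_filter] at hy ⊢
        refine ⟨hy.1, ?_⟩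
        have h1 : (Nat.gcd (b i) u : ℤ) ∣ (y:ℤ) - g j := dvd_trans hdd hy.2
        have h2 := dvd_sub h1 hdg
        have e : ((y:ℤ) - g j) - (g i - g j) = (y:ℤ) - g i := by ring
        rwa [e] at h2
      · intro y hy
        rw [hC', Finset.mem_filter] at hy ⊢
        refine ⟨hy.1, ?_⟩
        have h1 : (Nat.gcd (b i) u : ℤ) ∣ (y:ℤ) - (p:ℤ) * g j := dvd_trans hdd hy.2
        have h2 := dvd_sub h1 (hdg.mul_left (p:ℤ))
        have e : ((y:ℤ) - (p:ℤ) * g j) - (p:ℤ) * (g i - g j) = (y:ℤ) - (p:ℤ) * g i := by ring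
        rwa [e] at h2
    · right
      rw [Finset.disjoint_left]
      intro y hyi hyj
      rw [hC, Finset.mem_filter] at hyi hyj
      have h1 : (Nat.gcd (b i) u : ℤ) ∣ (y:ℤ) - g j := dvd_trans hdd hyj.2
      have h2 := dvd_sub h1 hyi.2
      have e : ((y:ℤ) - g j) - ((y:ℤ) - g i) = g i - g j := by ring
      rw [e] at h2
      exact hdg h2
  apply laminar_card_le
  · intro i hi j hj
    obtain ⟨ei, -, hei⟩ := (Nat.dvd_prime_pow hp).mp (hudef ▸ hguu i)
    obtain ⟨ej, -, hej⟩ := (Nat.dvd_prime_pow hp).mp (hudef ▸ hguu j)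
    rcases le_total ei ej with h | h
    · have hdd : (Nat.gcd (b i) u : ℤ) ∣ (Nat.gcd (b j) u : ℤ) := by
        rw [hei, hej]
        exact_mod_cast Int.natCast_dvd_natCast.mpr (pow_dvd_pow p h)
      rcases key i hi j hj hdd with h' | h'
      · exact Or.inr (Or.inl h')
      · exact Or.inr (Or.inr h')
    · have hdd : (Nat.gcd (b j) u : ℤ) ∣ (Nat.gcd (b i) u : ℤ) := by
        rw [hei, hej]
        exact_mod_cast Int.natCast_dvd_natCast.mpr (pow_dvd_pow p h)
      rcases key j hj i hi hdd with h' | h'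
      · exact Or.inl h'
      · exact Or.inr (Or.inr h'.symm)
  · intro i hi
    rw [hC, hC']
    rw [count_coset u (Nat.gcd (b i) u) (hgupos i hi) (hguu i) (g i),
        count_coset u (Nat.gcd (b i) u) (hgupos i hi) (hguu i) ((p:ℤ) * g i)]

lemma count_le_nat {ι : Type*} (I : Finset ι) (b : ι → ℕ) (g : ι → ℤ) (ℓ : ℕ) (hℓ : 0 < ℓ)
    (hb : ∀ i ∈ I, 0 < b i) (hbd : ∀ i ∈ I, b i ∣ ℓ) :
    ∀ M : ℕ, 0 < M →
    (((Finset.range ℓ).filter fun x : ℕ => ∃ i ∈ I, (b i:ℤ) ∣ (x:ℤ) - (M:ℤ) * g i).card)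
      ≤ ((Finset.range ℓ).filter fun x : ℕ => ∃ i ∈ I, (b i:ℤ) ∣ (x:ℤ) - g i).card := by
  classical
  intro M
  induction M using Nat.strong_induction_on generalizing g with
  | _ M ih =>
    intro hM
    rcases eq_or_lt_of_le (show 1 ≤ M from hM) with h1 | h2
    · rw [← h1]
      simp only [Nat.cast_one, one_mul]
      exact le_refl _
    · have hp := Nat.minFac_prime (by omega : M ≠ 1)
      have hpd : M.minFac ∣ M := Nat.minFac_dvd M
      obtain ⟨M', hMM'⟩ := hpd
      have hM' : 0 < M' := by
        rcases Nat.eq_zero_or_pos M' with h | h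
        · rw [h, mul_zero] at hMM'; omega
        · exact h
      have hM'lt : M' < M := by
        have h2le := hp.two_le
        calc M' < 2 * M' := by omega
          _ ≤ M.minFac * M' := Nat.mul_le_mul_right M' h2le
          _ = M := hMM'.symm
      have hcast : ∀ x : ℕ, ∀ i, ((x:ℤ) - (M:ℤ) * g i) = (x:ℤ) - (M.minFac:ℤ) * ((M':ℤ) * g i) := by
        intro x i
        have hMc : (M:ℤ) = (M.minFac:ℤ) * (M':ℤ) := by exact_mod_cast congrArg (Nat.cast : ℕ → ℤ) hMM'
        rw [hMc]
        ring
      have heq : ((Finset.range ℓ).filter fun x : ℕ => ∃ i ∈ I, (b i:ℤ) ∣ (x:ℤ) - (M:ℤ) * g i)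
          = ((Finset.range ℓ).filter fun x : ℕ => ∃ i ∈ I,
              (b i:ℤ) ∣ (x:ℤ) - (M.minFac:ℤ) * ((M':ℤ) * g i)) := by
        apply Finset.filter_congr
        intro x _
        constructor
        · rintro ⟨i, hi, h⟩; exact ⟨i, hi, by rwa [← hcast x i]⟩
        · rintro ⟨i, hi, h⟩; exact ⟨i, hi, by rwa [hcast x i]⟩
      rw [heq]
      exact le_trans
        (prime_step I b (fun i => (M':ℤ) * g i) ℓ hℓ hb hbd M.minFac hp)
        (ih M' hM'lt g hM')

lemma count_le_int {ι : Type*} (I : Finset ι) (b : ι → ℕ) (g : ι → ℤ) (ℓ : ℕ) (hℓ : 0 < ℓ)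
    (hb : ∀ i ∈ I, 0 < b i) (hbd : ∀ i ∈ I, b i ∣ ℓ) (m : ℤ) :
    (((Finset.range ℓ).filter fun x : ℕ => ∃ i ∈ I, (b i:ℤ) ∣ (x:ℤ) - m * g i).card)
      ≤ ((Finset.range ℓ).filter fun x : ℕ => ∃ i ∈ I, (b i:ℤ) ∣ (x:ℤ) - g i).card := by
  classical
  have hℓz : (0:ℤ) < (ℓ:ℤ) := by exact_mod_cast hℓ
  set M : ℕ := (m % ℓ + ℓ).toNat with hMdef
  have hmod0 : 0 ≤ m % ℓ := Int.emod_nonneg m hℓz.ne'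
  have hMcast : (M:ℤ) = m % ℓ + ℓ := Int.toNat_of_nonneg (by omega)
  have hMpos : 0 < M := by omega
  have hdvd : (ℓ:ℤ) ∣ (M:ℤ) - m := by
    rw [hMcast, Int.emod_def]
    exact ⟨1 - m / ℓ, by ring⟩
  have hcong : ∀ x : ℕ, ∀ i ∈ I, ((b i:ℤ) ∣ (x:ℤ) - m * g i ↔ (b i:ℤ) ∣ (x:ℤ) - (M:ℤ) * g i) := by
    intro x i hi
    have hbM : (b i:ℤ) ∣ ((M:ℤ) - m) * g i :=
      Dvd.dvd.mul_right (dvd_trans (Int.natCast_dvd_natCast.mpr (hbd i hi)) hdvd) (g i)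
    constructor
    · intro h
      have h2 := dvd_sub h hbM
      have e : ((x:ℤ) - m * g i) - ((M:ℤ) - m) * g i = (x:ℤ) - (M:ℤ) * g i := by ring
      rwa [e] at h2
    · intro h
      have h2 := dvd_add h hbM
      have e : ((x:ℤ) - (M:ℤ) * g i) + ((M:ℤ) - m) * g i = (x:ℤ) - m * g i := by ring
      rwa [e] at h2
  have heq : ((Finset.range ℓ).filter fun x : ℕ => ∃ i ∈ I, (b i:ℤ) ∣ (x:ℤ) - m * g i)
      = ((Finset.range ℓ).filter fun x : ℕ => ∃ i ∈ I, (b i:ℤ) ∣ (x:ℤ) - (M:ℤ) * g i) := by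
    apply Finset.filter_congr
    intro x _
    constructor
    · rintro ⟨i, hi, h⟩; exact ⟨i, hi, (hcong x i hi).mp h⟩
    · rintro ⟨i, hi, h⟩; exact ⟨i, hi, (hcong x i hi).mpr h⟩
  rw [heq]
  exact count_le_nat I b g ℓ hℓ hb hbd M hMpos


lemma int_nat_count (P : ℤ → Prop) [DecidablePred P] (ℓ : ℕ) :
    ((Finset.Ico (0:ℤ) (ℓ:ℤ)).filter (fun x => P x)).card
      = ((Finset.range ℓ).filter (fun x : ℕ => P (x:ℤ))).card := by
  apply Finset.card_nbij' (i := fun x : ℤ => x.toNat) (j := fun x : ℕ => (x:ℤ))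
  · intro x hx
    rw [Finset.mem_coe, Finset.mem_filter, Finset.mem_Ico] at hx
    rw [Finset.mem_coe, Finset.mem_filter, Finset.mem_range]
    dsimp only
    obtain ⟨⟨h0, h1⟩, hP⟩ := hx
    refine ⟨by omega, ?_⟩
    rwa [Int.toNat_of_nonneg h0]
  · intro x hx
    rw [Finset.mem_coe, Finset.mem_filter, Finset.mem_range] at hx
    rw [Finset.mem_coe, Finset.mem_filter, Finset.mem_Ico]
    dsimp only
    exact ⟨⟨Int.natCast_nonneg x, by exact_mod_cast hx.1⟩, hx.2⟩
  · intro x hx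
    rw [Finset.mem_coe, Finset.mem_filter, Finset.mem_Ico] at hx
    dsimp only
    rw [Int.toNat_of_nonneg hx.1.1]
  · intro x hx
    exact Int.toNat_natCast x

theorem rogers_inequality {ι : Type*} (I : Finset ι) (b : ι → ℕ)
    (hb : ∀ i ∈ I, 0 < b i) (g : ι → ℤ) (m : ℤ) :
    ∃ L L' : ℝ,
      Filter.Tendsto (cnt {n : ℤ | ∃ i ∈ I, ((b i : ℕ) : ℤ) ∣ (n - g i)})
        Filter.atTop (nhds L) ∧
      Filter.Tendsto (cnt {n : ℤ | ∃ i ∈ I, ((b i : ℕ) : ℤ) ∣ (n - m * g i)})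
        Filter.atTop (nhds L') ∧
      L' ≤ L := by
  classical
  set ℓ : ℕ := ∏ i ∈ I, b i with hℓdef
  have hℓ : 0 < ℓ := Finset.prod_pos hb
  have hbd : ∀ i ∈ I, b i ∣ ℓ := fun i hi => Finset.dvd_prod_of_mem b hi
  set E1 : Set ℤ := {n : ℤ | ∃ i ∈ I, ((b i : ℕ) : ℤ) ∣ (n - g i)} with hE1
  set E2 : Set ℤ := {n : ℤ | ∃ i ∈ I, ((b i : ℕ) : ℤ) ∣ (n - m * g i)} with hE2
  have hperiod : ∀ (h : ι → ℤ) (x : ℤ), (∃ i ∈ I, (b i:ℤ) ∣ (x + (ℓ:ℤ) - h i))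
      ↔ ∃ i ∈ I, (b i:ℤ) ∣ (x - h i) := by
    intro h x
    constructor
    · rintro ⟨i, hi, hd⟩
      refine ⟨i, hi, ?_⟩
      have hbℓ : (b i:ℤ) ∣ (ℓ:ℤ) := Int.natCast_dvd_natCast.mpr (hbd i hi)
      have h2 := dvd_sub hd hbℓ
      have e : (x + (ℓ:ℤ) - h i) - (ℓ:ℤ) = x - h i := by ring
      rwa [e] at h2
    · rintro ⟨i, hi, hd⟩
      refine ⟨i, hi, ?_⟩
      have hbℓ : (b i:ℤ) ∣ (ℓ:ℤ) := Int.natCast_dvd_natCast.mpr (hbd i hi)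
      have h2 := dvd_add hd hbℓ
      have e : (x - h i) + (ℓ:ℤ) = x + (ℓ:ℤ) - h i := by ring
      rwa [e] at h2
  have hper1 : ∀ x : ℤ, (x + (ℓ:ℤ)) ∈ E1 ↔ x ∈ E1 := by
    intro x
    rw [hE1]
    simp only [Set.mem_setOf_eq]
    exact hperiod g x
  have hper2 : ∀ x : ℤ, (x + (ℓ:ℤ)) ∈ E2 ↔ x ∈ E2 := by
    intro x
    rw [hE2]
    simp only [Set.mem_setOf_eq]
    exact hperiod (fun i => m * g i) x
  refine ⟨_, _, cnt_tendsto E1 ℓ hℓ hper1, cnt_tendsto E2 ℓ hℓ hper2, ?_⟩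
  apply div_le_div_of_nonneg_right ?_ (Nat.cast_nonneg ℓ)
  rw [Nat.cast_le]
  rw [@int_nat_count (fun x => x ∈ E1) (fun a => Classical.propDecidable _) ℓ,
      @int_nat_count (fun x => x ∈ E2) (fun a => Classical.propDecidable _) ℓ]
  have hcle := count_le_int I b g ℓ hℓ hb hbd m
  convert hcle using 2
  · ext x
    simp only [Finset.mem_filter, hE2, Set.mem_setOf_eq]
  · ext x
    simp only [Finset.mem_filter, hE1, Set.mem_setOf_eq]
end

section
/- If B is a finite set of integers ≥ 2 and r, r' ∈ ℤ with r | r', then d(M_B ∪ (M_B + r)) ≥ d(M_B ∪ (M_B + r')), where M_B = ⋃_{b∈B} bℤ and d denotes natural density. -/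
open Filter

open scoped Classical

namespace DensityAux

/-- elementary: divisibility transfers along a divisible difference -/
lemma dvd_iff_of_dvd_sub {b x y : ℤ} (h : b ∣ x - y) : b ∣ x ↔ b ∣ y := by
  constructor
  · intro hx
    have := dvd_sub hx h
    simpa using this
  · intro hy
    have := dvd_add h hy
    simpa using this

lemma filter_inst_eq {α : Type*} (p : α → Prop) (h1 h2 : DecidablePred p) (s : Finset α) :
    @Finset.filter α p h1 s = @Finset.filter α p h2 s :=
  @Finset.filter_congr _ p p h1 h2 s (fun _ _ => Iff.rfl)

lemma self_sub_emod (x P : ℤ) : P ∣ x - x % P := ⟨x / P, by rw [Int.emod_def]; ring⟩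

lemma emod_eq_of_dvd_sub {n a b : ℤ} (h : n ∣ a - b) : a % n = b % n := by
  rw [Int.emod_eq_emod_iff_emod_sub_eq_zero]
  exact Int.emod_eq_zero_of_dvd h

/-- Counting a coset of `p^c ℤ` inside `[0, p^e)`. -/
lemma count_coset {p : ℕ} (hp : 1 < p) {c e : ℕ} (hc : c ≤ e) (t : ℤ) :
    ((Finset.Ico (0:ℤ) (p^e)).filter (fun y => (p:ℤ)^c ∣ y - t)).card = p^(e-c) := by
  set pc : ℤ := (p:ℤ)^c with hpc_def
  have hpc : 0 < pc := by positivity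
  have hpe : ((p:ℤ))^e = pc * (p:ℤ)^(e-c) := by
    rw [hpc_def, ← pow_add]
    congr 1
    omega
  have hcard : ((Finset.Ico (0:ℤ) (p^e)).filter (fun y => (p:ℤ)^c ∣ y - t)).card
      = (Finset.Ico (0:ℤ) ((p:ℤ)^(e-c))).card := by
    apply Finset.card_bij' (fun y _ => (y - t % pc) / pc) (fun j _ => t % pc + pc * j)
    · intro y hy
      simp only [Finset.mem_filter, Finset.mem_Ico] at hy ⊢
      obtain ⟨⟨hy0, hy1⟩, hdvd⟩ := hy
      have hd2 : pc ∣ y - t % pc := by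
        have h1 : pc ∣ t - t % pc := self_sub_emod t pc
        have : y - t % pc = (y - t) + (t - t % pc) := by ring
        rw [this]
        exact dvd_add hdvd h1
      obtain ⟨q, hq⟩ := hd2
      rw [hq, Int.mul_ediv_cancel_left _ hpc.ne']
      have htm0 : 0 ≤ t % pc := Int.emod_nonneg t hpc.ne'
      have htm1 : t % pc < pc := Int.emod_lt_of_pos t hpc
      constructor
      · nlinarith
      · have : pc * q < pc * (p:ℤ)^(e-c) := by
          push_cast at hy1
          nlinarith
        exact lt_of_mul_lt_mul_left this hpc.le
    · intro j hj
      simp only [Finset.mem_filter, Finset.mem_Ico] at hj ⊢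
      obtain ⟨hj0, hj1⟩ := hj
      have htm0 : 0 ≤ t % pc := Int.emod_nonneg t hpc.ne'
      have htm1 : t % pc < pc := Int.emod_lt_of_pos t hpc
      refine ⟨⟨by positivity, ?_⟩, ?_⟩
      · push_cast
        nlinarith
      · have h1 : pc ∣ t % pc - t := dvd_sub_comm.mp (self_sub_emod t pc)
        have : t % pc + pc * j - t = (t % pc - t) + pc * j := by ring
        rw [this]
        exact dvd_add h1 ⟨j, rfl⟩
    · intro y hy
      simp only [Finset.mem_filter, Finset.mem_Ico] at hy
      obtain ⟨⟨hy0, hy1⟩, hdvd⟩ := hy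
      have hd2 : pc ∣ y - t % pc := by
        have h1 : pc ∣ t - t % pc := self_sub_emod t pc
        have : y - t % pc = (y - t) + (t - t % pc) := by ring
        rw [this]
        exact dvd_add hdvd h1
      obtain ⟨q, hq⟩ := hd2
      rw [hq, Int.mul_ediv_cancel_left _ hpc.ne']
      omega
    · intro j hj
      rw [add_sub_cancel_left, Int.mul_ediv_cancel_left _ hpc.ne']
  rw [hcard]
  rw [Int.card_Ico]
  rw [sub_zero, ← Nat.cast_pow, Int.toNat_natCast]

/-- CRT splitting of a count over `[0, P*M)` into fibers over `[0, M)`. -/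
lemma count_split (P M : ℕ) (hP : 0 < P) (hM : 0 < M) (hcop : Nat.Coprime P M)
    (F : ℤ → ℤ → Prop) :
    ((Finset.Ico (0:ℤ) (P*M)).filter (fun x => F (x % P) (x % M))).card
      = ∑ z ∈ Finset.Ico (0:ℤ) M, ((Finset.Ico (0:ℤ) P).filter (fun y => F y z)).card := by
  classical
  have hPz : (0:ℤ) < (P:ℤ) := by exact_mod_cast hP
  have hMz : (0:ℤ) < (M:ℤ) := by exact_mod_cast hM
  have hPMz : (0:ℤ) < ((P:ℤ) * M) := mul_pos hPz hMz
  obtain ⟨a, b, hab⟩ : ∃ a b : ℤ, a * P + b * M = 1 := Nat.isCoprime_iff_coprime.mpr hcop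
  have hcopz : IsCoprime (P:ℤ) (M:ℤ) := Nat.isCoprime_iff_coprime.mpr hcop
  have hmodP : ∀ y z : ℤ, (y*b*M + z*a*P) % P = y % P := by
    intro y z
    refine emod_eq_of_dvd_sub ⟨a*(z-y), by linear_combination y*hab⟩
  have hmodM : ∀ y z : ℤ, (y*b*M + z*a*P) % M = z % M := by
    intro y z
    refine emod_eq_of_dvd_sub ⟨b*(y-z), by linear_combination z*hab⟩
  have hmap : ∀ x ∈ (Finset.Ico (0:ℤ) (P*M)).filter (fun x => F (x % P) (x % M)),
      x % M ∈ Finset.Ico (0:ℤ) M := by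
    intro x _
    simp only [Finset.mem_Ico]
    exact ⟨Int.emod_nonneg _ hMz.ne', Int.emod_lt_of_pos _ hMz⟩
  push_cast
  rw [Finset.card_eq_sum_card_fiberwise hmap]
  apply Finset.sum_congr rfl
  intro z hz
  simp only [Finset.mem_Ico] at hz
  apply Finset.card_bij' (fun (x : ℤ) _ => x % (P:ℤ))
      (fun (y : ℤ) _ => (y*b*M + z*a*P) % ((P:ℤ)*M))
  · intro x hx
    simp only [Finset.mem_filter, Finset.mem_Ico] at hx ⊢
    obtain ⟨⟨⟨hx0, hx1⟩, hF⟩, hz'⟩ := hx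
    refine ⟨⟨Int.emod_nonneg _ hPz.ne', Int.emod_lt_of_pos _ hPz⟩, ?_⟩
    rwa [hz'] at hF
  · intro y hy
    simp only [Finset.mem_filter, Finset.mem_Ico] at hy ⊢
    obtain ⟨⟨hy0, hy1⟩, hF⟩ := hy
    have e1 : ((y*b*M + z*a*P) % ((P:ℤ)*M)) % P = y := by
      rw [Int.emod_emod_of_dvd _ ⟨(M:ℤ), rfl⟩, hmodP, Int.emod_eq_of_lt hy0 hy1]
    have e2 : ((y*b*M + z*a*P) % ((P:ℤ)*M)) % M = z := by
      rw [Int.emod_emod_of_dvd _ ⟨(P:ℤ), mul_comm _ _⟩, hmodM, Int.emod_eq_of_lt hz.1 hz.2]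
    refine ⟨⟨⟨Int.emod_nonneg _ hPMz.ne', Int.emod_lt_of_pos _ hPMz⟩, ?_⟩, e2⟩
    rw [e1, e2]
    exact hF
  · intro x hx
    simp only [Finset.mem_filter, Finset.mem_Ico] at hx
    obtain ⟨⟨⟨hx0, hx1⟩, hF⟩, hz'⟩ := hx
    have hdP : (P:ℤ) ∣ ((x % P)*b*M + z*a*P) - x := by
      have h1 : (P:ℤ) ∣ x % P - x := dvd_sub_comm.mp (self_sub_emod x P)
      have heq : ((x % P)*b*M + z*a*P) - x = (x % P - x) + (z - x % P)*(a*P) := by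
        linear_combination (x % P)*hab
      rw [heq]
      exact dvd_add h1 (Dvd.dvd.mul_left ⟨a, mul_comm _ _⟩ _)
    have hdM : (M:ℤ) ∣ ((x % P)*b*M + z*a*P) - x := by
      have h1 : (M:ℤ) ∣ z - x := by
        rw [← hz']
        exact dvd_sub_comm.mp (self_sub_emod x M)
      have heq : ((x % P)*b*M + z*a*P) - x = (z - x) + (x % P - z)*(b*M) := by
        linear_combination z*hab
      rw [heq]
      exact dvd_add h1 (Dvd.dvd.mul_left ⟨b, mul_comm _ _⟩ _)
    have hdvd : ((P:ℤ)*M) ∣ ((x % P)*b*M + z*a*P) - x := hcopz.mul_dvd hdP hdM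
    rw [emod_eq_of_dvd_sub hdvd, Int.emod_eq_of_lt hx0 hx1]
  · intro y hy
    simp only [Finset.mem_filter, Finset.mem_Ico] at hy
    obtain ⟨⟨hy0, hy1⟩, hF⟩ := hy
    rw [Int.emod_emod_of_dvd _ ⟨(M:ℤ), rfl⟩, hmodP, Int.emod_eq_of_lt hy0 hy1]

/-- count of `{y ∈ [0,p^e) : p^a ∣ y ∧ p^c ∣ y - t}`. -/
lemma count_inter {p : ℕ} (hp : 1 < p) {a c e : ℕ} (ha : a ≤ e) (hc : c ≤ e) (t : ℤ) :
    ((Finset.Ico (0:ℤ) (p^e)).filter (fun y => (p:ℤ)^a ∣ y ∧ (p:ℤ)^c ∣ y - t)).card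
      = if (p:ℤ)^(min a c) ∣ t then p^(e - max a c) else 0 := by
  by_cases h : (p:ℤ)^(min a c) ∣ t
  · rw [if_pos h]
    set y₀ : ℤ := if a ≤ c then t else 0 with hy₀
    have hequiv : ∀ y : ℤ, (((p:ℤ)^a ∣ y ∧ (p:ℤ)^c ∣ y - t) ↔ (p:ℤ)^(max a c) ∣ y - y₀) := by
      intro y
      rcases le_or_gt a c with hac | hac
      · rw [hy₀, if_pos hac, max_eq_right hac]
        rw [min_eq_left hac] at h
        constructor
        · rintro ⟨h1, h2⟩
          exact h2
        · intro hd
          refine ⟨?_, hd⟩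
          have h3 : (p:ℤ)^a ∣ y - t := (pow_dvd_pow _ hac).trans hd
          have : y = (y - t) + t := by ring
          rw [this]
          exact dvd_add h3 h
      · rw [hy₀, if_neg (not_le.mpr hac), max_eq_left hac.le, sub_zero]
        rw [min_eq_right hac.le] at h
        constructor
        · rintro ⟨h1, h2⟩
          exact h1
        · intro hd
          refine ⟨hd, ?_⟩
          have h3 : (p:ℤ)^c ∣ y := (pow_dvd_pow _ hac.le).trans hd
          exact dvd_sub h3 h
    rw [Finset.filter_congr (fun y _ => hequiv y)]
    exact count_coset hp (max_le ha hc) y₀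
  · rw [if_neg h]
    rw [Finset.card_eq_zero, Finset.filter_eq_empty_iff]
    rintro y _ ⟨h1, h2⟩
    apply h
    have ha' : (p:ℤ)^(min a c) ∣ y := (pow_dvd_pow _ (min_le_left a c)).trans h1
    have hc' : (p:ℤ)^(min a c) ∣ y - t := (pow_dvd_pow _ (min_le_right a c)).trans h2
    have : t = y - (y - t) := by ring
    rw [this]
    exact dvd_sub ha' hc'

/-- the per-fiber inequality at a prime. -/
lemma per_fiber {p : ℕ} (hp : p.Prime) {e : ℕ} (S T : Finset ℕ) (β : ℕ → ℕ)
    (hS : ∀ i ∈ S, β i ≤ e) (hT : ∀ i ∈ T, β i ≤ e) (s : ℤ) :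
    ((Finset.Ico (0:ℤ) (p^e)).filter
        (fun y => (∃ i ∈ S, (p:ℤ)^(β i) ∣ y) ∨ (∃ i ∈ T, (p:ℤ)^(β i) ∣ y - (p:ℤ)*s))).card
    ≤ ((Finset.Ico (0:ℤ) (p^e)).filter
        (fun y => (∃ i ∈ S, (p:ℤ)^(β i) ∣ y) ∨ (∃ i ∈ T, (p:ℤ)^(β i) ∣ y - s))).card := by
  have hp1 : 1 < p := hp.one_lt
  rcases S.eq_empty_or_nonempty with rfl | hS'
  · rcases T.eq_empty_or_nonempty with rfl | hT'
    · simp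
    · -- S empty : both sides are coset counts, equal
      set c : ℕ := T.inf' hT' β with hcdef
      have hc : c ≤ e := by
        obtain ⟨i, hi, hieq⟩ := Finset.exists_mem_eq_inf' hT' β
        rw [hcdef, hieq]
        exact hT i hi
      have hminT : ∀ w : ℤ, ((∃ i ∈ T, (p:ℤ)^(β i) ∣ w) ↔ (p:ℤ)^c ∣ w) := by
        intro w
        constructor
        · rintro ⟨i, hi, hd⟩
          exact (pow_dvd_pow _ (Finset.inf'_le β hi)).trans hd
        · intro hd
          obtain ⟨i, hi, hieq⟩ := Finset.exists_mem_eq_inf' hT' β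
          exact ⟨i, hi, by rw [← hcdef, ← hieq] at *; exact hd⟩
      have key : ∀ u : ℤ, ((Finset.Ico (0:ℤ) (p^e)).filter
          (fun y => (∃ i ∈ (∅ : Finset ℕ), (p:ℤ)^(β i) ∣ y) ∨ (∃ i ∈ T, (p:ℤ)^(β i) ∣ y - u))).card
          = p^(e-c) := by
        intro u
        rw [Finset.filter_congr (fun y _ => by
          simp only [Finset.notMem_empty, false_and, exists_false, false_or]
          exact hminT (y - u))]
        exact count_coset hp1 hc u
      rw [key, key]
  · rcases T.eq_empty_or_nonempty with rfl | hT'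
    · -- T empty: both sides identical
      apply le_of_eq
      congr 1
      apply Finset.filter_congr
      intro y _
      simp
    · -- both nonempty
      set a : ℕ := S.inf' hS' β with hadef
      set c : ℕ := T.inf' hT' β with hcdef
      have ha : a ≤ e := by
        obtain ⟨i, hi, hieq⟩ := Finset.exists_mem_eq_inf' hS' β
        rw [hadef, hieq]; exact hS i hi
      have hc : c ≤ e := by
        obtain ⟨i, hi, hieq⟩ := Finset.exists_mem_eq_inf' hT' β
        rw [hcdef, hieq]; exact hT i hi
      have hminS : ∀ w : ℤ, ((∃ i ∈ S, (p:ℤ)^(β i) ∣ w) ↔ (p:ℤ)^a ∣ w) := by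
        intro w
        constructor
        · rintro ⟨i, hi, hd⟩
          exact (pow_dvd_pow _ (Finset.inf'_le β hi)).trans hd
        · intro hd
          obtain ⟨i, hi, hieq⟩ := Finset.exists_mem_eq_inf' hS' β
          exact ⟨i, hi, by rw [← hadef, ← hieq] at *; exact hd⟩
      have hminT : ∀ w : ℤ, ((∃ i ∈ T, (p:ℤ)^(β i) ∣ w) ↔ (p:ℤ)^c ∣ w) := by
        intro w
        constructor
        · rintro ⟨i, hi, hd⟩
          exact (pow_dvd_pow _ (Finset.inf'_le β hi)).trans hd
        · intro hd
          obtain ⟨i, hi, hieq⟩ := Finset.exists_mem_eq_inf' hT' β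
          exact ⟨i, hi, by rw [← hcdef, ← hieq] at *; exact hd⟩
      have hrw : ∀ u : ℤ, ((Finset.Ico (0:ℤ) (p^e)).filter
          (fun y => (∃ i ∈ S, (p:ℤ)^(β i) ∣ y) ∨ (∃ i ∈ T, (p:ℤ)^(β i) ∣ y - u))).card
          = ((Finset.Ico (0:ℤ) (p^e)).filter
          (fun y => (p:ℤ)^a ∣ y ∨ (p:ℤ)^c ∣ y - u)).card := by
        intro u
        congr 1
        apply Finset.filter_congr
        intro y _
        rw [hminS y, hminT (y - u)]
      rw [hrw, hrw]
      -- inclusion-exclusion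
      have hie : ∀ u : ℤ, ((Finset.Ico (0:ℤ) (p^e)).filter
            (fun y => (p:ℤ)^a ∣ y ∨ (p:ℤ)^c ∣ y - u)).card
          + (if (p:ℤ)^(min a c) ∣ u then p^(e - max a c) else 0)
          = p^(e-a) + p^(e-c) := by
        intro u
        have h1 := Finset.card_union_add_card_inter
          ((Finset.Ico (0:ℤ) (p^e)).filter (fun y => (p:ℤ)^a ∣ y))
          ((Finset.Ico (0:ℤ) (p^e)).filter (fun y => (p:ℤ)^c ∣ y - u))
        rw [← Finset.filter_or, ← Finset.filter_and] at h1
        rw [count_inter hp1 ha hc u] at h1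
        have h2 : ((Finset.Ico (0:ℤ) (p^e)).filter (fun y => (p:ℤ)^a ∣ y)).card = p^(e-a) := by
          have := count_coset hp1 ha (0 : ℤ)
          simpa using this
        have h3 := count_coset hp1 hc u
        rw [h2, h3] at h1
        exact h1
      have hI : (if (p:ℤ)^(min a c) ∣ s then p^(e - max a c) else 0)
          ≤ (if (p:ℤ)^(min a c) ∣ ((p:ℤ)*s) then p^(e - max a c) else 0) := by
        by_cases hd : (p:ℤ)^(min a c) ∣ s
        · rw [if_pos hd, if_pos (hd.mul_left _)]
        · rw [if_neg hd]
          positivity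
      have e1 := hie ((p:ℤ)*s)
      have e2 := hie s
      omega

end DensityAux

namespace DensityMain

open DensityAux

variable (B : Finset ℕ)

/-- the common period -/
def NB : ℕ := B.lcm id

noncomputable def cntN (t : ℤ) : ℕ :=
  ((Finset.Ico (0:ℤ) (NB B)).filter
    (fun x => (∃ b ∈ B, (b:ℤ) ∣ x) ∨ (∃ b ∈ B, (b:ℤ) ∣ x - t))).card

variable {B}

lemma NB_pos (hB : ∀ b ∈ B, 2 ≤ b) : 0 < NB B := by
  rcases Nat.eq_zero_or_pos (NB B) with h | h
  · exfalso
    rw [NB, Finset.lcm_eq_zero_iff] at h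
    rcases h with ⟨b, hb, hb0⟩
    have := hB b hb
    simp [id] at hb0
    omega
  · exact h

lemma b_dvd_NB {b : ℕ} (hb : b ∈ B) : b ∣ NB B := Finset.dvd_lcm (f := id) hb

lemma cnt_neg (hB : ∀ b ∈ B, 2 ≤ b) (t : ℤ) : cntN B (-t) = cntN B t := by
  have hN : (0:ℤ) < (NB B : ℤ) := by exact_mod_cast NB_pos hB
  set n : ℤ := (NB B : ℤ) with hn_def
  have hdvd_iff : ∀ b ∈ B, ∀ x w : ℤ, ((b:ℤ) ∣ (-x) % n - w ↔ (b:ℤ) ∣ x + w) := by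
    intro b hb x w
    have hbn : (b:ℤ) ∣ n := by
      rw [hn_def]
      exact_mod_cast Int.natCast_dvd_natCast.mpr (b_dvd_NB hb)
    have h1 : (b:ℤ) ∣ ((-x) % n - w) - (-(x + w)) := by
      have h2 : n ∣ (-x) - (-x) % n := self_sub_emod _ _
      have h3 : ((-x) % n - w) - (-(x + w)) = -((-x) - (-x) % n) := by ring
      rw [h3]
      exact (hbn.trans h2).neg_right
    rw [dvd_iff_of_dvd_sub h1, dvd_neg]
  have hinv : ∀ x : ℤ, x ∈ Finset.Ico (0:ℤ) n → (-((-x) % n)) % n = x := by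
    intro x hx
    simp only [Finset.mem_Ico] at hx
    have h4 : -((-x) % n) - x = (-x) - (-x) % n := by ring
    have h5 : (-((-x) % n)) % n = x % n := emod_eq_of_dvd_sub (by rw [h4]; exact self_sub_emod _ _)
    rw [h5, Int.emod_eq_of_lt hx.1 hx.2]
  unfold cntN
  rw [← hn_def]
  apply Finset.card_bij' (fun x _ => (-x) % n) (fun x _ => (-x) % n)
  · intro x hx
    simp only [Finset.mem_filter, Finset.mem_Ico] at hx ⊢
    refine ⟨⟨Int.emod_nonneg _ hN.ne', Int.emod_lt_of_pos _ hN⟩, ?_⟩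
    rcases hx.2 with ⟨b, hb, hd⟩ | ⟨b, hb, hd⟩
    · refine Or.inl ⟨b, hb, ?_⟩
      have := (hdvd_iff b hb x 0).mpr (by simpa using hd)
      simpa using this
    · refine Or.inr ⟨b, hb, ?_⟩
      exact (hdvd_iff b hb x t).mpr (by simpa [sub_neg_eq_add] using hd)
  · intro x hx
    simp only [Finset.mem_filter, Finset.mem_Ico] at hx ⊢
    refine ⟨⟨Int.emod_nonneg _ hN.ne', Int.emod_lt_of_pos _ hN⟩, ?_⟩
    rcases hx.2 with ⟨b, hb, hd⟩ | ⟨b, hb, hd⟩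
    · refine Or.inl ⟨b, hb, ?_⟩
      have := (hdvd_iff b hb x 0).mpr (by simpa using hd)
      simpa using this
    · refine Or.inr ⟨b, hb, ?_⟩
      have := (hdvd_iff b hb x (-t)).mpr (by simpa [sub_eq_add_neg] using hd)
      simpa [sub_neg_eq_add] using this
  · intro x hx
    exact hinv x (Finset.mem_of_mem_filter _ hx)
  · intro x hx
    exact hinv x (Finset.mem_of_mem_filter _ hx)

lemma cnt_zero_le (t : ℤ) : cntN B 0 ≤ cntN B t := by
  apply Finset.card_le_card
  apply Finset.monotone_filter_right
  intro x _ hx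
  rcases hx with h | h
  · exact Or.inl h
  · exact Or.inl (by simpa using h)

lemma cnt_prime_le (hB : ∀ b ∈ B, 2 ≤ b) {p : ℕ} (hp : p.Prime) (s : ℤ) :
    cntN B ((p:ℤ) * s) ≤ cntN B s := by
  classical
  have hN : NB B ≠ 0 := (NB_pos hB).ne'
  set e : ℕ := (NB B).factorization p with hedef
  set P : ℕ := p ^ e with hPdef
  set M : ℕ := NB B / P with hMdef
  have hPM : P * M = NB B := Nat.ordProj_mul_ordCompl_eq_self (NB B) p
  have hM0 : 0 < M := Nat.ordCompl_pos p hN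
  have hP0 : 0 < P := pow_pos hp.pos e
  have hpM : ¬ p ∣ M := Nat.not_dvd_ordCompl hp hN
  have hcoppM : p.Coprime M := (Nat.Prime.coprime_iff_not_dvd hp).mpr hpM
  have hcop : Nat.Coprime P M := hcoppM.pow_left e
  have hPz : (0:ℤ) < (P:ℤ) := by exact_mod_cast hP0
  have hMz : (0:ℤ) < (M:ℤ) := by exact_mod_cast hM0
  set β : ℕ → ℕ := fun b => b.factorization p with hβdef
  set c2 : ℕ → ℕ := fun b => b / p ^ (β b) with hc2def
  -- per-b facts
  have hb0 : ∀ b ∈ B, b ≠ 0 := fun b hb => by have := hB b hb; omega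
  have hβe : ∀ b ∈ B, β b ≤ e := by
    intro b hb
    rw [hβdef, hedef]
    have h1 : p ^ (b.factorization p) ∣ NB B :=
      (Nat.ordProj_dvd b p).trans (b_dvd_NB hb)
    exact (Nat.Prime.pow_dvd_iff_le_factorization hp hN).mp h1
  have hsplitb : ∀ b ∈ B, p ^ (β b) * c2 b = b := fun b hb =>
    Nat.ordProj_mul_ordCompl_eq_self b p
  have hpc2 : ∀ b ∈ B, ¬ p ∣ c2 b := fun b hb => Nat.not_dvd_ordCompl hp (hb0 b hb)
  have hcopb : ∀ b ∈ B, Nat.Coprime (p ^ (β b)) (c2 b) := fun b hb =>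
    ((Nat.Prime.coprime_iff_not_dvd hp).mpr (hpc2 b hb)).pow_left _
  have hc2M : ∀ b ∈ B, c2 b ∣ M := fun b hb =>
    Nat.ordCompl_dvd_ordCompl_of_dvd (b_dvd_NB hb) p
  -- divisibility split over ℤ
  have hbdvd : ∀ b ∈ B, ∀ w : ℤ,
      ((b:ℤ) ∣ w ↔ ((p:ℤ)^(β b) ∣ w ∧ ((c2 b : ℕ):ℤ) ∣ w)) := by
    intro b hb w
    have hcast : ((b:ℕ):ℤ) = (p:ℤ)^(β b) * ((c2 b : ℕ):ℤ) := by
      conv_lhs => rw [← hsplitb b hb]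
      push_cast
      ring
    constructor
    · intro h
      rw [hcast] at h
      exact ⟨(dvd_mul_right _ _).trans h, (dvd_mul_left _ _).trans h⟩
    · rintro ⟨h1, h2⟩
      rw [hcast]
      have hcz : IsCoprime ((p:ℤ)^(β b)) ((c2 b : ℕ):ℤ) := by
        have := Nat.isCoprime_iff_coprime.mpr (hcopb b hb)
        push_cast at this ⊢
        exact this
      exact hcz.mul_dvd h1 h2
  -- transfer helpers
  have hppP : ∀ b ∈ B, (p:ℤ)^(β b) ∣ (P:ℤ) := by
    intro b hb
    rw [hPdef]
    push_cast
    exact pow_dvd_pow _ (hβe b hb)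
  have hc2Mz : ∀ b ∈ B, ((c2 b : ℕ):ℤ) ∣ (M:ℤ) := fun b hb =>
    Int.natCast_dvd_natCast.mpr (hc2M b hb)
  -- the main count identity
  have hNcast : ((NB B : ℕ):ℤ) = (P:ℤ) * (M:ℤ) := by
    rw [← hPM]
    push_cast
    ring
  have hcount : ∀ t : ℤ, cntN B t = ∑ z ∈ Finset.Ico (0:ℤ) M,
      ((Finset.Ico (0:ℤ) P).filter (fun y =>
        (∃ b ∈ B, (p:ℤ)^(β b) ∣ y ∧ ((c2 b : ℕ):ℤ) ∣ z) ∨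
        (∃ b ∈ B, (p:ℤ)^(β b) ∣ y - t ∧ ((c2 b : ℕ):ℤ) ∣ z - t))).card := by
    intro t
    unfold cntN
    rw [hNcast]
    have hcongr : ∀ x : ℤ, (((∃ b ∈ B, (b:ℤ) ∣ x) ∨ (∃ b ∈ B, (b:ℤ) ∣ x - t)) ↔
        ((∃ b ∈ B, (p:ℤ)^(β b) ∣ (x % P) ∧ ((c2 b : ℕ):ℤ) ∣ (x % M)) ∨
         (∃ b ∈ B, (p:ℤ)^(β b) ∣ (x % P) - t ∧ ((c2 b : ℕ):ℤ) ∣ (x % M) - t))) := by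
      intro x
      have hx1 : ∀ b ∈ B, ((p:ℤ)^(β b) ∣ x ↔ (p:ℤ)^(β b) ∣ (x % P)) := by
        intro b hb
        have hd : (p:ℤ)^(β b) ∣ x - x % P := (hppP b hb).trans (self_sub_emod x P)
        exact dvd_iff_of_dvd_sub hd
      have hx2 : ∀ b ∈ B, (((c2 b : ℕ):ℤ) ∣ x ↔ ((c2 b : ℕ):ℤ) ∣ (x % M)) := by
        intro b hb
        have hd : ((c2 b : ℕ):ℤ) ∣ x - x % M := (hc2Mz b hb).trans (self_sub_emod x M)
        exact dvd_iff_of_dvd_sub hd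
      have hx3 : ∀ b ∈ B, ((p:ℤ)^(β b) ∣ x - t ↔ (p:ℤ)^(β b) ∣ (x % P) - t) := by
        intro b hb
        have hd : (p:ℤ)^(β b) ∣ (x - t) - ((x % P) - t) := by
          have h9 : (x - t) - ((x % P) - t) = x - x % P := by ring
          rw [h9]
          exact (hppP b hb).trans (self_sub_emod x P)
        exact dvd_iff_of_dvd_sub hd
      have hx4 : ∀ b ∈ B, (((c2 b : ℕ):ℤ) ∣ x - t ↔ ((c2 b : ℕ):ℤ) ∣ (x % M) - t) := by
        intro b hb
        have hd : ((c2 b : ℕ):ℤ) ∣ (x - t) - ((x % M) - t) := by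
          have h9 : (x - t) - ((x % M) - t) = x - x % M := by ring
          rw [h9]
          exact (hc2Mz b hb).trans (self_sub_emod x M)
        exact dvd_iff_of_dvd_sub hd
      constructor
      · rintro (⟨b, hb, hd⟩ | ⟨b, hb, hd⟩)
        · obtain ⟨h1, h2⟩ := (hbdvd b hb x).mp hd
          exact Or.inl ⟨b, hb, (hx1 b hb).mp h1, (hx2 b hb).mp h2⟩
        · obtain ⟨h1, h2⟩ := (hbdvd b hb (x - t)).mp hd
          exact Or.inr ⟨b, hb, (hx3 b hb).mp h1, (hx4 b hb).mp h2⟩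
      · rintro (⟨b, hb, h1, h2⟩ | ⟨b, hb, h1, h2⟩)
        · exact Or.inl ⟨b, hb, (hbdvd b hb x).mpr ⟨(hx1 b hb).mpr h1, (hx2 b hb).mpr h2⟩⟩
        · exact Or.inr ⟨b, hb, (hbdvd b hb (x - t)).mpr ⟨(hx3 b hb).mpr h1, (hx4 b hb).mpr h2⟩⟩
    rw [Finset.filter_congr (fun x _ => hcongr x)]
    convert count_split P M hP0 hM0 hcop (fun y z =>
      (∃ b ∈ B, (p:ℤ)^(β b) ∣ y ∧ ((c2 b : ℕ):ℤ) ∣ z) ∨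
      (∃ b ∈ B, (p:ℤ)^(β b) ∣ y - t ∧ ((c2 b : ℕ):ℤ) ∣ z - t)) using 2
    · apply filter_inst_eq
    · congr 1
      apply filter_inst_eq
  rw [hcount ((p:ℤ)*s), hcount s]
  -- reindex the left sum by z ↦ (p*z) % M
  obtain ⟨u, v, huv⟩ : ∃ u v : ℤ, u * p + v * M = 1 := Nat.isCoprime_iff_coprime.mpr hcoppM
  set σ : ℤ → ℤ := fun z => ((p:ℤ) * z) % M with hσdef
  set τ : ℤ → ℤ := fun z => (u * z) % M with hτdef
  have hσmem : ∀ z ∈ Finset.Ico (0:ℤ) (M:ℤ), σ z ∈ Finset.Ico (0:ℤ) (M:ℤ) := by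
    intro z _
    simp only [Finset.mem_Ico]
    exact ⟨Int.emod_nonneg _ hMz.ne', Int.emod_lt_of_pos _ hMz⟩
  have hτmem : ∀ z ∈ Finset.Ico (0:ℤ) (M:ℤ), τ z ∈ Finset.Ico (0:ℤ) (M:ℤ) := by
    intro z _
    simp only [Finset.mem_Ico]
    exact ⟨Int.emod_nonneg _ hMz.ne', Int.emod_lt_of_pos _ hMz⟩
  have hτσ : ∀ z ∈ Finset.Ico (0:ℤ) (M:ℤ), τ (σ z) = z := by
    intro z hz
    simp only [Finset.mem_Ico] at hz
    have h1 : (M:ℤ) ∣ u * (((p:ℤ) * z) % M) - z := by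
      have h2 : (M:ℤ) ∣ ((p:ℤ) * z) % M - (p:ℤ) * z := dvd_sub_comm.mp (self_sub_emod _ _)
      have h3 : u * (((p:ℤ) * z) % M) - z
          = u * ((((p:ℤ) * z) % M) - (p:ℤ) * z) + z * (u * p + v * M - 1) - (z * v) * M := by
        ring
      rw [h3, huv]
      have h4 : (M:ℤ) ∣ u * ((((p:ℤ) * z) % M) - (p:ℤ) * z) := h2.mul_left u
      have h5 : (M:ℤ) ∣ (z * v) * M := ⟨z * v, mul_comm _ _⟩
      simpa using dvd_sub h4 h5
    rw [hτdef]
    simp only []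
    rw [emod_eq_of_dvd_sub h1, Int.emod_eq_of_lt hz.1 hz.2]
  have hστ : ∀ z ∈ Finset.Ico (0:ℤ) (M:ℤ), σ (τ z) = z := by
    intro z hz
    simp only [Finset.mem_Ico] at hz
    have h1 : (M:ℤ) ∣ (p:ℤ) * ((u * z) % M) - z := by
      have h2 : (M:ℤ) ∣ (u * z) % M - u * z := dvd_sub_comm.mp (self_sub_emod _ _)
      have h3 : (p:ℤ) * ((u * z) % M) - z
          = (p:ℤ) * (((u * z) % M) - u * z) + z * (u * p + v * M - 1) - (z * v) * M := by
        ring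
      rw [h3, huv]
      have h4 : (M:ℤ) ∣ (p:ℤ) * ((((u * z)) % M) - u * z) := h2.mul_left _
      have h5 : (M:ℤ) ∣ (z * v) * M := ⟨z * v, mul_comm _ _⟩
      simpa using dvd_sub h4 h5
    rw [hσdef]
    simp only []
    rw [emod_eq_of_dvd_sub h1, Int.emod_eq_of_lt hz.1 hz.2]
  -- rewrite the left sum over the bijection σ
  have hreindex : ∑ z ∈ Finset.Ico (0:ℤ) (M:ℤ),
      ((Finset.Ico (0:ℤ) P).filter (fun y =>
        (∃ b ∈ B, (p:ℤ)^(β b) ∣ y ∧ ((c2 b : ℕ):ℤ) ∣ z) ∨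
        (∃ b ∈ B, (p:ℤ)^(β b) ∣ y - (p:ℤ)*s ∧ ((c2 b : ℕ):ℤ) ∣ z - (p:ℤ)*s))).card
      = ∑ z ∈ Finset.Ico (0:ℤ) (M:ℤ),
      ((Finset.Ico (0:ℤ) P).filter (fun y =>
        (∃ b ∈ B, (p:ℤ)^(β b) ∣ y ∧ ((c2 b : ℕ):ℤ) ∣ σ z) ∨
        (∃ b ∈ B, (p:ℤ)^(β b) ∣ y - (p:ℤ)*s ∧ ((c2 b : ℕ):ℤ) ∣ σ z - (p:ℤ)*s))).card := by
    apply Finset.sum_bij' (fun z _ => τ z) (fun z _ => σ z) hτmem hσmem hστ hτσ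
    intro z hz
    rw [hστ z hz]
  rw [hreindex]
  -- compare summand by summand
  apply Finset.sum_le_sum
  intro z hz
  -- identify the z-conditions
  have hcopc2p : ∀ b ∈ B, IsCoprime ((c2 b : ℕ):ℤ) (p:ℤ) := by
    intro b hb
    have h1 : Nat.Coprime (c2 b) p :=
      ((Nat.Prime.coprime_iff_not_dvd hp).mpr (hpc2 b hb)).symm
    exact Nat.isCoprime_iff_coprime.mpr h1
  have hc2σ : ∀ b ∈ B, (((c2 b : ℕ):ℤ) ∣ σ z ↔ ((c2 b : ℕ):ℤ) ∣ z) := by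
    intro b hb
    have h1 : ((c2 b : ℕ):ℤ) ∣ σ z - (p:ℤ) * z :=
      (hc2Mz b hb).trans (dvd_sub_comm.mp (self_sub_emod _ _))
    rw [dvd_iff_of_dvd_sub h1]
    constructor
    · intro h
      exact (hcopc2p b hb).dvd_of_dvd_mul_left h
    · intro h
      exact h.mul_left _
  have hc2σs : ∀ b ∈ B, (((c2 b : ℕ):ℤ) ∣ σ z - (p:ℤ)*s ↔ ((c2 b : ℕ):ℤ) ∣ z - s) := by
    intro b hb
    have h1 : ((c2 b : ℕ):ℤ) ∣ (σ z - (p:ℤ)*s) - ((p:ℤ) * (z - s)) := by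
      have h9 : (σ z - (p:ℤ)*s) - ((p:ℤ) * (z - s)) = σ z - (p:ℤ) * z := by ring
      rw [h9]
      exact (hc2Mz b hb).trans (dvd_sub_comm.mp (self_sub_emod _ _))
    rw [dvd_iff_of_dvd_sub h1]
    constructor
    · intro h
      exact (hcopc2p b hb).dvd_of_dvd_mul_left h
    · intro h
      exact h.mul_left _
  -- reduce to per_fiber
  set S : Finset ℕ := B.filter (fun b => ((c2 b : ℕ):ℤ) ∣ z) with hSdef
  set T : Finset ℕ := B.filter (fun b => ((c2 b : ℕ):ℤ) ∣ z - s) with hTdef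
  have hLcongr : ∀ y : ℤ,
      (((∃ b ∈ B, (p:ℤ)^(β b) ∣ y ∧ ((c2 b : ℕ):ℤ) ∣ σ z) ∨
        (∃ b ∈ B, (p:ℤ)^(β b) ∣ y - (p:ℤ)*s ∧ ((c2 b : ℕ):ℤ) ∣ σ z - (p:ℤ)*s)) ↔
       ((∃ b ∈ S, (p:ℤ)^(β b) ∣ y) ∨ (∃ b ∈ T, (p:ℤ)^(β b) ∣ y - (p:ℤ)*s))) := by
    intro y
    constructor
    · rintro (⟨b, hb, h1, h2⟩ | ⟨b, hb, h1, h2⟩)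
      · exact Or.inl ⟨b, Finset.mem_filter.mpr ⟨hb, (hc2σ b hb).mp h2⟩, h1⟩
      · exact Or.inr ⟨b, Finset.mem_filter.mpr ⟨hb, (hc2σs b hb).mp h2⟩, h1⟩
    · rintro (⟨b, hb, h1⟩ | ⟨b, hb, h1⟩)
      · obtain ⟨hbB, h2⟩ := Finset.mem_filter.mp hb
        exact Or.inl ⟨b, hbB, h1, (hc2σ b hbB).mpr h2⟩
      · obtain ⟨hbB, h2⟩ := Finset.mem_filter.mp hb
        exact Or.inr ⟨b, hbB, h1, (hc2σs b hbB).mpr h2⟩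
  have hRcongr : ∀ y : ℤ,
      (((∃ b ∈ B, (p:ℤ)^(β b) ∣ y ∧ ((c2 b : ℕ):ℤ) ∣ z) ∨
        (∃ b ∈ B, (p:ℤ)^(β b) ∣ y - s ∧ ((c2 b : ℕ):ℤ) ∣ z - s)) ↔
       ((∃ b ∈ S, (p:ℤ)^(β b) ∣ y) ∨ (∃ b ∈ T, (p:ℤ)^(β b) ∣ y - s))) := by
    intro y
    constructor
    · rintro (⟨b, hb, h1, h2⟩ | ⟨b, hb, h1, h2⟩)
      · exact Or.inl ⟨b, Finset.mem_filter.mpr ⟨hb, h2⟩, h1⟩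
      · exact Or.inr ⟨b, Finset.mem_filter.mpr ⟨hb, h2⟩, h1⟩
    · rintro (⟨b, hb, h1⟩ | ⟨b, hb, h1⟩)
      · obtain ⟨hbB, h2⟩ := Finset.mem_filter.mp hb
        exact Or.inl ⟨b, hbB, h1, h2⟩
      · obtain ⟨hbB, h2⟩ := Finset.mem_filter.mp hb
        exact Or.inr ⟨b, hbB, h1, h2⟩
  rw [Finset.filter_congr (fun y _ => hLcongr y), Finset.filter_congr (fun y _ => hRcongr y)]
  have hPcast : Finset.Ico (0:ℤ) ((P:ℕ):ℤ) = Finset.Ico (0:ℤ) ((p:ℤ)^e) := by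
    congr 1
  rw [hPcast]
  convert per_fiber hp S T β
    (fun i hi => hβe i (Finset.mem_filter.mp hi).1)
    (fun i hi => hβe i (Finset.mem_filter.mp hi).1) s using 2
  all_goals apply filter_inst_eq

lemma cnt_mul_nat_le (hB : ∀ b ∈ B, 2 ≤ b) (m : ℕ) (s : ℤ) :
    cntN B ((m:ℤ) * s) ≤ cntN B s := by
  induction m using Nat.strong_induction_on generalizing s with
  | _ m ih =>
    match m, ih with
    | 0, _ => simpa using cnt_zero_le (B := B) s
    | 1, _ => simp
    | (m+2), ih =>
      have hn1 : m + 2 ≠ 1 := by omega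
      have hp : ((m+2).minFac).Prime := Nat.minFac_prime hn1
      obtain ⟨k, hk⟩ := (m+2).minFac_dvd
      have hklt : k < m + 2 := by
        have h2 : 2 ≤ (m+2).minFac := hp.two_le
        have hk0 : k ≠ 0 := by rintro rfl; omega
        nlinarith [Nat.minFac_pos (m+2)]
      have heq : ((m+2 : ℕ) : ℤ) * s = ((m+2).minFac : ℤ) * ((k:ℤ) * s) := by
        conv_lhs => rw [hk]
        push_cast; ring
      rw [heq]
      calc cntN B (((m+2).minFac : ℤ) * ((k:ℤ) * s)) ≤ cntN B ((k:ℤ) * s) :=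
            cnt_prime_le hB hp _
        _ ≤ cntN B s := ih k hklt s

lemma cnt_dvd_le (hB : ∀ b ∈ B, 2 ≤ b) {r r' : ℤ} (h : r ∣ r') : cntN B r' ≤ cntN B r := by
  obtain ⟨c, rfl⟩ := h
  rcases Int.natAbs_eq c with hc | hc
  · have heq : r * c = (c.natAbs : ℤ) * r := by conv_lhs => rw [hc, mul_comm]
    rw [heq]
    exact cnt_mul_nat_le hB _ r
  · have heq : r * c = -((c.natAbs : ℤ) * r) := by
      conv_lhs => rw [hc]
      ring
    rw [heq, cnt_neg hB]
    exact cnt_mul_nat_le hB _ r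

/-- generic periodic density lemma -/
lemma tendsto_cnt (E : Set ℤ) (N : ℕ) (hN : 0 < N)
    (hper : ∀ x y : ℤ, (N:ℤ) ∣ x - y → (x ∈ E ↔ y ∈ E)) :
    Tendsto (cnt E) atTop
      (nhds ((((Finset.Ico (0:ℤ) N).filter (fun x => x ∈ E)).card : ℝ) / N)) := by
  classical
  have hNz : (0:ℤ) < (N:ℤ) := by exact_mod_cast hN
  set k : ℕ := ((Finset.Ico (0:ℤ) N).filter (fun x => x ∈ E)).card with hkdef
  -- the count over any window of length N is k
  have hconst : ∀ a : ℤ, ((Finset.Ico a (a + N)).filter (fun x => x ∈ E)).card = k := by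
    intro a
    rw [hkdef]
    apply Finset.card_bij' (fun (x:ℤ) _ => x % (N:ℤ)) (fun (y:ℤ) _ => a + (y - a) % (N:ℤ))
    · intro x hx
      simp only [Finset.mem_filter, Finset.mem_Ico] at hx ⊢
      refine ⟨⟨Int.emod_nonneg _ hNz.ne', Int.emod_lt_of_pos _ hNz⟩, ?_⟩
      rw [hper (x % N) x (dvd_sub_comm.mp (self_sub_emod x N))]
      exact hx.2
    · intro y hy
      simp only [Finset.mem_filter, Finset.mem_Ico] at hy ⊢
      have h0 : 0 ≤ (y - a) % (N:ℤ) := Int.emod_nonneg _ hNz.ne'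
      have h1 : (y - a) % (N:ℤ) < N := Int.emod_lt_of_pos _ hNz
      refine ⟨⟨by linarith, by linarith⟩, ?_⟩
      rw [hper (a + (y - a) % N) y (by
        have : a + (y - a) % N - y = ((y-a) % N - (y-a)) := by ring
        rw [this]
        exact dvd_sub_comm.mp (self_sub_emod _ _))]
      exact hy.2
    · intro x hx
      simp only [Finset.mem_filter, Finset.mem_Ico] at hx
      have h5 : (x % (N:ℤ) - a) % N = (x - a) % N :=
        emod_eq_of_dvd_sub (by
          have : x % (N:ℤ) - a - (x - a) = -(x - x % N) := by ring
          rw [this]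
          exact (self_sub_emod x N).neg_right)
      rw [h5, Int.emod_eq_of_lt (by linarith [hx.1.1]) (by linarith [hx.1.2])]
      ring
    · intro y hy
      simp only [Finset.mem_filter, Finset.mem_Ico] at hy
      have h5 : (a + (y - a) % N) % N = y % N :=
        emod_eq_of_dvd_sub (by
          have : a + (y - a) % N - y = ((y-a) % N - (y-a)) := by ring
          rw [this]
          exact dvd_sub_comm.mp (self_sub_emod _ _))
      rw [h5, Int.emod_eq_of_lt hy.1.1 hy.1.2]
  -- count over m consecutive windows
  have hblock : ∀ a : ℤ, ∀ m : ℕ,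
      ((Finset.Ico a (a + N * m)).filter (fun x => x ∈ E)).card = m * k := by
    intro a m
    induction m generalizing a with
    | zero => simp
    | succ m ih =>
      push_cast
      have hN0 : (0:ℤ) ≤ (N:ℤ) * (m:ℤ) := by positivity
      have hsplit : Finset.Ico a (a + (N:ℤ) * ((m:ℤ)+1))
          = Finset.Ico a (a + (N:ℤ)) ∪ Finset.Ico (a + (N:ℤ)) (a + (N:ℤ) * ((m:ℤ)+1)) := by
        rw [Finset.Ico_union_Ico_eq_Ico]
        · linarith
        · nlinarith
      rw [hsplit, Finset.filter_union, Finset.card_union_of_disjoint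
          (Finset.disjoint_filter_filter (Finset.Ico_disjoint_Ico_consecutive _ _ _))]
      have hrew : Finset.Ico (a + (N:ℤ)) (a + (N:ℤ) * ((m:ℤ)+1))
          = Finset.Ico (a + (N:ℤ)) ((a + (N:ℤ)) + (N:ℤ) * (m:ℤ)) := by
        congr 1
        ring
      rw [hconst a, hrew, ih (a + N)]
      ring
  -- per-n bound
  have hbound : ∀ n : ℕ, dist (cnt E n) ((k:ℝ)/N) ≤ (N:ℝ) / (2*n+1) := by
    intro n
    set D : ℤ := 2*(n:ℤ) + 1 with hDdef
    have hD0 : (0:ℤ) < D := by positivity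
    set q : ℤ := D / N with hqdef
    have hq0 : 0 ≤ q := Int.ediv_nonneg hD0.le hNz.le
    have hqN : (N:ℤ) * q ≤ D ∧ D < N * (q + 1) := by
      constructor
      · have := Int.emod_nonneg D hNz.ne'
        rw [Int.emod_def] at this
        linarith
      · have := Int.emod_lt_of_pos D hNz
        rw [Int.emod_def] at this
        linarith
    set cardn : ℕ := ((Finset.Icc (-(n:ℤ)) n).filter (fun x => x ∈ E)).card with hcarddef
    have hIcc : Finset.Icc (-(n:ℤ)) n = Finset.Ico (-(n:ℤ)) ((n:ℤ)+1) := rfl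
    have hq' : ((q.toNat : ℤ)) = q := Int.toNat_of_nonneg hq0
    have hlow : q.toNat * k ≤ cardn := by
      have hsub : Finset.Ico (-(n:ℤ)) (-(n:ℤ) + (N:ℤ) * (q.toNat:ℤ)) ⊆ Finset.Icc (-(n:ℤ)) n := by
        rw [hIcc]
        apply Finset.Ico_subset_Ico le_rfl
        rw [hq']
        have h8 : (n:ℤ) + 1 = -(n:ℤ) + D := by rw [hDdef]; ring
        rw [h8]
        linarith [hqN.1]
      calc q.toNat * k
          = ((Finset.Ico (-(n:ℤ)) (-(n:ℤ) + (N:ℤ) * (q.toNat:ℤ))).filter (fun x => x ∈ E)).card :=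
            (hblock _ _).symm
        _ ≤ cardn := Finset.card_le_card (Finset.filter_subset_filter _ hsub)
    have hhigh : cardn ≤ (q.toNat + 1) * k := by
      have hsub : Finset.Icc (-(n:ℤ)) n ⊆ Finset.Ico (-(n:ℤ)) (-(n:ℤ) + (N:ℤ) * ((q.toNat+1 : ℕ):ℤ)) := by
        rw [hIcc]
        apply Finset.Ico_subset_Ico le_rfl
        push_cast
        rw [hq']
        have h8 : (n:ℤ) + 1 = -(n:ℤ) + D := by rw [hDdef]; ring
        rw [h8]
        linarith [hqN.2]
      calc cardn
          ≤ ((Finset.Ico (-(n:ℤ)) (-(n:ℤ) + (N:ℤ) * ((q.toNat+1 : ℕ):ℤ))).filter (fun x => x ∈ E)).card :=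
            Finset.card_le_card (Finset.filter_subset_filter _ hsub)
        _ = (q.toNat + 1) * k := hblock _ _
    have hkN : k ≤ N := by
      rw [hkdef]
      calc ((Finset.Ico (0:ℤ) N).filter (fun x => x ∈ E)).card
          ≤ (Finset.Ico (0:ℤ) N).card := Finset.card_filter_le _ _
        _ = N := by rw [Int.card_Ico]; simp
    -- now real arithmetic
    have hcnt : cnt E n = (cardn : ℝ) / (2*n+1) := by
      rw [cnt, hcarddef]
    rw [hcnt]
    have hDr : (0:ℝ) < 2*(n:ℝ)+1 := by positivity
    have hNr : (0:ℝ) < (N:ℝ) := by exact_mod_cast hN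
    have hqr : ((q.toNat:ℝ)) = (q:ℝ) := by exact_mod_cast Int.toNat_of_nonneg hq0
    have hlowr : (q:ℝ) * k ≤ (cardn:ℝ) := by
      rw [← hqr]
      exact_mod_cast hlow
    have hhighr : (cardn:ℝ) ≤ ((q:ℝ) + 1) * k := by
      rw [← hqr]
      exact_mod_cast hhigh
    have hqNr : (N:ℝ) * q ≤ 2*(n:ℝ)+1 ∧ (2*(n:ℝ)+1 : ℝ) < N * (q+1) := by
      constructor
      · exact_mod_cast hqN.1
      · exact_mod_cast hqN.2
    have hkNr : (k:ℝ) ≤ (N:ℝ) := by exact_mod_cast hkN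
    have hkr : (0:ℝ) ≤ (k:ℝ) := by positivity
    rw [Real.dist_eq]
    have heq : (cardn:ℝ) / (2*n+1) - (k:ℝ)/N
        = ((cardn:ℝ) * N - k * (2*n+1)) / ((2*n+1) * N) := by
      field_simp
    rw [heq, abs_div, abs_of_pos (show (0:ℝ) < (2*(n:ℝ)+1) * N by positivity)]
    rw [div_le_div_iff₀ (by positivity) hDr]
    have habs : |(cardn:ℝ) * N - k * (2*n+1)| ≤ k * N := by
      rw [abs_le]
      constructor
      · nlinarith [hqNr.1, hqNr.2, hlowr, hhighr, hkr, hNr]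
      · nlinarith [hqNr.1, hqNr.2, hlowr, hhighr, hkr, hNr]
    calc |(cardn:ℝ) * N - k * (2*n+1)| * (2*(n:ℝ)+1) ≤ (k*N) * (2*(n:ℝ)+1) := by
          apply mul_le_mul_of_nonneg_right habs hDr.le
      _ ≤ (N:ℝ) * ((2*(n:ℝ)+1) * N) := by
          nlinarith [mul_le_mul_of_nonneg_right (mul_le_mul_of_nonneg_right hkNr hNr.le) hDr.le]
  rw [tendsto_iff_dist_tendsto_zero]
  apply squeeze_zero (fun n => dist_nonneg) hbound
  apply Filter.Tendsto.div_atTop (tendsto_const_nhds)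
  apply Filter.tendsto_atTop_add_const_right
  exact (tendsto_natCast_atTop_atTop).const_mul_atTop (by norm_num)

end DensityMain

open DensityMain DensityAux in
theorem density_union_shift_antitone_of_dvd (B : Finset ℕ) (hB : ∀ b ∈ B, 2 ≤ b)
    (r r' : ℤ) (hdvd : r ∣ r') :
    ∃ L L' : ℝ,
      Filter.Tendsto (cnt (MB B ∪ {n : ℤ | n - r ∈ MB B})) Filter.atTop (nhds L) ∧
      Filter.Tendsto (cnt (MB B ∪ {n : ℤ | n - r' ∈ MB B})) Filter.atTop (nhds L') ∧
      L' ≤ L := by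
  have hN := NB_pos hB
  have key : ∀ t : ℤ, ((Finset.Ico (0:ℤ) (NB B)).filter
      (fun x => x ∈ MB B ∪ {n : ℤ | n - t ∈ MB B})).card = cntN B t := by
    intro t
    unfold cntN
    congr 1
    apply Finset.filter_congr
    intro x _
    simp [MB, Set.mem_union, Set.mem_setOf_eq]
  have hper : ∀ t : ℤ, ∀ x y : ℤ, ((NB B : ℕ) : ℤ) ∣ x - y →
      (x ∈ MB B ∪ {n : ℤ | n - t ∈ MB B} ↔ y ∈ MB B ∪ {n : ℤ | n - t ∈ MB B}) := by
    intro t x y hxy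
    have hb : ∀ b ∈ B, ((b:ℤ) ∣ x ↔ (b:ℤ) ∣ y) ∧ ((b:ℤ) ∣ x - t ↔ (b:ℤ) ∣ y - t) := by
      intro b hb
      have hbN : (b:ℤ) ∣ (NB B : ℤ) := Int.natCast_dvd_natCast.mpr (b_dvd_NB hb)
      have h1 : (b:ℤ) ∣ x - y := dvd_trans hbN hxy
      exact ⟨dvd_iff_of_dvd_sub h1, dvd_iff_of_dvd_sub (by
        have : x - t - (y - t) = x - y := by ring
        rw [this]; exact h1)⟩
    simp only [MB, Set.mem_union, Set.mem_setOf_eq]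
    constructor
    · rintro (⟨b, hbB, hd⟩ | ⟨b, hbB, hd⟩)
      · exact Or.inl ⟨b, hbB, ((hb b hbB).1).mp hd⟩
      · exact Or.inr ⟨b, hbB, ((hb b hbB).2).mp hd⟩
    · rintro (⟨b, hbB, hd⟩ | ⟨b, hbB, hd⟩)
      · exact Or.inl ⟨b, hbB, ((hb b hbB).1).mpr hd⟩
      · exact Or.inr ⟨b, hbB, ((hb b hbB).2).mpr hd⟩
  refine ⟨(cntN B r : ℝ) / (NB B), (cntN B r' : ℝ) / (NB B), ?_, ?_, ?_⟩
  · have h := tendsto_cnt (MB B ∪ {n : ℤ | n - r ∈ MB B}) (NB B) hN (hper r)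
    convert h using 3
    rw [filter_inst_eq _ _ (fun a => (MB B).decidableUnion {n | n - r ∈ MB B} a)]
    exact_mod_cast (key r).symm
  · have h := tendsto_cnt (MB B ∪ {n : ℤ | n - r' ∈ MB B}) (NB B) hN (hper r')
    convert h using 3
    rw [filter_inst_eq _ _ (fun a => (MB B).decidableUnion {n | n - r' ∈ MB B} a)]
    exact_mod_cast (key r').symm
  · have h := cnt_dvd_le hB hdvd
    have h' : (cntN B r' : ℝ) ≤ (cntN B r : ℝ) := by exact_mod_cast h
    gcongr
end

section
/- For all integers n ≥ 1, ⌊n/4⌋ · 2^{⌊n/4⌋} ≤ q_{n−1}, where (q_n) are the Fibonacci numbers with q_0 = q_1 = 1, q_{n+1} = q_n + q_{n−1}. -/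
lemma fib_lb : ∀ m : ℕ, m * 2 ^ m ≤ Nat.fib (4 * m) := by
  intro m
  induction m with
  | zero => simp
  | succ m ih =>
    rcases Nat.eq_zero_or_pos m with hm | hm
    · subst hm; decide
    · have h1 : (m + 1) * 2 ^ (m + 1) ≤ 4 * (m * 2 ^ m) := by
        have h : (m + 1) * 2 ≤ 4 * m := by omega
        calc (m + 1) * 2 ^ (m + 1) = ((m + 1) * 2) * 2 ^ m := by ring
          _ ≤ (4 * m) * 2 ^ m := Nat.mul_le_mul_right _ h
          _ = 4 * (m * 2 ^ m) := by ring
      have a' : Nat.fib (4*m+2) = Nat.fib (4*m) + Nat.fib (4*m+1) := Nat.fib_add_two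
      have b' : Nat.fib (4*m+3) = Nat.fib (4*m+1) + Nat.fib (4*m+2) := Nat.fib_add_two
      have c' : Nat.fib (4*m+4) = Nat.fib (4*m+2) + Nat.fib (4*m+3) := Nat.fib_add_two
      have hmono : Nat.fib (4*m) ≤ Nat.fib (4*m+1) := Nat.fib_le_fib_succ
      have h2 : 4 * Nat.fib (4 * m) ≤ Nat.fib (4 * (m + 1)) := by
        rw [show 4 * (m + 1) = 4*m+4 from by ring]
        omega
      calc (m + 1) * 2 ^ (m + 1) ≤ 4 * (m * 2 ^ m) := h1
        _ ≤ 4 * Nat.fib (4 * m) := Nat.mul_le_mul_left _ ih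
        _ ≤ Nat.fib (4 * (m + 1)) := h2

theorem fibonacci_lower_bound (q : ℕ → ℕ) (hq0 : q 0 = 1) (hq1 : q 1 = 1)
    (hqrec : ∀ n : ℕ, q (n + 2) = q (n + 1) + q n) :
    ∀ n : ℕ, 1 ≤ n → (n / 4) * 2 ^ (n / 4) ≤ q (n - 1) := by
  have key : ∀ n : ℕ, q n = Nat.fib (n + 1) ∧ q (n + 1) = Nat.fib (n + 2) := by
    intro n
    induction n with
    | zero => simp [hq0, hq1]
    | succ k ih =>
      refine ⟨ih.2, ?_⟩
      rw [hqrec k, ih.1, ih.2, Nat.add_comm]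
      exact (Nat.fib_add_two (n := k + 1)).symm
  intro n hn
  have e : n - 1 + 1 = n := by omega
  rw [(key (n-1)).1, e]
  calc (n / 4) * 2 ^ (n / 4) ≤ Nat.fib (4 * (n / 4)) := fib_lb _
    _ ≤ Nat.fib n := Nat.fib_mono (by omega)
end
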